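/- arXiv:1505.00287 — 11 statements merged into one kernel-verified Lean document; each statement's English description precedes it below -/
import Mathlib

section
/- Let F be a field, t ∈ F invertible, and R a unital associative F-algebra containing r mutually commuting t-oscillator triples (a_i, a†_i, k_i), 1 ≤ i ≤ r (elements of distinct triples commute). Let L(x) be the (r+1)×(r+1) matrix over R with rows and columns indexed by 0,…,r defined by: L_{00} = 1; L_{0j} = a_j for 1 ≤ j ≤ r; L_{i0} = x·a†_i·k_{i+1}···k_r for 1 ≤ i ≤ r; L_{ii} = x·k_{i+1}···k_r for 1 ≤ i ≤ r; L_{ij} = x·a_j·a†_i·k_{i+1}···k_r for 1 ≤ j < i ≤ r; and L_{ij} = 0 for 1 ≤ i < j ≤ r. Then for all x, y ∈ F with t·x ≠ y the intertwining (Yang–Baxter algebra) relation holds: for all i, j, k, l ∈ {0,…,r}, Σ_{(i',j')} Ř^{(r)}(x,y)_{(i,j),(i',j')}·L_{i'k}(x)·L_{j'l}(y) = Σ_{(k',l')} L_{ik'}(y)·L_{jl'}(x)·Ř^{(r)}(x,y)_{(k',l'),(k,l)}. -/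
/-!
Write `L(x) = diag(1, x, …, x) · M` with `M` independent of `x`, and factor the rows `i ≥ 1` of
`M` as `M_{ip} = W_{ip} · K_i` with `K_i = k_{i+1} ⋯ k_r` and `W_{ip} ∈ {1, a†_i, a_p a†_i}`.
Since `Ř(x, y)` only couples `(i, j)` with `(j, i)`, every entry of the intertwining relation has
at most two terms on each side, and once the scalars are collected it becomes one of five
quadratic relations among the entries of `M`: entries of one row commute, `M_{0p}` commutes with
`M_{jq}` for `p ≤ q`, `M_{iq} M_{jp} = t M_{jp} M_{iq}` for `1 ≤ i < j` and `p ≤ q`, and two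
exchange relations. Moving `K_i` past `W_{jq}` (`i < j`) costs a factor `t` exactly when `q ≤ i`;
after that the only pair that fails to commute is `a_i, a†_i`, which enters through
`t a†_i a_i − a_i a†_i = t − 1`.
-/

open scoped BigOperators

/-- A `t`-oscillator triple `(a, a†, k)` in an `F`-algebra `R`. -/
def IsOscTriple {F R : Type*} [Field F] [Ring R] [Algebra F R]
    (t : F) (a ad k : R) : Prop :=
  a * k = t • (k * a) ∧ ad * k = t⁻¹ • (k * ad) ∧
    a * ad = 1 - k ∧ ad * a = 1 - t⁻¹ • k

/-- The entries of the `R`-matrix `Ř^{(N-1)}(x,y)`: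
`Ř = Σ_i E^{ii}⊗E^{ii} + ((x−y)/(t·x−y))·Σ_{i<j}(t·E^{ij}⊗E^{ji} + E^{ji}⊗E^{ij})
   + ((t−1)/(t·x−y))·Σ_{i<j}(x·E^{ii}⊗E^{jj} + y·E^{jj}⊗E^{ii})`,
with `(M⊗N)_{(a,b),(c,d)} = M_{ac}·N_{bd}`. -/
def Rmat {F : Type*} [Field F] (N : ℕ) (t x y : F)
    (p q : Fin N × Fin N) : F :=
  (if p.1 = p.2 ∧ q = p then 1 else 0)
  + (if p.1 < p.2 ∧ q = (p.2, p.1) then t * (x - y) / (t * x - y) else 0)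
  + (if p.2 < p.1 ∧ q = (p.2, p.1) then (x - y) / (t * x - y) else 0)
  + (if p.1 < p.2 ∧ q = p then x * (t - 1) / (t * x - y) else 0)
  + (if p.2 < p.1 ∧ q = p then y * (t - 1) / (t * x - y) else 0)

/-- The ordered product `k_{i+1} · k_{i+2} ⋯ k_r`. -/
def kprod {R : Type*} [Ring R] (k : ℕ → R) (i r : ℕ) : R :=
  ((List.range' (i + 1) (r - i)).map k).prod

/-- The `(r+1)×(r+1)` matrix `L(x)` of Theorem 4.1:
`L_{00} = 1`, `L_{0j} = a_j`, `L_{i0} = x·a†_i·k_{i+1}⋯k_r`,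
`L_{ii} = x·k_{i+1}⋯k_r`, `L_{ij} = x·a_j·a†_i·k_{i+1}⋯k_r` for `j < i`,
and `L_{ij} = 0` for `0 < i < j`. -/
def Lmat {F R : Type*} [Field F] [Ring R] [Algebra F R]
    (r : ℕ) (a ad k : ℕ → R) (x : F) :
    Matrix (Fin (r + 1)) (Fin (r + 1)) R :=
  fun i j =>
    if i.val = 0 then (if j.val = 0 then 1 else a j.val)
    else if j.val = 0 then x • (ad i.val * kprod k i.val r)
    else if i.val = j.val then x • kprod k i.val r
    else if j.val < i.val then x • (a j.val * ad i.val * kprod k i.val r)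
    else 0

theorem IsOscTriple.smul_ad_mul_a {F R : Type*} [Field F] [Ring R] [Algebra F R] {t : F}
    {a ad k : R} (h : IsOscTriple t a ad k) (ht : t ≠ 0) :
    t • (ad * a) = a * ad + (t - 1) • 1 := by
  rw [h.2.2.1, h.2.2.2, smul_sub, smul_smul, mul_inv_cancel₀ ht, one_smul, sub_smul, one_smul]
  abel

section TwistedProduct
variable {S R ι : Type*} [CommSemiring S] [Semiring R] [Algebra S R]

theorem mul_list_prod_map_of_twist {k : ι → R} {g : R} {c : S} {m : ι} {l : List ι}
    (hl : l.Nodup) (hm : m ∈ l) (hgm : g * k m = c • (k m * g))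
    (hg : ∀ j ∈ l, j ≠ m → Commute g (k j)) :
    g * (l.map k).prod = c • ((l.map k).prod * g) := by
  induction l with
  | nil => simp at hm
  | cons j l ih =>
    rw [List.nodup_cons] at hl
    rw [List.map_cons, List.prod_cons]
    obtain rfl | hjm := eq_or_ne j m
    · have hrest : Commute g (l.map k).prod := by
        refine Commute.list_prod_right _ _ fun u hu => ?_
        obtain ⟨i, hi, rfl⟩ := List.mem_map.mp hu
        exact hg i (List.mem_cons_of_mem _ hi) (by rintro rfl; exact hl.1 hi)
      rw [← mul_assoc, hgm, smul_mul_assoc, mul_assoc, hrest.eq, mul_assoc]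
    · have hml : m ∈ l := (List.mem_cons.mp hm).resolve_left hjm.symm
      rw [(hg j List.mem_cons_self hjm).left_comm,
        ih hl.2 hml fun i hi => hg i (List.mem_cons_of_mem _ hi), mul_smul_comm, mul_assoc]

end TwistedProduct

section KProd
variable {S R : Type*} [CommSemiring S] [Ring R] [Algebra S R] {k : ℕ → R} {i r : ℕ}

theorem commute_kprod {g : R} (hg : ∀ j, i < j → j ≤ r → Commute g (k j)) :
    Commute g (kprod k i r) := by
  refine Commute.list_prod_right _ _ fun u hu => ?_
  obtain ⟨j, hj, rfl⟩ := List.mem_map.mp hu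
  rw [List.mem_range'] at hj
  exact hg j (by omega) (by omega)

theorem mul_kprod_of_twist {g : R} {c : S} {m : ℕ} (him : i < m) (hmr : m ≤ r)
    (hgm : g * k m = c • (k m * g))
    (hg : ∀ j, i < j → j ≤ r → j ≠ m → Commute g (k j)) :
    g * kprod k i r = c • (kprod k i r * g) :=
  mul_list_prod_map_of_twist List.nodup_range' (List.mem_range'_1.mpr (by omega)) hgm
    fun j hj hjm => by rw [List.mem_range'] at hj; exact hg j (by omega) (by omega) hjm

end KProd

section RMatrix
variable {F : Type*} [Field F] {N : ℕ} {t x y : F}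

theorem Rmat_apply_eq_zero_right {k l : Fin N} {q : Fin N × Fin N} (h₁ : q ≠ (k, l))
    (h₂ : q ≠ (l, k)) : Rmat N t x y q (k, l) = 0 := by
  obtain ⟨u, v⟩ := q
  simp only [ne_eq, Prod.mk.injEq] at h₁ h₂
  simp only [Rmat, Prod.mk.injEq]
  split_ifs <;> simp_all

variable {M : Type*} [AddCommMonoid M] [Module F M] (f : Fin N × Fin N → M)

theorem sum_Rmat_smul_left_self (i : Fin N) : ∑ p, Rmat N t x y (i, i) p • f p = f (i, i) := by
  rw [Fintype.sum_eq_single (i, i) fun p hp => by simp [Rmat, hp]]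
  simp [Rmat]

theorem sum_Rmat_smul_left_of_lt {i j : Fin N} (h : i < j) :
    ∑ p, Rmat N t x y (i, j) p • f p
      = (x * (t - 1) / (t * x - y)) • f (i, j) + (t * (x - y) / (t * x - y)) • f (j, i) := by
  rw [Fintype.sum_eq_add (i, j) (j, i) (by simp [h.ne]) fun p hp => by simp [Rmat, hp.1, hp.2]]
  simp [Rmat, h, h.ne, h.ne', lt_asymm h]

theorem sum_Rmat_smul_left_of_gt {i j : Fin N} (h : j < i) :
    ∑ p, Rmat N t x y (i, j) p • f p
      = (y * (t - 1) / (t * x - y)) • f (i, j) + ((x - y) / (t * x - y)) • f (j, i) := by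
  rw [Fintype.sum_eq_add (i, j) (j, i) (by simp [h.ne']) fun p hp => by simp [Rmat, hp.1, hp.2]]
  simp [Rmat, h, h.ne, h.ne', lt_asymm h]

theorem sum_Rmat_smul_right_self (k : Fin N) : ∑ q, Rmat N t x y q (k, k) • f q = f (k, k) := by
  rw [Fintype.sum_eq_single (k, k) fun q hq => by rw [Rmat_apply_eq_zero_right hq hq, zero_smul]]
  simp [Rmat]

theorem sum_Rmat_smul_right_of_lt {k l : Fin N} (h : k < l) :
    ∑ q, Rmat N t x y q (k, l) • f q
      = (x * (t - 1) / (t * x - y)) • f (k, l) + ((x - y) / (t * x - y)) • f (l, k) := by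
  rw [Fintype.sum_eq_add (k, l) (l, k) (by simp [h.ne]) fun q hq => by
    rw [Rmat_apply_eq_zero_right hq.1 hq.2, zero_smul]]
  simp [Rmat, h, h.ne, h.ne', lt_asymm h]

theorem sum_Rmat_smul_right_of_gt {k l : Fin N} (h : l < k) :
    ∑ q, Rmat N t x y q (k, l) • f q
      = (y * (t - 1) / (t * x - y)) • f (k, l) + (t * (x - y) / (t * x - y)) • f (l, k) := by
  rw [Fintype.sum_eq_add (k, l) (l, k) (by simp [h.ne']) fun q hq => by
    rw [Rmat_apply_eq_zero_right hq.1 hq.2, zero_smul]]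
  simp [Rmat, h, h.ne, h.ne', lt_asymm h]

end RMatrix

-- `Lbase` is the matrix `M` and `Lhead` the factor `W`, indexed by `ℕ`; with `aOrOne a 0 = 1`
-- the entry `W_{i0} = a†_i` needs no separate case.
def aOrOne {R : Type*} [Ring R] (a : ℕ → R) (p : ℕ) : R := if p = 0 then 1 else a p

def Lhead {R : Type*} [Ring R] (a ad : ℕ → R) (i p : ℕ) : R :=
  if p = i then 1 else aOrOne a p * ad i

def Lbase {R : Type*} [Ring R] (r : ℕ) (a ad k : ℕ → R) (i p : ℕ) : R :=
  if i = 0 then aOrOne a p else if p ≤ i then Lhead a ad i p * kprod k i r else 0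

section Oscillators
variable {F R : Type*} [Field F] [Ring R] [Algebra F R] {r : ℕ} {t : F} {a ad k : ℕ → R}
  (hosc : ∀ i, 1 ≤ i → i ≤ r → IsOscTriple t (a i) (ad i) (k i))
  (hcomm : ∀ i j, 1 ≤ i → i ≤ r → 1 ≤ j → j ≤ r → i ≠ j →
    ∀ u ∈ [a i, ad i, k i], ∀ v ∈ [a j, ad j, k j], Commute u v)
  {x y : F}

theorem aOrOne_of_ne_zero {p : ℕ} (hp : p ≠ 0) : aOrOne a p = a p := if_neg hp

theorem Lhead_self (i : ℕ) : Lhead a ad i i = 1 := if_pos rfl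

theorem Lhead_of_ne {i p : ℕ} (h : p ≠ i) : Lhead a ad i p = aOrOne a p * ad i := if_neg h

theorem Lbase_zero_left (p : ℕ) : Lbase r a ad k 0 p = aOrOne a p := if_pos rfl

theorem Lbase_of_le {i p : ℕ} (hi : i ≠ 0) (hp : p ≤ i) :
    Lbase r a ad k i p = Lhead a ad i p * kprod k i r := by
  rw [Lbase, if_neg hi, if_pos hp]

theorem Lbase_of_lt {i p : ℕ} (hi : i ≠ 0) (hp : i < p) : Lbase r a ad k i p = 0 := by
  rw [Lbase, if_neg hi, if_neg (by omega)]

theorem Lmat_apply (i p : Fin (r + 1)) :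
    Lmat r a ad k x i p = (if (i : ℕ) = 0 then 1 else x) • Lbase r a ad k i p := by
  unfold Lmat Lbase Lhead aOrOne
  split_ifs <;> first | omega | simp

section Commutation
include hcomm

theorem commute_aOrOne_aOrOne {p q : ℕ} (hp : p ≤ r) (hq : q ≤ r) :
    Commute (aOrOne a p) (aOrOne a q) := by
  unfold aOrOne
  split_ifs with hp0 hq0 hq0
  all_goals first | exact Commute.one_left _ | exact Commute.one_right _ | skip
  obtain rfl | hpq := eq_or_ne p q
  · exact Commute.refl _
  · exact hcomm p q (by omega) hp (by omega) hq hpq _ (by simp) _ (by simp)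

theorem commute_aOrOne_ad {p m : ℕ} (hp : p ≤ r) (hm : 1 ≤ m) (hmr : m ≤ r)
    (hpm : p ≠ m) : Commute (aOrOne a p) (ad m) := by
  unfold aOrOne
  split_ifs with hp0
  · exact Commute.one_left _
  · exact hcomm p m (by omega) hp hm hmr hpm _ (by simp) _ (by simp)

theorem commute_ad_ad {m n : ℕ} (hm : 1 ≤ m) (hmr : m ≤ r) (hn : 1 ≤ n) (hnr : n ≤ r) :
    Commute (ad m) (ad n) := by
  obtain rfl | hmn := eq_or_ne m n
  · exact Commute.refl _
  · exact hcomm m n hm hmr hn hnr hmn _ (by simp) _ (by simp)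

theorem commute_aOrOne_kprod {p i : ℕ} (hpi : p ≤ i) : Commute (aOrOne a p) (kprod k i r) := by
  refine commute_kprod fun j hij hjr => ?_
  unfold aOrOne
  split_ifs with hp0
  · exact Commute.one_left _
  · exact hcomm p j (by omega) (by omega) (by omega) hjr (by omega) _ (by simp) _ (by simp)

theorem commute_ad_kprod {m i : ℕ} (hm : 1 ≤ m) (hmi : m ≤ i) :
    Commute (ad m) (kprod k i r) :=
  commute_kprod fun j hij hjr =>
    hcomm m j hm (by omega) (by omega) hjr (by omega) _ (by simp) _ (by simp)

theorem commute_kprod_kprod (i j : ℕ) : Commute (kprod k i r) (kprod k j r) := by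
  refine commute_kprod fun m hjm hmr => (commute_kprod fun n hin hnr => ?_).symm
  obtain rfl | hmn := eq_or_ne m n
  · exact Commute.refl _
  · exact hcomm m n (by omega) hmr (by omega) hnr hmn _ (by simp) _ (by simp)

theorem commute_Lhead_kprod {i p j : ℕ} (hi : 1 ≤ i) (hpi : p ≤ i) (hij : i ≤ j) :
    Commute (Lhead a ad i p) (kprod k j r) := by
  obtain rfl | hpi' := eq_or_ne p i
  · rw [Lhead_self]; exact Commute.one_left _
  · rw [Lhead_of_ne hpi']
    exact (commute_aOrOne_kprod hcomm (by omega)).mul_left (commute_ad_kprod hcomm hi hij)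

theorem commute_Lhead_Lhead {i j p q : ℕ} (hi : 1 ≤ i) (hir : i ≤ r) (hj : 1 ≤ j)
    (hjr : j ≤ r) (hp : p ≤ r) (hq : q ≤ r) (hpj : p ≠ j) (hqi : q ≠ i) :
    Commute (Lhead a ad i p) (Lhead a ad j q) := by
  obtain rfl | hpi := eq_or_ne p i
  · rw [Lhead_self]; exact Commute.one_left _
  obtain rfl | hqj := eq_or_ne q j
  · rw [Lhead_self]; exact Commute.one_right _
  rw [Lhead_of_ne hpi, Lhead_of_ne hqj]
  refine Commute.mul_left ?_ ?_ <;> refine Commute.mul_right ?_ ?_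
  · exact commute_aOrOne_aOrOne hcomm hp hq
  · exact commute_aOrOne_ad hcomm hp hj hjr hpj
  · exact (commute_aOrOne_ad hcomm hq hi hir hqi).symm
  · exact commute_ad_ad hcomm hi hir hj hjr

theorem commute_aOrOne_Lhead {p j q : ℕ} (hp : p ≤ r) (hj : 1 ≤ j) (hjr : j ≤ r)
    (hq : q ≤ r) (hpj : p ≠ j) : Commute (aOrOne a p) (Lhead a ad j q) := by
  obtain rfl | hqj := eq_or_ne q j
  · rw [Lhead_self]; exact Commute.one_right _
  · rw [Lhead_of_ne hqj]
    exact (commute_aOrOne_aOrOne hcomm hp hq).mul_right (commute_aOrOne_ad hcomm hp hj hjr hpj)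

end Commutation

section Twisting
include hosc hcomm

theorem kprod_mul_ad (ht : t ≠ 0) {i m : ℕ} (him : i < m) (hmr : m ≤ r) :
    kprod k i r * ad m = t • (ad m * kprod k i r) := by
  have hk : ad m * k m = t⁻¹ • (k m * ad m) := (hosc m (by omega) hmr).2.1
  rw [mul_kprod_of_twist him hmr hk fun j hij hjr hjm =>
      hcomm m j (by omega) hmr (by omega) hjr hjm.symm _ (by simp) _ (by simp),
    smul_smul, mul_inv_cancel₀ ht, one_smul]

theorem kprod_mul_aOrOne (ht : t ≠ 0) {i q : ℕ} (hiq : i < q) (hqr : q ≤ r) :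
    kprod k i r * aOrOne a q = t⁻¹ • (aOrOne a q * kprod k i r) := by
  have hk : a q * k q = t • (k q * a q) := (hosc q (by omega) hqr).1
  rw [aOrOne_of_ne_zero (by omega), mul_kprod_of_twist hiq hqr hk fun j hij hjr hjq =>
      hcomm q j (by omega) hqr (by omega) hjr hjq.symm _ (by simp) _ (by simp),
    smul_smul, inv_mul_cancel₀ ht, one_smul]

theorem kprod_mul_Lhead_of_le (ht : t ≠ 0) {i j q : ℕ} (hqi : q ≤ i) (hij : i < j)
    (hjr : j ≤ r) :
    kprod k i r * Lhead a ad j q = t • (Lhead a ad j q * kprod k i r) := by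
  rw [Lhead_of_ne (by omega), ← mul_assoc, ← (commute_aOrOne_kprod hcomm hqi).eq, mul_assoc,
    kprod_mul_ad hosc hcomm ht hij hjr, mul_smul_comm, mul_assoc]

theorem commute_kprod_Lhead (ht : t ≠ 0) {i j q : ℕ} (hiq : i < q) (hqj : q ≤ j)
    (hjr : j ≤ r) :
    Commute (kprod k i r) (Lhead a ad j q) := by
  obtain rfl | hqj' := eq_or_ne q j
  · rw [Lhead_self]; exact Commute.one_right _
  · rw [Lhead_of_ne hqj']
    show _ = _
    rw [← mul_assoc, kprod_mul_aOrOne hosc hcomm ht hiq (by omega), smul_mul_assoc, mul_assoc,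
      kprod_mul_ad hosc hcomm ht (by omega) hjr, mul_smul_comm, smul_smul, inv_mul_cancel₀ ht,
      one_smul, mul_assoc]

end Twisting

section Relations
include hosc hcomm

theorem Lbase_mul_Lbase_of_le_le (ht : t ≠ 0) {i j p q : ℕ} (hi : 1 ≤ i) (hij : i < j)
    (hjr : j ≤ r) (hpi : p ≤ i) (hqi : q ≤ i) :
    Lbase r a ad k i p * Lbase r a ad k j q
      = t • (Lhead a ad i p * Lhead a ad j q * (kprod k i r * kprod k j r)) := by
  rw [Lbase_of_le (by omega) hpi, Lbase_of_le (by omega) (by omega), mul_assoc,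
    ← mul_assoc (kprod k i r), kprod_mul_Lhead_of_le hosc hcomm ht hqi hij hjr]
  simp only [smul_mul_assoc, mul_smul_comm, mul_assoc]

theorem Lbase_mul_Lbase_of_le_lt (ht : t ≠ 0) {i j p q : ℕ} (hi : 1 ≤ i) (hjr : j ≤ r)
    (hpi : p ≤ i) (hiq : i < q) (hqj : q ≤ j) :
    Lbase r a ad k i p * Lbase r a ad k j q
      = Lhead a ad i p * Lhead a ad j q * (kprod k i r * kprod k j r) := by
  rw [Lbase_of_le (by omega) hpi, Lbase_of_le (by omega) hqj, mul_assoc,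
    ← mul_assoc (kprod k i r), (commute_kprod_Lhead hosc hcomm ht hiq hqj hjr).eq]
  simp only [mul_assoc]

omit hosc in
theorem Lbase_mul_Lbase_swap {i j p q : ℕ} (hi : 1 ≤ i) (hij : i < j) (hpi : p ≤ i)
    (hqj : q ≤ j) :
    Lbase r a ad k j q * Lbase r a ad k i p
      = Lhead a ad j q * Lhead a ad i p * (kprod k i r * kprod k j r) := by
  rw [Lbase_of_le (by omega) hqj, Lbase_of_le (by omega) hpi, mul_assoc,
    ← mul_assoc (kprod k j r), ← (commute_Lhead_kprod hcomm hi hpi hij.le).eq,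
    mul_assoc (Lhead a ad i p), (commute_kprod_kprod hcomm j i).eq]
  simp only [mul_assoc]

theorem Lhead_exchange (ht : t ≠ 0) {i j p q : ℕ} (hi : 1 ≤ i) (hij : i < j) (hjr : j ≤ r)
    (hpq : p < q) (hqi : q ≤ i) :
    t • (Lhead a ad i p * Lhead a ad j q)
      = Lhead a ad j q * Lhead a ad i p + (t - 1) • (Lhead a ad j p * Lhead a ad i q) := by
  have hPJ : Commute (aOrOne a p) (ad j) :=
    commute_aOrOne_ad hcomm (by omega) (by omega) hjr (by omega)
  have hIJ : Commute (ad i) (ad j) := commute_ad_ad hcomm hi (by omega) (by omega) hjr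
  rw [Lhead_of_ne (by omega : p ≠ i), Lhead_of_ne (by omega : q ≠ j),
    Lhead_of_ne (by omega : p ≠ j)]
  obtain rfl | hqi' := eq_or_ne i q
  · have hPA : Commute (aOrOne a p) (a i) := by
      simpa only [aOrOne_of_ne_zero (by omega : i ≠ 0)] using
        commute_aOrOne_aOrOne hcomm (a := a) (p := p) (q := i) (by omega) (by omega)
    have hAJ : Commute (a i) (ad j) :=
      hcomm i j hi (by omega) (by omega) hjr (by omega) _ (by simp) _ (by simp)
    rw [Lhead_self, aOrOne_of_ne_zero (p := i) (by omega), mul_one]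
    have hL : aOrOne a p * ad i * (a i * ad j) = aOrOne a p * ad j * (ad i * a i) := by
      simp only [mul_assoc]; rw [hAJ.eq, hIJ.left_comm]
    have hR : a i * ad j * (aOrOne a p * ad i) = aOrOne a p * ad j * (a i * ad i) := by
      simp only [mul_assoc]; rw [hPJ.symm.left_comm, hPA.symm.left_comm, hAJ.left_comm]
    rw [hL, hR, ← mul_smul_comm, (hosc i hi (by omega)).smul_ad_mul_a ht, mul_add,
      mul_smul_comm, mul_one]
  · have hQI : Commute (aOrOne a q) (ad i) :=
      commute_aOrOne_ad hcomm (by omega) hi (by omega) hqi'.symm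
    have hQJ : Commute (aOrOne a q) (ad j) :=
      commute_aOrOne_ad hcomm (by omega) (by omega) hjr (by omega)
    have hPQ : Commute (aOrOne a p) (aOrOne a q) :=
      commute_aOrOne_aOrOne hcomm (by omega) (by omega)
    rw [Lhead_of_ne hqi'.symm, hQI.symm.mul_mul_mul_comm, hQJ.symm.mul_mul_mul_comm,
      hPJ.symm.mul_mul_mul_comm, ← hPQ.eq, ← hIJ.eq, sub_smul, one_smul]
    abel

theorem Lhead_exchange_aOrOne (ht : t ≠ 0) {j p q : ℕ} (hj : 1 ≤ j) (hjr : j ≤ r)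
    (hpq : p < q) (hqj : q ≤ j) :
    t • (Lhead a ad j p * aOrOne a q)
      = (t - 1) • (aOrOne a p * Lhead a ad j q) + aOrOne a q * Lhead a ad j p := by
  have hPQ : Commute (aOrOne a p) (aOrOne a q) :=
    commute_aOrOne_aOrOne hcomm (by omega) (by omega)
  rw [Lhead_of_ne (by omega : p ≠ j)]
  obtain rfl | hqj' := eq_or_ne q j
  · rw [aOrOne_of_ne_zero (p := q) (by omega)] at hPQ ⊢
    rw [Lhead_self, mul_one, mul_assoc, ← mul_smul_comm, (hosc q hj hjr).smul_ad_mul_a ht,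
      mul_add, mul_smul_comm, mul_one, hPQ.symm.left_comm, add_comm]
  · have hQJ : Commute (aOrOne a q) (ad j) := commute_aOrOne_ad hcomm (by omega) hj hjr hqj'
    rw [Lhead_of_ne hqj', mul_assoc, ← hQJ.eq, ← mul_assoc, ← mul_assoc, hPQ.eq, sub_smul,
      one_smul]
    abel

omit hosc in
theorem commute_Lbase_Lbase_same_row {i p q : ℕ} (hir : i ≤ r) (hp : p ≤ r) (hq : q ≤ r) :
    Commute (Lbase r a ad k i p) (Lbase r a ad k i q) := by
  obtain rfl | hi := eq_or_ne i 0
  · rw [Lbase_zero_left, Lbase_zero_left]; exact commute_aOrOne_aOrOne hcomm hp hq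
  rcases lt_or_ge i p with hip | hpi
  · rw [Lbase_of_lt hi hip]; exact Commute.zero_left _
  rcases lt_or_ge i q with hiq | hqi
  · rw [Lbase_of_lt hi hiq]; exact Commute.zero_right _
  have hWW : Commute (Lhead a ad i p) (Lhead a ad i q) := by
    obtain rfl | hpi' := eq_or_ne p i
    · rw [Lhead_self]; exact Commute.one_left _
    obtain rfl | hqi' := eq_or_ne q i
    · rw [Lhead_self]; exact Commute.one_right _
    exact commute_Lhead_Lhead hcomm (by omega) hir (by omega) hir hp hq hpi' hqi'
  have hWK {m : ℕ} (hm : m ≤ i) : Commute (Lhead a ad i m) (kprod k i r) :=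
    commute_Lhead_kprod hcomm (by omega) hm le_rfl
  rw [Lbase_of_le hi hpi, Lbase_of_le hi hqi]
  exact (hWW.mul_right (hWK hpi)).mul_left ((hWK hqi).symm.mul_right (Commute.refl _))

omit hosc in
theorem commute_Lbase_zero_row {j p q : ℕ} (hjr : j ≤ r) (hq : q ≤ r) (hpq : p ≤ q) :
    Commute (Lbase r a ad k 0 p) (Lbase r a ad k j q) := by
  rw [Lbase_zero_left]
  obtain rfl | hj := eq_or_ne j 0
  · rw [Lbase_zero_left]; exact commute_aOrOne_aOrOne hcomm (by omega) hq
  rcases lt_or_ge j q with hjq | hqj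
  · rw [Lbase_of_lt hj hjq]; exact Commute.zero_right _
  rw [Lbase_of_le hj hqj]
  obtain rfl | hqj' := eq_or_ne q j
  · rw [Lhead_self, one_mul]; exact commute_aOrOne_kprod hcomm hpq
  · exact (commute_aOrOne_Lhead hcomm (by omega) (by omega) hjr hq (by omega)).mul_right
      (commute_aOrOne_kprod hcomm (by omega))

theorem Lbase_mul_Lbase_of_le (ht : t ≠ 0) {i j p q : ℕ} (hi : 1 ≤ i) (hij : i < j)
    (hjr : j ≤ r) (hpq : p ≤ q) :
    Lbase r a ad k i q * Lbase r a ad k j p = t • (Lbase r a ad k j p * Lbase r a ad k i q) := by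
  rcases lt_or_ge i q with hiq | hqi
  · rw [Lbase_of_lt (by omega) hiq, zero_mul, mul_zero, smul_zero]
  rw [Lbase_mul_Lbase_of_le_le hosc hcomm ht hi hij hjr hqi (hpq.trans hqi),
    Lbase_mul_Lbase_swap hcomm hi hij hqi (by omega)]
  obtain rfl | hpi := eq_or_ne p i
  · rw [le_antisymm hqi hpq, Lhead_self, one_mul, mul_one]
  · rw [(commute_Lhead_Lhead hcomm hi (by omega) (by omega) hjr (by omega) (by omega) (by omega)
      hpi).eq]

theorem Lbase_mul_Lbase_of_lt (ht : t ≠ 0) {i j p q : ℕ} (hi : 1 ≤ i) (hij : i < j)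
    (hjr : j ≤ r) (hpq : p < q) :
    Lbase r a ad k i p * Lbase r a ad k j q
      = Lbase r a ad k j q * Lbase r a ad k i p
        + (t - 1) • (Lbase r a ad k j p * Lbase r a ad k i q) := by
  rcases le_or_gt q i with hqi | hiq
  · rw [Lbase_mul_Lbase_of_le_le hosc hcomm ht hi hij hjr (by omega) hqi,
      Lbase_mul_Lbase_swap hcomm hi hij (by omega) (by omega),
      Lbase_mul_Lbase_swap hcomm hi hij hqi (by omega), ← smul_mul_assoc,
      Lhead_exchange hosc hcomm ht hi hij hjr hpq hqi, add_mul, smul_mul_assoc]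
  rw [Lbase_of_lt (by omega) hiq, mul_zero, smul_zero, add_zero]
  rcases lt_or_ge i p with hip | hpi
  · rw [Lbase_of_lt (by omega) hip, zero_mul, mul_zero]
  rcases lt_or_ge j q with hjq | hqj
  · rw [Lbase_of_lt (by omega) hjq, mul_zero, zero_mul]
  rw [Lbase_mul_Lbase_of_le_lt hosc hcomm ht hi hjr hpi hiq hqj,
    Lbase_mul_Lbase_swap hcomm hi hij hpi hqj,
    (commute_Lhead_Lhead hcomm hi (by omega) (by omega) hjr (by omega) (by omega) (by omega)
      (by omega)).eq]

theorem Lbase_mul_Lbase_zero_row (ht : t ≠ 0) {j p q : ℕ} (hj : 1 ≤ j) (hjr : j ≤ r)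
    (hpq : p < q) (hqr : q ≤ r) :
    t • (Lbase r a ad k j p * Lbase r a ad k 0 q)
      = (t - 1) • (Lbase r a ad k 0 p * Lbase r a ad k j q)
        + Lbase r a ad k 0 q * Lbase r a ad k j p := by
  rw [Lbase_zero_left, Lbase_zero_left]
  rcases le_or_gt q j with hqj | hjq
  · rw [Lbase_of_le (by omega) (by omega), Lbase_of_le (by omega) hqj, mul_assoc,
      ← (commute_aOrOne_kprod hcomm hqj).eq]
    simp only [← mul_assoc]
    rw [← smul_mul_assoc, Lhead_exchange_aOrOne hosc hcomm ht hj hjr hpq hqj, add_mul,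
      smul_mul_assoc]
  rw [Lbase_of_lt (by omega) hjq, mul_zero, smul_zero, zero_add]
  rcases lt_or_ge j p with hjp | hpj
  · rw [Lbase_of_lt (by omega) hjp, zero_mul, smul_zero, mul_zero]
  rw [Lbase_of_le (by omega) hpj, mul_assoc, kprod_mul_aOrOne hosc hcomm ht hjq hqr,
    mul_smul_comm, smul_smul, mul_inv_cancel₀ ht, one_smul,
    (commute_aOrOne_Lhead hcomm hqr hj hjr (by omega) (by omega)).left_comm]

end Relations

include hcomm in
theorem Lmat_yangBaxter_of_eq (hxy : t * x - y ≠ 0) (i kk ll : Fin (r + 1)) :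
    ∑ p : Fin (r + 1) × Fin (r + 1),
        Rmat (r + 1) t x y (i, i) p • (Lmat r a ad k x p.1 kk * Lmat r a ad k y p.2 ll)
      = ∑ q : Fin (r + 1) × Fin (r + 1),
        Rmat (r + 1) t x y q (kk, ll) • (Lmat r a ad k y i q.1 * Lmat r a ad k x i q.2) := by
  have hrow := (commute_Lbase_Lbase_same_row hcomm (i := i) (p := kk) (q := ll) (by omega)
    (by omega) (by omega)).eq
  -- the form in which `match_scalars` leaves the denominator for `field_simp`
  have hxy' : x * t - y ≠ 0 := by rwa [mul_comm]
  rw [sum_Rmat_smul_left_self]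
  simp only [Lmat_apply]
  set cx : F := if (i : ℕ) = 0 then 1 else x
  set cy : F := if (i : ℕ) = 0 then 1 else y
  rcases lt_trichotomy kk ll with hkl | rfl | hkl
  · rw [sum_Rmat_smul_right_of_lt _ hkl]
    simp only [smul_mul_assoc, mul_smul_comm, smul_smul]
    linear_combination (norm := skip) ((x - y) / (t * x - y) * cx * cy) • hrow
    match_scalars <;> field_simp <;> ring
  · rw [sum_Rmat_smul_right_self]
    simp only [smul_mul_assoc, mul_smul_comm, smul_smul, mul_comm]
  · rw [sum_Rmat_smul_right_of_gt _ hkl]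
    simp only [smul_mul_assoc, mul_smul_comm, smul_smul]
    linear_combination (norm := skip) ((t * (x - y)) / (t * x - y) * cx * cy) • hrow
    match_scalars <;> field_simp <;> ring

include hosc hcomm

theorem Lmat_yangBaxter_of_lt (ht : t ≠ 0) (hxy : t * x - y ≠ 0) {i j : Fin (r + 1)}
    (hij : i < j) (kk ll : Fin (r + 1)) :
    ∑ p : Fin (r + 1) × Fin (r + 1),
        Rmat (r + 1) t x y (i, j) p • (Lmat r a ad k x p.1 kk * Lmat r a ad k y p.2 ll)
      = ∑ q : Fin (r + 1) × Fin (r + 1),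
        Rmat (r + 1) t x y q (kk, ll) • (Lmat r a ad k y i q.1 * Lmat r a ad k x j q.2) := by
  have hxy' : x * t - y ≠ 0 := by rwa [mul_comm]
  have hj : (j : ℕ) ≠ 0 := by omega
  have hijℕ : (i : ℕ) < j := hij
  have hjr : (j : ℕ) ≤ r := by omega
  rw [sum_Rmat_smul_left_of_lt _ hij]
  rcases lt_trichotomy kk ll with hkl | rfl | hkl
  · rw [sum_Rmat_smul_right_of_lt _ hkl]
    simp only [Lmat_apply, hj, if_false, smul_mul_assoc, mul_smul_comm, smul_smul]
    obtain hi | hi := eq_or_ne (i : ℕ) 0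
    · simp only [hi, if_true]
      linear_combination (norm := module) (x * (x - y) / (t * x - y)) •
        Lbase_mul_Lbase_zero_row hosc hcomm ht (j := j) (by omega) hjr hkl (by omega)
    · simp only [hi, if_false]
      linear_combination (norm := module) (-((x - y) / (t * x - y) * x * y)) •
        Lbase_mul_Lbase_of_le hosc hcomm ht (p := kk) (q := ll) (by omega) hijℕ hjr
          hkl.le
  · rw [sum_Rmat_smul_right_self]
    simp only [Lmat_apply, hj, if_false, smul_mul_assoc, mul_smul_comm, smul_smul]
    obtain hi | hi := eq_or_ne (i : ℕ) 0
    · simp only [hi, if_true]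
      linear_combination (norm := skip) (-(t * (x - y) * x / (t * x - y))) •
        (commute_Lbase_zero_row hcomm (j := j) (p := kk) (q := kk)
          hjr (by omega) le_rfl).eq
      match_scalars <;> field_simp <;> ring
    · simp only [hi, if_false]
      linear_combination (norm := skip) (-((x - y) / (t * x - y) * x * y)) •
        Lbase_mul_Lbase_of_le hosc hcomm ht (p := kk) (q := kk) (by omega) hijℕ hjr
          le_rfl
      match_scalars <;> field_simp <;> ring
  · rw [sum_Rmat_smul_right_of_gt _ hkl]
    simp only [Lmat_apply, hj, if_false, smul_mul_assoc, mul_smul_comm, smul_smul]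
    obtain hi | hi := eq_or_ne (i : ℕ) 0
    · simp only [hi, if_true]
      linear_combination (norm := module) (-(t * x * (x - y) / (t * x - y))) •
        (commute_Lbase_zero_row hcomm (j := j) (p := ll) (q := kk)
          hjr (by omega) hkl.le).eq
    · simp only [hi, if_false]
      linear_combination (norm := module)
        (-(t * (x - y) * x * y / (t * x - y))) •
          Lbase_mul_Lbase_of_lt hosc hcomm ht (p := ll) (q := kk) (by omega) hijℕ hjr hkl
        + ((t - 1) * (x - y) * x * y / (t * x - y)) •
          Lbase_mul_Lbase_of_le hosc hcomm ht (p := ll) (q := kk) (by omega) hijℕ hjr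
            hkl.le

theorem Lmat_yangBaxter_of_gt (ht : t ≠ 0) (hxy : t * x - y ≠ 0) {i j : Fin (r + 1)}
    (hji : j < i) (kk ll : Fin (r + 1)) :
    ∑ p : Fin (r + 1) × Fin (r + 1),
        Rmat (r + 1) t x y (i, j) p • (Lmat r a ad k x p.1 kk * Lmat r a ad k y p.2 ll)
      = ∑ q : Fin (r + 1) × Fin (r + 1),
        Rmat (r + 1) t x y q (kk, ll) • (Lmat r a ad k y i q.1 * Lmat r a ad k x j q.2) := by
  have hxy' : x * t - y ≠ 0 := by rwa [mul_comm]
  have hi : (i : ℕ) ≠ 0 := by omega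
  have hjiℕ : (j : ℕ) < i := hji
  have hir : (i : ℕ) ≤ r := by omega
  rw [sum_Rmat_smul_left_of_gt _ hji]
  rcases lt_trichotomy kk ll with hkl | rfl | hkl
  · rw [sum_Rmat_smul_right_of_lt _ hkl]
    simp only [Lmat_apply, hi, if_false, smul_mul_assoc, mul_smul_comm, smul_smul]
    obtain hj | hj := eq_or_ne (j : ℕ) 0
    · simp only [hj, if_true]
      linear_combination (norm := module) ((x - y) * y / (t * x - y)) •
        (commute_Lbase_zero_row hcomm (j := i) (p := kk) (q := ll)
          hir (by omega) hkl.le).eq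
    · simp only [hj, if_false]
      linear_combination (norm := module) ((x - y) * x * y / (t * x - y)) •
        Lbase_mul_Lbase_of_lt hosc hcomm ht (p := kk) (q := ll) (by omega) hjiℕ hir hkl
  · rw [sum_Rmat_smul_right_self]
    simp only [Lmat_apply, hi, if_false, smul_mul_assoc, mul_smul_comm, smul_smul]
    obtain hj | hj := eq_or_ne (j : ℕ) 0
    · simp only [hj, if_true]
      linear_combination (norm := skip) ((x - y) * y / (t * x - y)) •
        (commute_Lbase_zero_row hcomm (j := i) (p := kk) (q := kk)
          hir (by omega) le_rfl).eq
      match_scalars <;> field_simp <;> ring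
    · simp only [hj, if_false]
      linear_combination (norm := skip) ((x - y) * x * y / (t * x - y)) •
        Lbase_mul_Lbase_of_le hosc hcomm ht (p := kk) (q := kk) (by omega) hjiℕ hir
          le_rfl
      match_scalars <;> field_simp <;> ring
  · rw [sum_Rmat_smul_right_of_gt _ hkl]
    simp only [Lmat_apply, hi, if_false, smul_mul_assoc, mul_smul_comm, smul_smul]
    obtain hj | hj := eq_or_ne (j : ℕ) 0
    · simp only [hj, if_true]
      linear_combination (norm := module)
        (-((x - y) * y / (t * x - y))) •
          Lbase_mul_Lbase_zero_row hosc hcomm ht (j := i) (by omega) hir hkl (by omega)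
        + (-((t - 1) * (x - y) * y / (t * x - y))) •
          (commute_Lbase_zero_row hcomm (j := i) (p := ll) (q := kk)
            hir (by omega) hkl.le).eq
    · simp only [hj, if_false]
      linear_combination (norm := module) ((x - y) * x * y / (t * x - y)) •
        Lbase_mul_Lbase_of_le hosc hcomm ht (p := ll) (q := kk) (by omega) hjiℕ hir
          hkl.le

end Oscillators

theorem Lmat_satisfies_YangBaxter_algebra
    {F R : Type*} [Field F] [Ring R] [Algebra F R]
    (r : ℕ) (t : F) (ht : t ≠ 0) (a ad k : ℕ → R)
    (hosc : ∀ i, 1 ≤ i → i ≤ r → IsOscTriple t (a i) (ad i) (k i))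
    (hcomm : ∀ i j, 1 ≤ i → i ≤ r → 1 ≤ j → j ≤ r → i ≠ j →
      ∀ u ∈ [a i, ad i, k i], ∀ v ∈ [a j, ad j, k j], Commute u v) :
    ∀ x y : F, t * x ≠ y → ∀ i j kk ll : Fin (r + 1),
      ∑ p : Fin (r + 1) × Fin (r + 1),
          Rmat (r + 1) t x y (i, j) p • (Lmat r a ad k x p.1 kk * Lmat r a ad k y p.2 ll)
      = ∑ q : Fin (r + 1) × Fin (r + 1),
          Rmat (r + 1) t x y q (kk, ll) • (Lmat r a ad k y i q.1 * Lmat r a ad k x j q.2) := by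
  intro x y hxy i j kk ll
  have hd : t * x - y ≠ 0 := sub_ne_zero.mpr hxy
  rcases lt_trichotomy i j with hij | rfl | hji
  · exact Lmat_yangBaxter_of_lt hosc hcomm ht hd hij kk ll
  · exact Lmat_yangBaxter_of_eq hcomm hd i kk ll
  · exact Lmat_yangBaxter_of_gt hosc hcomm ht hd hji kk ll
end

section
/- Let F be a field, t ∈ F invertible, R a unital associative F-algebra, and x ↦ L(x) a function assigning to each x ∈ F an r×r matrix over R (rows and columns indexed 0,…,r−1) such that: (a) L satisfies the rank-(r−1) intertwining relation Ř^{(r−1)}(x,y)·(L(x)⊗L(y)) = (L(y)⊗L(x))·Ř^{(r−1)}(x,y) for all x, y ∈ F with t·x ≠ y; (b) for some 0 ≤ m ≤ r−1, the rows 0,…,m−1 of L(x) are independent of x, and each entry in rows m,…,r−1 is homogeneous linear in x, i.e. L_{ij}(x) = x·L_{ij}(1) for i ≥ m. Let κ ∈ R satisfy κ·L_{ij}(x) = L_{ij}(x)·κ for all j and all 0 ≤ i ≤ m−1, and κ·L_{ij}(x) = t·L_{ij}(x)·κ for all j and all m ≤ i ≤ r−1. Then the (r+1)×(r+1) matrix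 𝓘_{m,κ}(L(x)) satisfies the rank-r intertwining relation Ř^{(r)}(x,y)·(𝓘_{m,κ}(L(x))⊗𝓘_{m,κ}(L(y))) = (𝓘_{m,κ}(L(y))⊗𝓘_{m,κ}(L(x)))·Ř^{(r)}(x,y) for all x, y ∈ F with t·x ≠ y. -/
/-!
STATEMENT 3 (Lemma 4.3): the insertion operator `𝓘_{m,κ}` maps a rank-(r−1) solution of the
intertwining equations (with suitable `x`-dependence of rows and `κ`-commutation relations)
to a rank-r solution.
-/

open scoped BigOperators

/-- The intertwining (Yang–Baxter algebra) relation, written entrywise. -/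
def SatYB {F R : Type*} [Field F] [Ring R] [Algebra F R]
    {N : ℕ} (t : F) (L : F → Matrix (Fin N) (Fin N) R) : Prop :=
  ∀ x y : F, t * x ≠ y → ∀ i j k l : Fin N,
    ∑ p : Fin N × Fin N, Rmat N t x y (i, j) p • (L x p.1 k * L y p.2 l)
    = ∑ q : Fin N × Fin N, Rmat N t x y q (k, l) • (L y i q.1 * L x j q.2)

/-- The insertion operator `𝓘_{m,κ}`: inserts a new row `m` (equal to `κ·δ_{j,r}`) and a new
last column (otherwise zero) into an `r × r` matrix, producing an `(r+1) × (r+1)` matrix. -/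
def insOp {R : Type*} [Ring R] {r : ℕ} (m : Fin r) (κ : R)
    (M : Matrix (Fin r) (Fin r) R) : Matrix (Fin (r + 1)) (Fin (r + 1)) R :=
  fun i j =>
    if hi : i.val < m.val then
      (if hj : j.val < r then M ⟨i.val, lt_trans hi m.isLt⟩ ⟨j.val, hj⟩ else 0)
    else if i.val = m.val then
      (if j.val = r then κ else 0)
    else
      (if hj : j.val < r then
        M ⟨i.val - 1, by have := i.isLt; omega⟩ ⟨j.val, hj⟩
       else 0)

section Aux

variable {F : Type*} [Field F]

lemma Rmat_row_zero {N : ℕ} (t x y : F) (i j : Fin N) (p : Fin N × Fin N)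
    (h1 : p ≠ (i, j)) (h2 : p ≠ (j, i)) : Rmat N t x y (i, j) p = 0 := by
  simp [Rmat, h1, h2]

lemma Rmat_col_zero {N : ℕ} (t x y : F) (k l : Fin N) (q : Fin N × Fin N)
    (h1 : q ≠ (k, l)) (h2 : q ≠ (l, k)) : Rmat N t x y q (k, l) = 0 := by
  obtain ⟨a, b⟩ := q
  simp only [ne_eq, Prod.mk.injEq, not_and] at h1 h2
  have c1 : ¬ ((k, l) = (a, b)) := by
    simp only [Prod.mk.injEq]; rintro ⟨rfl, rfl⟩; exact h1 rfl rfl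
  have c2 : ¬ ((k, l) = (b, a)) := by
    simp only [Prod.mk.injEq]; rintro ⟨rfl, rfl⟩; exact h2 rfl rfl
  simp [Rmat, c1, c2]

lemma Rmat_diag {N : ℕ} (t x y : F) (a b : Fin N) :
    Rmat N t x y (a, b) (a, b)
      = if a = b then 1 else if a < b then x * (t - 1) / (t * x - y)
        else y * (t - 1) / (t * x - y) := by
  rcases lt_trichotomy a b with h | h | h
  · simp [Rmat, h, ne_of_lt h, not_lt_of_gt h, Prod.ext_iff, Ne.symm (ne_of_lt h)]
  · subst h; simp [Rmat]
  · simp [Rmat, h, ne_of_gt h, not_lt_of_gt h, Prod.ext_iff, Ne.symm (ne_of_gt h)]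

lemma Rmat_off {N : ℕ} (t x y : F) (a b : Fin N) :
    Rmat N t x y (a, b) (b, a)
      = if a = b then 1 else if a < b then t * (x - y) / (t * x - y)
        else (x - y) / (t * x - y) := by
  rcases lt_trichotomy a b with h | h | h
  · simp [Rmat, h, ne_of_lt h, not_lt_of_gt h, Prod.ext_iff, Ne.symm (ne_of_lt h)]
  · subst h; simp [Rmat]
  · simp [Rmat, h, ne_of_gt h, not_lt_of_gt h, Prod.ext_iff, Ne.symm (ne_of_gt h)]

lemma Rmat_diag_congr {N N' : ℕ} (t x y : F) (a b : Fin N) (a' b' : Fin N')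
    (h1 : a = b ↔ a' = b') (h2 : a < b ↔ a' < b') :
    Rmat N t x y (a, b) (a, b) = Rmat N' t x y (a', b') (a', b') := by
  rw [Rmat_diag, Rmat_diag, if_congr h1 rfl (if_congr h2 rfl rfl)]

lemma Rmat_off_congr {N N' : ℕ} (t x y : F) (a b : Fin N) (a' b' : Fin N')
    (h1 : a = b ↔ a' = b') (h2 : a < b ↔ a' < b') :
    Rmat N t x y (a, b) (b, a) = Rmat N' t x y (a', b') (b', a') := by
  rw [Rmat_off, Rmat_off, if_congr h1 rfl (if_congr h2 rfl rfl)]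

variable {R : Type*} [Ring R] [Algebra F R]

lemma sum_row {N : ℕ} (t x y : F) (i j : Fin N) (f : Fin N × Fin N → R) :
    ∑ p : Fin N × Fin N, Rmat N t x y (i, j) p • f p
      = Rmat N t x y (i, j) (i, j) • f (i, j)
        + (if i = j then 0 else Rmat N t x y (i, j) (j, i) • f (j, i)) := by
  by_cases h : i = j
  · subst h
    rw [if_pos rfl, add_zero]
    apply Fintype.sum_eq_single
    intro p hp
    rw [Rmat_row_zero t x y i i p hp hp, zero_smul]
  · rw [if_neg h]
    apply Fintype.sum_eq_add (i, j) (j, i) (by simp [Prod.ext_iff]; tauto)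
    intro p ⟨hp1, hp2⟩
    rw [Rmat_row_zero t x y i j p hp1 hp2, zero_smul]

lemma sum_col {N : ℕ} (t x y : F) (k l : Fin N) (g : Fin N × Fin N → R) :
    ∑ q : Fin N × Fin N, Rmat N t x y q (k, l) • g q
      = Rmat N t x y (k, l) (k, l) • g (k, l)
        + (if k = l then 0 else Rmat N t x y (l, k) (k, l) • g (l, k)) := by
  by_cases h : k = l
  · subst h
    rw [if_pos rfl, add_zero]
    apply Fintype.sum_eq_single
    intro q hq
    rw [Rmat_col_zero t x y k k q hq hq, zero_smul]
  · rw [if_neg h]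
    apply Fintype.sum_eq_add (k, l) (l, k) (by simp [Prod.ext_iff]; tauto)
    intro q ⟨hq1, hq2⟩
    rw [Rmat_col_zero t x y k l q hq1 hq2, zero_smul]

end Aux

section Ins

variable {R : Type*} [Ring R] {r : ℕ} (m : Fin r) (κ : R) (M : Matrix (Fin r) (Fin r) R)

lemma insOp_lt {i j : Fin (r + 1)} (hi : i.val < m.val) (hj : j.val < r) :
    insOp m κ M i j = M ⟨i.val, lt_trans hi m.isLt⟩ ⟨j.val, hj⟩ := by
  simp [insOp, hi, hj]

lemma insOp_gt {i j : Fin (r + 1)} (hi : m.val < i.val) (hj : j.val < r) :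
    insOp m κ M i j = M ⟨i.val - 1, by have := i.isLt; omega⟩ ⟨j.val, hj⟩ := by
  have h1 : ¬ i.val < m.val := by omega
  have h2 : ¬ i.val = m.val := by omega
  simp [insOp, h1, h2, hj]

lemma insOp_row_m {i j : Fin (r + 1)} (hi : i.val = m.val) (hj : j.val < r) :
    insOp m κ M i j = 0 := by
  have h1 : ¬ i.val < m.val := by omega
  have h2 : ¬ j.val = r := by omega
  simp [insOp, h1, h2, hi]

lemma insOp_row_m_col_r {i j : Fin (r + 1)} (hi : i.val = m.val) (hj : j.val = r) :
    insOp m κ M i j = κ := by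
  have h1 : ¬ i.val < m.val := by omega
  simp [insOp, h1, hi, hj]

lemma insOp_col_r {i j : Fin (r + 1)} (hi : i.val ≠ m.val) (hj : j.val = r) :
    insOp m κ M i j = 0 := by
  have h2 : ¬ j.val < r := by omega
  rcases lt_or_gt_of_ne hi with h | h
  · simp [insOp, h, h2]
  · have h1 : ¬ i.val < m.val := by omega
    simp [insOp, h1, hi, h2, hj]

end Ins

theorem insertion_preserves_YB
    {F R : Type*} [Field F] [Ring R] [Algebra F R]
    (r : ℕ) (t : F) (ht : t ≠ 0) (m : Fin r) (κ : R)
    (L : F → Matrix (Fin r) (Fin r) R)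
    (hYB : SatYB t L)
    (hconst : ∀ (x x' : F) (i j : Fin r), i.val < m.val → L x i j = L x' i j)
    (hlin : ∀ (x : F) (i j : Fin r), m.val ≤ i.val → L x i j = x • L 1 i j)
    (hκ₁ : ∀ (x : F) (i j : Fin r), i.val < m.val → κ * L x i j = L x i j * κ)
    (hκ₂ : ∀ (x : F) (i j : Fin r), m.val ≤ i.val → κ * L x i j = t • (L x i j * κ)) :
    SatYB t (fun x => insOp m κ (L x)) := by
  have yb4 : ∀ x y : F, t * x ≠ y → ∀ i j k l : Fin r,
      Rmat r t x y (i, j) (i, j) • (L x i k * L y j l)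
        + (if i = j then 0 else Rmat r t x y (i, j) (j, i) • (L x j k * L y i l))
      = Rmat r t x y (k, l) (k, l) • (L y i k * L x j l)
        + (if k = l then 0 else Rmat r t x y (l, k) (k, l) • (L y i l * L x j k)) := by
    intro x y hxy i j k l
    have h := hYB x y hxy i j k l
    rwa [sum_row t x y i j (fun p => L x p.1 k * L y p.2 l),
         sum_col t x y k l (fun q => L y i q.1 * L x j q.2)] at h
  intro x y hxy i j k l
  simp only []
  rw [sum_row t x y i j (fun p => insOp m κ (L x) p.1 k * insOp m κ (L y) p.2 l),
      sum_col t x y k l (fun q => insOp m κ (L y) i q.1 * insOp m κ (L x) j q.2)]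
  simp only []
  -- generic case helper
  have gen : ∀ (i j k l : Fin (r + 1)) (i' j' k' l' : Fin r),
      (∀ z : F, insOp m κ (L z) i k = L z i' k' ∧ insOp m κ (L z) i l = L z i' l'
        ∧ insOp m κ (L z) j k = L z j' k' ∧ insOp m κ (L z) j l = L z j' l') →
      ((i = j) ↔ (i' = j')) → ((i < j) ↔ (i' < j')) →
      ((k = l) ↔ (k' = l')) → ((k < l) ↔ (k' < l')) →
      ((l = k) ↔ (l' = k')) → ((l < k) ↔ (l' < k')) →
      Rmat (r+1) t x y (i, j) (i, j) • (insOp m κ (L x) i k * insOp m κ (L y) j l)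
        + (if i = j then 0
            else Rmat (r+1) t x y (i, j) (j, i) • (insOp m κ (L x) j k * insOp m κ (L y) i l))
      = Rmat (r+1) t x y (k, l) (k, l) • (insOp m κ (L y) i k * insOp m κ (L x) j l)
        + (if k = l then 0
            else Rmat (r+1) t x y (l, k) (k, l) • (insOp m κ (L y) i l * insOp m κ (L x) j k)) := by
    intro i j k l i' j' k' l' hEx h1 h2 h3 h4 h5 h6
    rw [(hEx x).1, (hEx y).2.2.2, (hEx x).2.2.1, (hEx y).2.1, (hEx y).1, (hEx x).2.2.2,
        Rmat_diag_congr t x y i j i' j' h1 h2, Rmat_off_congr t x y i j i' j' h1 h2,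
        Rmat_diag_congr t x y k l k' l' h3 h4, Rmat_off_congr t x y l k l' k' h5 h6]
    simp only [h1, h3]
    exact yb4 x y hxy i' j' k' l'
  have hkr : k.val < r ∨ k.val = r := by have := k.isLt; omega
  have hlr : l.val < r ∨ l.val = r := by have := l.isLt; omega
  have him : i.val < m.val ∨ i.val = m.val ∨ m.val < i.val := by omega
  have hjm : j.val < m.val ∨ j.val = m.val ∨ m.val < j.val := by omega
  rcases hkr with hk | hk <;> rcases hlr with hl | hl
  · -- k < r, l < r
    rcases him with hi | hi | hi
    · rcases hjm with hj | hj | hj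
      · -- generic lt / lt
        exact gen i j k l ⟨i.val, lt_trans hi m.isLt⟩ ⟨j.val, lt_trans hj m.isLt⟩
          ⟨k.val, hk⟩ ⟨l.val, hl⟩
          (fun z => ⟨insOp_lt m κ (L z) hi hk, insOp_lt m κ (L z) hi hl,
            insOp_lt m κ (L z) hj hk, insOp_lt m κ (L z) hj hl⟩)
          (by simp only [Fin.ext_iff, Fin.lt_def] <;> omega) (by simp only [Fin.ext_iff, Fin.lt_def] <;> omega)
          (by simp only [Fin.ext_iff, Fin.lt_def] <;> omega) (by simp only [Fin.ext_iff, Fin.lt_def] <;> omega)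
          (by simp only [Fin.ext_iff, Fin.lt_def] <;> omega) (by simp only [Fin.ext_iff, Fin.lt_def] <;> omega)
      · -- j = m : row-m entries with cols < r vanish
        simp [insOp_row_m m κ (L y) hj hl, insOp_row_m m κ (L x) hj hk,
          insOp_row_m m κ (L x) hj hl]
      · -- generic lt / gt
        exact gen i j k l ⟨i.val, lt_trans hi m.isLt⟩ ⟨j.val - 1, by have := j.isLt; omega⟩
          ⟨k.val, hk⟩ ⟨l.val, hl⟩
          (fun z => ⟨insOp_lt m κ (L z) hi hk, insOp_lt m κ (L z) hi hl,
            insOp_gt m κ (L z) hj hk, insOp_gt m κ (L z) hj hl⟩)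
          (by simp only [Fin.ext_iff, Fin.lt_def] <;> omega)
          (by simp only [Fin.ext_iff, Fin.lt_def] <;> omega)
          (by simp only [Fin.ext_iff, Fin.lt_def] <;> omega) (by simp only [Fin.ext_iff, Fin.lt_def] <;> omega)
          (by simp only [Fin.ext_iff, Fin.lt_def] <;> omega) (by simp only [Fin.ext_iff, Fin.lt_def] <;> omega)
    · -- i = m : row-m entries with cols < r vanish
      simp [insOp_row_m m κ (L x) hi hk, insOp_row_m m κ (L y) hi hk,
        insOp_row_m m κ (L y) hi hl]
    · rcases hjm with hj | hj | hj
      · -- generic gt / lt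
        exact gen i j k l ⟨i.val - 1, by have := i.isLt; omega⟩ ⟨j.val, lt_trans hj m.isLt⟩
          ⟨k.val, hk⟩ ⟨l.val, hl⟩
          (fun z => ⟨insOp_gt m κ (L z) hi hk, insOp_gt m κ (L z) hi hl,
            insOp_lt m κ (L z) hj hk, insOp_lt m κ (L z) hj hl⟩)
          (by simp only [Fin.ext_iff, Fin.lt_def] <;> omega)
          (by simp only [Fin.ext_iff, Fin.lt_def] <;> omega)
          (by simp only [Fin.ext_iff, Fin.lt_def] <;> omega) (by simp only [Fin.ext_iff, Fin.lt_def] <;> omega)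
          (by simp only [Fin.ext_iff, Fin.lt_def] <;> omega) (by simp only [Fin.ext_iff, Fin.lt_def] <;> omega)
      · simp [insOp_row_m m κ (L y) hj hl, insOp_row_m m κ (L x) hj hk,
          insOp_row_m m κ (L x) hj hl]
      · -- generic gt / gt
        exact gen i j k l ⟨i.val - 1, by have := i.isLt; omega⟩ ⟨j.val - 1, by have := j.isLt; omega⟩
          ⟨k.val, hk⟩ ⟨l.val, hl⟩
          (fun z => ⟨insOp_gt m κ (L z) hi hk, insOp_gt m κ (L z) hi hl,
            insOp_gt m κ (L z) hj hk, insOp_gt m κ (L z) hj hl⟩)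
          (by simp only [Fin.ext_iff, Fin.lt_def] <;> omega)
          (by simp only [Fin.ext_iff, Fin.lt_def] <;> omega)
          (by simp only [Fin.ext_iff, Fin.lt_def] <;> omega) (by simp only [Fin.ext_iff, Fin.lt_def] <;> omega)
          (by simp only [Fin.ext_iff, Fin.lt_def] <;> omega) (by simp only [Fin.ext_iff, Fin.lt_def] <;> omega)
  · -- k < r, l = r
    rcases him with hi | hi | hi
    · rcases hjm with hj | hj | hj
      · -- i,j ≠ m : column-r entries vanish
        simp [insOp_col_r m κ (L y) (by omega : j.val ≠ m.val) hl,
          insOp_col_r m κ (L y) (by omega : i.val ≠ m.val) hl,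
          insOp_col_r m κ (L x) (by omega : j.val ≠ m.val) hl]
      · -- j = m, i < m  (case 5, l = r)
        have hine : i ≠ j := Fin.ne_of_val_ne (by omega)
        have hkne : k ≠ l := Fin.ne_of_val_ne (by omega)
        rw [if_neg hine, if_neg hkne,
          insOp_lt m κ (L x) hi hk, insOp_row_m_col_r m κ (L y) hj hl,
          insOp_row_m m κ (L x) hj hk, insOp_col_r m κ (L y) (by omega) hl,
          insOp_lt m κ (L y) hi hk, insOp_row_m_col_r m κ (L x) hj hl]
        simp only [mul_zero, zero_mul, smul_zero, add_zero]
        rw [Rmat_diag, if_neg hine, if_pos (Fin.lt_def.mpr (by omega : i.val < j.val)),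
          Rmat_diag, if_neg hkne, if_pos (Fin.lt_def.mpr (by omega : k.val < l.val)),
          hconst x y ⟨i.val, lt_trans hi m.isLt⟩ ⟨k.val, hk⟩ hi]
      · -- i,j ≠ m
        simp [insOp_col_r m κ (L y) (by omega : j.val ≠ m.val) hl,
          insOp_col_r m κ (L y) (by omega : i.val ≠ m.val) hl,
          insOp_col_r m κ (L x) (by omega : j.val ≠ m.val) hl]
    · rcases hjm with hj | hj | hj
      · -- i = m, j < m (case 4d, j < m)
        have hine : i ≠ j := Fin.ne_of_val_ne (by omega)
        have hkne : k ≠ l := Fin.ne_of_val_ne (by omega)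
        rw [if_neg hine, if_neg hkne,
          insOp_row_m m κ (L x) hi hk, insOp_col_r m κ (L y) (by omega) hl,
          insOp_lt m κ (L x) hj hk, insOp_row_m_col_r m κ (L y) hi hl,
          insOp_row_m m κ (L y) hi hk, insOp_col_r m κ (L x) (by omega) hl]
        simp only [mul_zero, zero_mul, smul_zero, add_zero, zero_add]
        rw [Rmat_off, if_neg hine, if_neg (by rw [Fin.lt_def]; omega : ¬ i < j),
          Rmat_off, if_neg (Ne.symm hkne), if_neg (by rw [Fin.lt_def]; omega : ¬ l < k),
          hκ₁ x ⟨j.val, lt_trans hj m.isLt⟩ ⟨k.val, hk⟩ hj]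
      · -- i = m, j = m
        rw [insOp_row_m m κ (L x) hi hk, insOp_row_m m κ (L y) hi hk,
          insOp_row_m m κ (L x) hj hk]
        simp
      · -- i = m, j > m (case 4d, j > m)
        have hine : i ≠ j := Fin.ne_of_val_ne (by omega)
        have hkne : k ≠ l := Fin.ne_of_val_ne (by omega)
        rw [if_neg hine, if_neg hkne,
          insOp_row_m m κ (L x) hi hk, insOp_col_r m κ (L y) (by omega) hl,
          insOp_gt m κ (L x) hj hk, insOp_row_m_col_r m κ (L y) hi hl,
          insOp_row_m m κ (L y) hi hk, insOp_col_r m κ (L x) (by omega) hl]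
        simp only [mul_zero, zero_mul, smul_zero, add_zero, zero_add]
        rw [Rmat_off, if_neg hine, if_pos (Fin.lt_def.mpr (by omega : i.val < j.val)),
          Rmat_off, if_neg (Ne.symm hkne), if_neg (by rw [Fin.lt_def]; omega : ¬ l < k),
          hκ₂ x ⟨j.val - 1, by have := j.isLt; omega⟩ ⟨k.val, hk⟩ (by omega : m.val ≤ j.val - 1),
          smul_smul]
        congr 1
        field_simp
    · rcases hjm with hj | hj | hj
      · simp [insOp_col_r m κ (L y) (by omega : j.val ≠ m.val) hl,
          insOp_col_r m κ (L y) (by omega : i.val ≠ m.val) hl,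
          insOp_col_r m κ (L x) (by omega : j.val ≠ m.val) hl]
      · -- j = m, i > m (case 5, l = r, i > m)
        have hine : i ≠ j := Fin.ne_of_val_ne (by omega)
        have hkne : k ≠ l := Fin.ne_of_val_ne (by omega)
        rw [if_neg hine, if_neg hkne,
          insOp_gt m κ (L x) hi hk, insOp_row_m_col_r m κ (L y) hj hl,
          insOp_row_m m κ (L x) hj hk, insOp_col_r m κ (L y) (by omega) hl,
          insOp_gt m κ (L y) hi hk, insOp_row_m_col_r m κ (L x) hj hl]
        simp only [mul_zero, zero_mul, smul_zero, add_zero]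
        rw [Rmat_diag, if_neg hine, if_neg (by rw [Fin.lt_def]; omega : ¬ i < j),
          Rmat_diag, if_neg hkne, if_pos (Fin.lt_def.mpr (by omega : k.val < l.val)),
          hlin x ⟨i.val - 1, by have := i.isLt; omega⟩ ⟨k.val, hk⟩ (by omega : m.val ≤ i.val - 1),
          hlin y ⟨i.val - 1, by have := i.isLt; omega⟩ ⟨k.val, hk⟩ (by omega : m.val ≤ i.val - 1),
          smul_mul_assoc, smul_mul_assoc, smul_smul, smul_smul]
        congr 1
        ring
      · simp [insOp_col_r m κ (L y) (by omega : j.val ≠ m.val) hl,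
          insOp_col_r m κ (L y) (by omega : i.val ≠ m.val) hl,
          insOp_col_r m κ (L x) (by omega : j.val ≠ m.val) hl]
  · -- k = r, l < r
    rcases him with hi | hi | hi
    · rcases hjm with hj | hj | hj
      · -- i,j ≠ m : column-r entries vanish
        simp [insOp_col_r m κ (L x) (by omega : i.val ≠ m.val) hk,
          insOp_col_r m κ (L x) (by omega : j.val ≠ m.val) hk,
          insOp_col_r m κ (L y) (by omega : i.val ≠ m.val) hk]
      · -- j = m, i < m (case 5, k = r)
        have hine : i ≠ j := Fin.ne_of_val_ne (by omega)
        have hkne : k ≠ l := Fin.ne_of_val_ne (by omega)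
        rw [if_neg hine, if_neg hkne,
          insOp_col_r m κ (L x) (by omega) hk, insOp_row_m m κ (L y) hj hl,
          insOp_row_m_col_r m κ (L x) hj hk, insOp_lt m κ (L y) hi hl,
          insOp_col_r m κ (L y) (by omega) hk, insOp_row_m m κ (L x) hj hl]
        simp only [mul_zero, zero_mul, smul_zero, add_zero, zero_add]
        rw [Rmat_off, if_neg hine, if_pos (Fin.lt_def.mpr (by omega : i.val < j.val)),
          Rmat_off, if_neg (Ne.symm hkne), if_pos (Fin.lt_def.mpr (by omega : l.val < k.val)),
          hκ₁ y ⟨i.val, lt_trans hi m.isLt⟩ ⟨l.val, hl⟩ hi]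
      · -- i,j ≠ m
        simp [insOp_col_r m κ (L x) (by omega : i.val ≠ m.val) hk,
          insOp_col_r m κ (L x) (by omega : j.val ≠ m.val) hk,
          insOp_col_r m κ (L y) (by omega : i.val ≠ m.val) hk]
    · rcases hjm with hj | hj | hj
      · -- i = m, j < m (case 4c, j < m)
        have hine : i ≠ j := Fin.ne_of_val_ne (by omega)
        have hkne : k ≠ l := Fin.ne_of_val_ne (by omega)
        rw [if_neg hine, if_neg hkne,
          insOp_row_m_col_r m κ (L x) hi hk, insOp_lt m κ (L y) hj hl,
          insOp_col_r m κ (L x) (by omega) hk, insOp_row_m m κ (L y) hi hl,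
          insOp_row_m_col_r m κ (L y) hi hk, insOp_lt m κ (L x) hj hl]
        simp only [mul_zero, zero_mul, smul_zero, add_zero]
        rw [Rmat_diag, if_neg hine, if_neg (by rw [Fin.lt_def]; omega : ¬ i < j),
          Rmat_diag, if_neg hkne, if_neg (by rw [Fin.lt_def]; omega : ¬ k < l),
          hconst y x ⟨j.val, lt_trans hj m.isLt⟩ ⟨l.val, hl⟩ hj]
      · -- i = m, j = m
        rw [insOp_row_m m κ (L y) hj hl, insOp_row_m m κ (L y) hi hl,
          insOp_row_m m κ (L x) hj hl]
        simp
      · -- i = m, j > m (case 4c, j > m)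
        have hine : i ≠ j := Fin.ne_of_val_ne (by omega)
        have hkne : k ≠ l := Fin.ne_of_val_ne (by omega)
        rw [if_neg hine, if_neg hkne,
          insOp_row_m_col_r m κ (L x) hi hk, insOp_gt m κ (L y) hj hl,
          insOp_col_r m κ (L x) (by omega) hk, insOp_row_m m κ (L y) hi hl,
          insOp_row_m_col_r m κ (L y) hi hk, insOp_gt m κ (L x) hj hl]
        simp only [mul_zero, zero_mul, smul_zero, add_zero]
        rw [Rmat_diag, if_neg hine, if_pos (Fin.lt_def.mpr (by omega : i.val < j.val)),
          Rmat_diag, if_neg hkne, if_neg (by rw [Fin.lt_def]; omega : ¬ k < l),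
          hlin y ⟨j.val - 1, by have := j.isLt; omega⟩ ⟨l.val, hl⟩ (by omega : m.val ≤ j.val - 1),
          hlin x ⟨j.val - 1, by have := j.isLt; omega⟩ ⟨l.val, hl⟩ (by omega : m.val ≤ j.val - 1),
          mul_smul_comm, mul_smul_comm, smul_smul, smul_smul]
        congr 1
        ring
    · rcases hjm with hj | hj | hj
      · -- j = m? no: j < m, i > m : i,j ≠ m
        simp [insOp_col_r m κ (L x) (by omega : i.val ≠ m.val) hk,
          insOp_col_r m κ (L x) (by omega : j.val ≠ m.val) hk,
          insOp_col_r m κ (L y) (by omega : i.val ≠ m.val) hk]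
      · -- j = m, i > m (case 5, k = r, i > m)
        have hine : i ≠ j := Fin.ne_of_val_ne (by omega)
        have hkne : k ≠ l := Fin.ne_of_val_ne (by omega)
        rw [if_neg hine, if_neg hkne,
          insOp_col_r m κ (L x) (by omega) hk, insOp_row_m m κ (L y) hj hl,
          insOp_row_m_col_r m κ (L x) hj hk, insOp_gt m κ (L y) hi hl,
          insOp_col_r m κ (L y) (by omega) hk, insOp_row_m m κ (L x) hj hl]
        simp only [mul_zero, zero_mul, smul_zero, add_zero, zero_add]
        rw [Rmat_off, if_neg hine, if_neg (by rw [Fin.lt_def]; omega : ¬ i < j),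
          Rmat_off, if_neg (Ne.symm hkne), if_pos (Fin.lt_def.mpr (by omega : l.val < k.val)),
          hκ₂ y ⟨i.val - 1, by have := i.isLt; omega⟩ ⟨l.val, hl⟩ (by omega : m.val ≤ i.val - 1),
          smul_smul]
        congr 1
        field_simp
      · simp [insOp_col_r m κ (L x) (by omega : i.val ≠ m.val) hk,
          insOp_col_r m κ (L x) (by omega : j.val ≠ m.val) hk,
          insOp_col_r m κ (L y) (by omega : i.val ≠ m.val) hk]
  · -- k = r, l = r
    rcases him with hi | hi | hi
    · rcases hjm with hj | hj | hj
      · simp [insOp_col_r m κ (L x) (by omega : i.val ≠ m.val) hk,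
          insOp_col_r m κ (L x) (by omega : j.val ≠ m.val) hk,
          insOp_col_r m κ (L y) (by omega : i.val ≠ m.val) hk,
          insOp_col_r m κ (L y) (by omega : i.val ≠ m.val) hl]
      · -- j = m, i ≠ m
        simp [insOp_col_r m κ (L y) (by omega : i.val ≠ m.val) hl,
          insOp_col_r m κ (L x) (by omega : i.val ≠ m.val) hk,
          insOp_col_r m κ (L y) (by omega : i.val ≠ m.val) hk]
      · simp [insOp_col_r m κ (L x) (by omega : i.val ≠ m.val) hk,
          insOp_col_r m κ (L x) (by omega : j.val ≠ m.val) hk,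
          insOp_col_r m κ (L y) (by omega : i.val ≠ m.val) hk,
          insOp_col_r m κ (L y) (by omega : i.val ≠ m.val) hl]
    · rcases hjm with hj | hj | hj
      · -- i = m, j ≠ m
        simp [insOp_col_r m κ (L y) (by omega : j.val ≠ m.val) hl,
          insOp_col_r m κ (L x) (by omega : j.val ≠ m.val) hk,
          insOp_col_r m κ (L x) (by omega : j.val ≠ m.val) hl]
      · -- i = m, j = m, k = l = r
        have hij : i = j := Fin.val_injective (by omega)
        have hkl : k = l := Fin.val_injective (by omega)
        rw [if_pos hij, if_pos hkl, Rmat_diag, if_pos hij, Rmat_diag, if_pos hkl,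
          insOp_row_m_col_r m κ (L x) hi hk, insOp_row_m_col_r m κ (L y) hj hl,
          insOp_row_m_col_r m κ (L y) hi hk, insOp_row_m_col_r m κ (L x) hj hl]
      · simp [insOp_col_r m κ (L y) (by omega : j.val ≠ m.val) hl,
          insOp_col_r m κ (L x) (by omega : j.val ≠ m.val) hk,
          insOp_col_r m κ (L x) (by omega : j.val ≠ m.val) hl]
    · rcases hjm with hj | hj | hj
      · simp [insOp_col_r m κ (L x) (by omega : i.val ≠ m.val) hk,
          insOp_col_r m κ (L x) (by omega : j.val ≠ m.val) hk,
          insOp_col_r m κ (L y) (by omega : i.val ≠ m.val) hk,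
          insOp_col_r m κ (L y) (by omega : i.val ≠ m.val) hl]
      · simp [insOp_col_r m κ (L y) (by omega : i.val ≠ m.val) hl,
          insOp_col_r m κ (L x) (by omega : i.val ≠ m.val) hk,
          insOp_col_r m κ (L y) (by omega : i.val ≠ m.val) hk]
      · simp [insOp_col_r m κ (L x) (by omega : i.val ≠ m.val) hk,
          insOp_col_r m κ (L x) (by omega : j.val ≠ m.val) hk,
          insOp_col_r m κ (L y) (by omega : i.val ≠ m.val) hk,
          insOp_col_r m κ (L y) (by omega : i.val ≠ m.val) hl]
end

section
/- Let F be a field, t ∈ F invertible, R a unital associative F-algebra, and for each a = 1,…,r let x ↦ L̃^{(a)}(x) be a function assigning to x ∈ F an (a+1)×a matrix over R (rows indexed 0,…,a, columns indexed 0,…,a−1). Assume: (a) for each a and all x, y ∈ F with t·x ≠ y, the rank-reducing intertwining relation Ř^{(a)}(x,y)·(L̃^{(a)}(x)⊗L̃^{(a)}(y)) = (L̃^{(a)}(y)⊗L̃^{(a)}(x))·Ř^{(a−1)}(x,y) holds, where Ř^{(0)}(x,y) is the 1×1 identity; (b) every entry of L̃^{(a)}(x) commutes with every entry of L̃^{(b)}(y)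 whenever a ≠ b, for all x, y. Define the column vector 𝔸(x) = L̃^{(r)}(x)·L̃^{(r−1)}(x)···L̃^{(1)}(x), with entries A_0(x),…,A_r(x) ∈ R. Then for all x, y ∈ F with t·x ≠ y and all i, j ∈ {0,…,r}: Σ_{(k,l)} Ř^{(r)}(x,y)_{(i,j),(k,l)}·A_k(x)·A_l(y) = A_i(y)·A_j(x). -/
/-!
STATEMENT 5: the nested matrix product `𝔸(x) = L̃^{(r)}(x)·L̃^{(r−1)}(x)⋯L̃^{(1)}(x)` built
from rank-reducing solutions of the intertwining equations (with entries from different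
factors commuting) satisfies the Zamolodchikov–Faddeev relation.
-/

open scoped BigOperators

/-- The entries of the column vector `𝔸^{(a)}(x) = L̃^{(a)}(x)·L̃^{(a-1)}(x)⋯L̃^{(1)}(x)`,
defined recursively (the empty product, at `a = 0`, is the 1×1 vector with entry `1`). -/
def Avec {F R : Type*} [Field F] [Ring R] [Algebra F R]
    (L : (a : ℕ) → F → Matrix (Fin (a + 1)) (Fin a) R) :
    (a : ℕ) → F → Fin (a + 1) → R
  | 0, _, _ => 1
  | a + 1, x, i => ∑ j : Fin (a + 1), L (a + 1) x i j * Avec L a x j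

section Aux

variable {F R : Type*} [Field F] [Ring R] [Algebra F R]

lemma ZF_sum_rot {M : Type*} [AddCommMonoid M] {α β γ : Type*} [Fintype α] [Fintype β] [Fintype γ]
    (f : α → β → γ → M) :
    ∑ a, ∑ b, ∑ c, f a b c = ∑ c, ∑ a, ∑ b, f a b c := by
  rw [show (∑ a, ∑ b, ∑ c, f a b c) = ∑ a, ∑ c, ∑ b, f a b c from
    Finset.sum_congr rfl fun a _ => Finset.sum_comm]
  exact Finset.sum_comm

lemma ZF_swap4 {a b c d : R} (h : Commute b c) : a * b * (c * d) = a * c * (b * d) := by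
  rw [mul_assoc a b, ← mul_assoc b c d, h.eq, mul_assoc c b d, ← mul_assoc a c]

lemma ZF_commA (L : (a : ℕ) → F → Matrix (Fin (a + 1)) (Fin a) R)
    (hcomm : ∀ a b : ℕ, a ≠ b → ∀ (x y : F)
        (i : Fin (a + 1)) (k : Fin a) (i' : Fin (b + 1)) (k' : Fin b),
        Commute (L a x i k) (L b y i' k'))
    (b : ℕ) (y x : F) (i : Fin (b + 1)) (k : Fin b) :
    ∀ a, a < b → ∀ j : Fin (a + 1), Commute (L b y i k) (Avec L a x j) := by
  intro a
  induction a with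
  | zero =>
      intro _ j
      simp only [Avec]
      exact Commute.one_right _
  | succ a ih =>
      intro hab j
      show Commute _ (∑ m : Fin (a + 1), L (a + 1) x j m * Avec L a x m)
      exact Commute.sum_right _ _ _ fun m _ =>
        ((hcomm (a + 1) b (by omega) x y j m i k)).symm.mul_right (ih (by omega) m)

lemma ZF_aux (r : ℕ) (t : F)
    (L : (a : ℕ) → F → Matrix (Fin (a + 1)) (Fin a) R)
    (hcomm : ∀ a b : ℕ, a ≠ b → ∀ (x y : F)
        (i : Fin (a + 1)) (k : Fin a) (i' : Fin (b + 1)) (k' : Fin b),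
        Commute (L a x i k) (L b y i' k')) :
    (∀ a : ℕ, 1 ≤ a → a ≤ r → ∀ x y : F, t * x ≠ y →
      ∀ (i j : Fin (a + 1)) (k l : Fin a),
        ∑ p : Fin (a + 1) × Fin (a + 1),
            Rmat (a + 1) t x y (i, j) p • (L a x p.1 k * L a y p.2 l)
        = ∑ q : Fin a × Fin a,
            Rmat a t x y q (k, l) • (L a y i q.1 * L a x j q.2)) →
    ∀ x y : F, t * x ≠ y → ∀ i j : Fin (r + 1),
      ∑ p : Fin (r + 1) × Fin (r + 1),
          Rmat (r + 1) t x y (i, j) p • (Avec L r x p.1 * Avec L r y p.2)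
      = Avec L r y i * Avec L r x j := by
  induction r with
  | zero =>
      intro _ x y hxy i j
      fin_cases i <;> fin_cases j <;>
        simp [Rmat, Avec, Fintype.sum_prod_type, Fin.sum_univ_one]
  | succ n ih =>
      intro hYB x y hxy i j
      have IH := ih (fun a h1 h2 => hYB a h1 (h2.trans (Nat.le_succ n))) x y hxy
      simp only [Avec]
      calc
        ∑ p : Fin (n + 2) × Fin (n + 2),
            Rmat (n + 2) t x y (i, j) p •
              ((∑ k : Fin (n + 1), L (n + 1) x p.1 k * Avec L n x k) *
               (∑ l : Fin (n + 1), L (n + 1) y p.2 l * Avec L n y l))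
          = ∑ p : Fin (n + 2) × Fin (n + 2), ∑ k : Fin (n + 1), ∑ l : Fin (n + 1),
              Rmat (n + 2) t x y (i, j) p •
                ((L (n + 1) x p.1 k * L (n + 1) y p.2 l) * (Avec L n x k * Avec L n y l)) := by
            refine Finset.sum_congr rfl fun p _ => ?_
            rw [Finset.sum_mul_sum, Finset.smul_sum]
            refine Finset.sum_congr rfl fun k _ => ?_
            rw [Finset.smul_sum]
            refine Finset.sum_congr rfl fun l _ => ?_
            rw [ZF_swap4 ((ZF_commA L hcomm (n + 1) y x p.2 l n (Nat.lt_succ_self n) k).symm)]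
        _ = ∑ k : Fin (n + 1), ∑ l : Fin (n + 1),
              (∑ p : Fin (n + 2) × Fin (n + 2),
                Rmat (n + 2) t x y (i, j) p • (L (n + 1) x p.1 k * L (n + 1) y p.2 l)) *
              (Avec L n x k * Avec L n y l) := by
            rw [Finset.sum_comm]
            refine Finset.sum_congr rfl fun k _ => ?_
            rw [Finset.sum_comm]
            refine Finset.sum_congr rfl fun l _ => ?_
            rw [Finset.sum_mul]
            refine Finset.sum_congr rfl fun p _ => ?_
            rw [smul_mul_assoc]
        _ = ∑ k : Fin (n + 1), ∑ l : Fin (n + 1),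
              (∑ q : Fin (n + 1) × Fin (n + 1),
                Rmat (n + 1) t x y q (k, l) • (L (n + 1) y i q.1 * L (n + 1) x j q.2)) *
              (Avec L n x k * Avec L n y l) := by
            refine Finset.sum_congr rfl fun k _ => Finset.sum_congr rfl fun l _ => ?_
            rw [hYB (n + 1) (by omega) (by omega) x y hxy i j k l]
        _ = ∑ q : Fin (n + 1) × Fin (n + 1),
              (L (n + 1) y i q.1 * L (n + 1) x j q.2) *
              (∑ k : Fin (n + 1), ∑ l : Fin (n + 1),
                Rmat (n + 1) t x y q (k, l) • (Avec L n x k * Avec L n y l)) := by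
            have expand : ∀ (k l : Fin (n + 1)),
                (∑ q : Fin (n + 1) × Fin (n + 1),
                  Rmat (n + 1) t x y q (k, l) • (L (n + 1) y i q.1 * L (n + 1) x j q.2)) *
                (Avec L n x k * Avec L n y l)
                = ∑ q : Fin (n + 1) × Fin (n + 1),
                    (L (n + 1) y i q.1 * L (n + 1) x j q.2) *
                    (Rmat (n + 1) t x y q (k, l) • (Avec L n x k * Avec L n y l)) := by
              intro k l
              rw [Finset.sum_mul]
              refine Finset.sum_congr rfl fun q _ => ?_
              rw [smul_mul_assoc, mul_smul_comm]
            simp only [expand]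
            rw [ZF_sum_rot]
            refine Finset.sum_congr rfl fun q _ => ?_
            rw [Finset.mul_sum]
            refine Finset.sum_congr rfl fun k _ => ?_
            rw [Finset.mul_sum]
        _ = ∑ q : Fin (n + 1) × Fin (n + 1),
              (L (n + 1) y i q.1 * L (n + 1) x j q.2) * (Avec L n y q.1 * Avec L n x q.2) := by
            refine Finset.sum_congr rfl fun q _ => ?_
            obtain ⟨q1, q2⟩ := q
            rw [← IH q1 q2, Fintype.sum_prod_type]
        _ = (∑ k : Fin (n + 1), L (n + 1) y i k * Avec L n y k) *
            (∑ l : Fin (n + 1), L (n + 1) x j l * Avec L n x l) := by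
            rw [Finset.sum_mul_sum, Fintype.sum_prod_type]
            refine Finset.sum_congr rfl fun k _ => Finset.sum_congr rfl fun l _ => ?_
            rw [ZF_swap4 (ZF_commA L hcomm (n + 1) x y j l n (Nat.lt_succ_self n) k)]

end Aux

theorem nested_product_satisfies_ZF
    {F R : Type*} [Field F] [Ring R] [Algebra F R]
    (r : ℕ) (t : F) (ht : t ≠ 0)
    (L : (a : ℕ) → F → Matrix (Fin (a + 1)) (Fin a) R)
    (hYB : ∀ a : ℕ, 1 ≤ a → a ≤ r → ∀ x y : F, t * x ≠ y →
      ∀ (i j : Fin (a + 1)) (k l : Fin a),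
        ∑ p : Fin (a + 1) × Fin (a + 1),
            Rmat (a + 1) t x y (i, j) p • (L a x p.1 k * L a y p.2 l)
        = ∑ q : Fin a × Fin a,
            Rmat a t x y q (k, l) • (L a y i q.1 * L a x j q.2))
    (hcomm : ∀ a b : ℕ, a ≠ b → ∀ (x y : F)
        (i : Fin (a + 1)) (k : Fin a) (i' : Fin (b + 1)) (k' : Fin b),
        Commute (L a x i k) (L b y i' k')) :
    ∀ x y : F, t * x ≠ y → ∀ i j : Fin (r + 1),
      ∑ p : Fin (r + 1) × Fin (r + 1),
          Rmat (r + 1) t x y (i, j) p • (Avec L r x p.1 * Avec L r y p.2)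
      = Avec L r y i * Avec L r x j :=
  ZF_aux r t L hcomm hYB
end

section
/- Let F be a field, t ∈ F invertible, r ≥ 2, and R a unital associative F-algebra containing r−1 mutually commuting t-oscillator triples (a_i, a†_i, k_i), 2 ≤ i ≤ r (elements of distinct triples commute). Define the (r+1)×r matrix L̃(x) over R, rows indexed 0,…,r and columns indexed 0,…,r−1, by: L̃_{00} = 1; L̃_{0j} = a_{j+1} for 1 ≤ j ≤ r−1; L̃_{10} = x·k_2·k_3···k_r; L̃_{i0} = x·a†_i·k_{i+1}···k_r for 2 ≤ i ≤ r; L̃_{i,i−1} = x·k_{i+1}···k_r for 2 ≤ i ≤ r; L̃_{ij} = x·a_{j+1}·a†_i·k_{i+1}···k_r for 1 ≤ j+1 < i ≤ r; and L̃_{ij} = 0 for 1 ≤ i ≤ j ≤ r−1. Then for all x, y ∈ F with t·x ≠ y the rank-reducing intertwining relation holds: Ř^{(r)}(x,y)·(L̃(x)⊗L̃(y)) = (L̃(y)⊗L̃(x))·Ř^{(r−1)}(x,y). -/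
/-!
Write `L̃(x)_{ic} = x^{[i ≠ 0]} M_{ic}`. Each entry of the intertwining relation is then an
identity between two ordered products of entries of `M`, with coefficients read off from `Ř`;
after clearing the denominator `t x - y`, it follows from a few quadratic relations among the
`M_{ic}`: entries of one row commute; for rows `0 < p < q`, `M_{pc}` and `M_{qd}` `t`-commute
when `d ≤ c` and satisfy an exchange relation when `c < d`; `M_{0c}` commutes with `M_{qd}`
when `c ≤ d` and satisfies an exchange relation when `d < c`.
In the realisation `M_{0c} = a_{c+1}`, `M_{i,i-1} = k_{i+1}⋯k_r`,
`M_{ic} = a_{c+1} a†_i k_{i+1}⋯k_r` (with `a_1 = 1`), any two factors either commute or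
`t`-commute, except `a_i` and `a†_i`, whose two orderings are related by
`t a†_i a_i = a_i a†_i + (t - 1)`; this is where the exchange terms come from.
-/

open scoped BigOperators

/-- The reduced `(r+1) × r` matrix `L̃(x)` (rows `0,…,r`, columns `0,…,r−1`):
`L̃_{00} = 1`; `L̃_{0j} = a_{j+1}` for `1 ≤ j ≤ r−1`; `L̃_{10} = x·k_2⋯k_r`;
`L̃_{i0} = x·a†_i·k_{i+1}⋯k_r` for `2 ≤ i ≤ r`; `L̃_{i,i−1} = x·k_{i+1}⋯k_r` for `2 ≤ i ≤ r`;
`L̃_{ij} = x·a_{j+1}·a†_i·k_{i+1}⋯k_r` for `1 ≤ j+1 < i ≤ r`; `L̃_{ij} = 0` otherwise. -/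
def Ltil {F R : Type*} [Field F] [Ring R] [Algebra F R]
    (r : ℕ) (a ad k : ℕ → R) (x : F) :
    Matrix (Fin (r + 1)) (Fin r) R :=
  fun i j =>
    if i.val = 0 then (if j.val = 0 then 1 else a (j.val + 1))
    else if j.val = 0 then
      (if i.val = 1 then x • kprod k 1 r else x • (ad i.val * kprod k i.val r))
    else if i.val = j.val + 1 then x • kprod k i.val r
    else if j.val + 1 < i.val then x • (a (j.val + 1) * ad i.val * kprod k i.val r)
    else 0

section TCommute
variable {F R : Type*} [Field F] [Ring R] [Algebra F R]

def TCommute (t : F) (u v : R) : Prop := u * v = t • (v * u)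

variable {t : F} {u v w : R}

theorem TCommute.eq (h : TCommute t u v) : u * v = t • (v * u) := h

theorem TCommute.zero_left : TCommute t 0 v := by simp [TCommute]

theorem TCommute.zero_right : TCommute t u 0 := by simp [TCommute]

theorem Commute.mul_tCommute_left (h : Commute u w) (h' : TCommute t v w) :
    TCommute t (u * v) w := by
  rw [TCommute, mul_assoc, h'.eq, mul_smul_comm, ← mul_assoc, h.eq, mul_assoc]

theorem TCommute.mul_commute_right (h : TCommute t u v) (h' : Commute u w) :
    TCommute t u (v * w) := by
  rw [TCommute, ← mul_assoc, h.eq, smul_mul_assoc, mul_assoc, h'.eq, ← mul_assoc]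

theorem Commute.mul_tCommute_right (h : Commute u v) (h' : TCommute t u w) :
    TCommute t u (v * w) := by
  rw [TCommute, ← mul_assoc, h.eq, mul_assoc, h'.eq, mul_smul_comm, ← mul_assoc]

theorem TCommute.symm_inv (ht : t ≠ 0) (h : TCommute t u v) : TCommute t⁻¹ v u := by
  rw [TCommute, h.eq, smul_smul, inv_mul_cancel₀ ht, one_smul]

theorem TCommute.left_comm (h : TCommute t u v) (w : R) :
    u * (v * w) = t • (v * (u * w)) := by
  rw [← mul_assoc, h.eq, smul_mul_assoc, mul_assoc]

theorem TCommute.commute_mul (ht : t ≠ 0) (h : TCommute t v u) (h' : TCommute t u w) :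
    Commute u (v * w) := by
  rw [Commute, SemiconjBy, ← mul_assoc, (h.symm_inv ht).eq, smul_mul_assoc, mul_assoc, h'.eq,
    mul_smul_comm, smul_smul, inv_mul_cancel₀ ht, one_smul, ← mul_assoc]

end TCommute

section RmatSums
variable {F R : Type*} [Field F] [AddCommMonoid R] [Module F R] {N : ℕ}

theorem sum_Rmat_smul_row (t x y : F) (i j : Fin N) (f : Fin N × Fin N → R) :
    ∑ p, Rmat N t x y (i, j) p • f p =
      if i = j then f (i, i)
      else if i < j then
        (t * (x - y) / (t * x - y)) • f (j, i) + (x * (t - 1) / (t * x - y)) • f (i, j)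
      else ((x - y) / (t * x - y)) • f (j, i) + (y * (t - 1) / (t * x - y)) • f (i, j) := by
  simp only [Rmat, ite_and, add_smul, ite_smul, zero_smul, one_smul, Finset.sum_add_distrib]
  rcases lt_trichotomy i j with h | rfl | h
  · simp [h, h.ne, h.not_gt]
  · simp
  · simp [h, h.ne', h.not_gt]

theorem Rmat_apply_col (t x y : F) (q : Fin N × Fin N) (c d : Fin N) :
    Rmat N t x y q (c, d) =
      (if c = d ∧ q = (c, d) then 1 else 0)
      + (if d < c ∧ q = (d, c) then t * (x - y) / (t * x - y) else 0)
      + (if c < d ∧ q = (d, c) then (x - y) / (t * x - y) else 0)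
      + (if c < d ∧ q = (c, d) then x * (t - 1) / (t * x - y) else 0)
      + (if d < c ∧ q = (c, d) then y * (t - 1) / (t * x - y) else 0) := by
  unfold Rmat
  grind

theorem sum_Rmat_smul_col (t x y : F) (c d : Fin N) (g : Fin N × Fin N → R) :
    ∑ q, Rmat N t x y q (c, d) • g q =
      if c = d then g (c, c)
      else if c < d then
        ((x - y) / (t * x - y)) • g (d, c) + (x * (t - 1) / (t * x - y)) • g (c, d)
      else (t * (x - y) / (t * x - y)) • g (d, c) + (y * (t - 1) / (t * x - y)) • g (c, d) := by
  simp only [Rmat_apply_col, ite_and, add_smul, ite_smul, zero_smul, one_smul,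
    Finset.sum_add_distrib]
  rcases lt_trichotomy c d with h | rfl | h
  · simp [h, h.ne, h.not_gt]
  · simp
  · simp [h, h.ne', h.not_gt]

theorem smul_sum_Rmat_smul_row {t x y : F} (hD : t * x - y ≠ 0) (i j : Fin N)
    (f : Fin N × Fin N → R) :
    (t * x - y) • ∑ p, Rmat N t x y (i, j) p • f p =
      if i = j then (t * x - y) • f (i, i)
      else if i < j then (t * (x - y)) • f (j, i) + (x * (t - 1)) • f (i, j)
      else (x - y) • f (j, i) + (y * (t - 1)) • f (i, j) := by
  rw [sum_Rmat_smul_row]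
  split_ifs <;> simp only [smul_add, smul_smul, mul_div_cancel₀ _ hD]

theorem smul_sum_Rmat_smul_col {t x y : F} (hD : t * x - y ≠ 0) (c d : Fin N)
    (g : Fin N × Fin N → R) :
    (t * x - y) • ∑ q, Rmat N t x y q (c, d) • g q =
      if c = d then (t * x - y) • g (c, c)
      else if c < d then (x - y) • g (d, c) + (x * (t - 1)) • g (c, d)
      else (t * (x - y)) • g (d, c) + (y * (t - 1)) • g (c, d) := by
  rw [sum_Rmat_smul_col]
  split_ifs <;> simp only [smul_add, smul_smul, mul_div_cancel₀ _ hD]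

end RmatSums

section ExchangeRelations
variable {F R : Type*} [Field F] [Ring R] [Algebra F R] {N : ℕ}

structure ExchangeRelations (t : F) (M : Fin (N + 1) → Fin N → R) : Prop where
  commute_row : ∀ p c d, Commute (M p c) (M p d)
  tCommute : ∀ p q c d, p ≠ 0 → p < q → d ≤ c → TCommute t (M p c) (M q d)
  exchange : ∀ p q c d, p ≠ 0 → p < q → c < d →
    M p c * M q d = M q d * M p c + (t - 1) • (M q c * M p d)
  commute_top : ∀ q c d, q ≠ 0 → c ≤ d → Commute (M 0 c) (M q d)
  exchange_top : ∀ q c d, q ≠ 0 → d < c →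
    M 0 c * M q d = t • (M q d * M 0 c) + (1 - t) • (M 0 d * M q c)

def rowScaled (x : F) (M : Fin (N + 1) → Fin N → R) : Matrix (Fin (N + 1)) (Fin N) R :=
  fun i c => (if i = 0 then 1 else x) • M i c

theorem rowScaled_mul_rowScaled (x y : F) (M : Fin (N + 1) → Fin N → R) (i j : Fin (N + 1))
    (c d : Fin N) :
    rowScaled x M i c * rowScaled y M j d =
      ((if i = 0 then 1 else x) * (if j = 0 then 1 else y)) • (M i c * M j d) :=
  smul_mul_smul_comm _ _ _ _

variable {t x y : F} {M : Fin (N + 1) → Fin N → R}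

theorem ExchangeRelations.rll_of_lt (hM : ExchangeRelations t M) (hxy : t * x ≠ y)
    {i j : Fin (N + 1)} (hij : i < j) (c d : Fin N) :
    ∑ p, Rmat (N + 1) t x y (i, j) p • (rowScaled x M p.1 c * rowScaled y M p.2 d)
      = ∑ q, Rmat N t x y q (c, d) • (rowScaled y M i q.1 * rowScaled x M j q.2) := by
  have hD : t * x - y ≠ 0 := sub_ne_zero_of_ne hxy
  have hj : j ≠ 0 := Fin.ne_zero_of_lt hij
  rw [← smul_right_inj hD, smul_sum_Rmat_smul_row hD, smul_sum_Rmat_smul_col hD]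
  simp only [hij.ne, hij, rowScaled_mul_rowScaled, hj, if_true, if_false]
  rcases lt_trichotomy c d with hcd | rfl | hcd <;> by_cases hi : i = 0
  · subst hi
    simp only [hcd.ne, hcd, if_true, if_false]
    rw [hM.exchange_top j d c hj hcd]
    module
  · simp only [hi, hcd.ne, hcd, if_true, if_false]
    rw [hM.tCommute i j d c hi hij hcd.le]
    module
  · subst hi
    simp only [if_true]
    rw [(hM.commute_top j c c hj le_rfl).eq]
    module
  · simp only [hi, if_true, if_false]
    rw [hM.tCommute i j c c hi hij le_rfl]
    module
  · subst hi
    simp only [hcd.ne', hcd.not_gt, if_true, if_false]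
    rw [(hM.commute_top j d c hj hcd.le).eq]
    module
  · simp only [hi, hcd.ne', hcd.not_gt, if_false]
    linear_combination (norm := module) (x * y * (y - x) * t) • hM.exchange i j d c hi hij hcd
      + (x * y * (x - y) * (t - 1)) • (hM.tCommute i j c d hi hij hcd.le).eq

theorem ExchangeRelations.rll_of_eq (hM : ExchangeRelations t M) (hxy : t * x ≠ y)
    (i : Fin (N + 1)) (c d : Fin N) :
    ∑ p, Rmat (N + 1) t x y (i, i) p • (rowScaled x M p.1 c * rowScaled y M p.2 d)
      = ∑ q, Rmat N t x y q (c, d) • (rowScaled y M i q.1 * rowScaled x M i q.2) := by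
  have hD : t * x - y ≠ 0 := sub_ne_zero_of_ne hxy
  rw [← smul_right_inj hD, smul_sum_Rmat_smul_row hD, smul_sum_Rmat_smul_col hD]
  simp only [rowScaled_mul_rowScaled, if_true]
  rcases lt_trichotomy c d with hcd | rfl | hcd
  · simp only [hcd.ne, hcd, if_true, if_false]
    rw [(hM.commute_row i d c).eq]
    module
  · simp only [if_true]
    module
  · simp only [hcd.ne', hcd.not_gt, if_false]
    rw [(hM.commute_row i d c).eq]
    module

theorem ExchangeRelations.rll_of_gt (hM : ExchangeRelations t M) (hxy : t * x ≠ y)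
    {i j : Fin (N + 1)} (hij : j < i) (c d : Fin N) :
    ∑ p, Rmat (N + 1) t x y (i, j) p • (rowScaled x M p.1 c * rowScaled y M p.2 d)
      = ∑ q, Rmat N t x y q (c, d) • (rowScaled y M i q.1 * rowScaled x M j q.2) := by
  have hD : t * x - y ≠ 0 := sub_ne_zero_of_ne hxy
  have hi : i ≠ 0 := Fin.ne_zero_of_lt hij
  rw [← smul_right_inj hD, smul_sum_Rmat_smul_row hD, smul_sum_Rmat_smul_col hD]
  simp only [hij.ne', hij.not_gt, rowScaled_mul_rowScaled, hi, if_false]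
  rcases lt_trichotomy c d with hcd | rfl | hcd <;> by_cases hj : j = 0
  · subst hj
    simp only [hcd.ne, hcd, if_true, if_false]
    rw [(hM.commute_top i c d hi hcd.le).eq]
    module
  · simp only [hj, hcd.ne, hcd, if_true, if_false]
    rw [hM.exchange j i c d hj hij hcd]
    module
  · subst hj
    simp only [if_true]
    rw [(hM.commute_top i c c hi le_rfl).eq]
    module
  · simp only [hj, if_true, if_false]
    rw [hM.tCommute j i c c hj hij le_rfl]
    module
  · subst hj
    simp only [hcd.ne', hcd.not_gt, if_true, if_false]
    rw [hM.exchange_top i c d hi hcd, (hM.commute_top i d c hi hcd.le).eq]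
    module
  · simp only [hj, hcd.ne', hcd.not_gt, if_false]
    rw [hM.tCommute j i c d hj hij hcd.le]
    module

theorem ExchangeRelations.rll (hM : ExchangeRelations t M) (hxy : t * x ≠ y)
    (i j : Fin (N + 1)) (c d : Fin N) :
    ∑ p, Rmat (N + 1) t x y (i, j) p • (rowScaled x M p.1 c * rowScaled y M p.2 d)
      = ∑ q, Rmat N t x y q (c, d) • (rowScaled y M i q.1 * rowScaled x M j q.2) := by
  rcases lt_trichotomy i j with hij | rfl | hij
  · exact hM.rll_of_lt hxy hij c d
  · exact hM.rll_of_eq hxy i c d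
  · exact hM.rll_of_gt hxy hij c d

end ExchangeRelations

section kprod
variable {R : Type*} [Ring R] {k : ℕ → R} {i r : ℕ}

theorem kprod_of_lt (h : i < r) : kprod k i r = k (i + 1) * kprod k (i + 1) r := by
  rw [kprod, kprod, show r - i = r - (i + 1) + 1 by omega, List.range'_succ]
  simp

theorem kprod_mul_kprod {s : ℕ} (his : i ≤ s) (hsr : s ≤ r) :
    kprod k i s * kprod k s r = kprod k i r := by
  rw [kprod, kprod, kprod, ← List.prod_append, ← List.map_append,
    show s + 1 = i + 1 + 1 * (s - i) by omega, List.range'_append]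
  congr 3; omega

theorem Commute.kprod_right {u : R} (h : ∀ m, i < m → m ≤ r → Commute u (k m)) :
    Commute u (kprod k i r) :=
  Commute.list_prod_right _ _ fun v hv => by
    obtain ⟨m, hm, rfl⟩ := List.mem_map.1 hv
    rw [List.mem_range'_1] at hm
    exact h m (by omega) (by omega)

theorem TCommute.kprod_right {F : Type*} [Field F] [Algebra F R] {t : F} {u : R} {s : ℕ}
    (his : i < s) (hsr : s ≤ r) (h : TCommute t u (k s))
    (h' : ∀ m, i < m → m ≤ r → m ≠ s → Commute u (k m)) :
    TCommute t u (kprod k i r) := by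
  obtain ⟨s, rfl⟩ : ∃ s', s = s' + 1 := ⟨s - 1, by omega⟩
  rw [← kprod_mul_kprod (s := s) (by omega) (by omega), kprod_of_lt (i := s) (by omega)]
  exact Commute.mul_tCommute_right
    (Commute.kprod_right fun m h₁ h₂ => h' m h₁ (by omega) (by omega))
    (h.mul_commute_right (Commute.kprod_right fun m h₁ h₂ => h' m (by omega) h₂ (by omega)))

end kprod

section Oscillator
variable {F R : Type*} [Field F] [Ring R] [Algebra F R] {t : F}

namespace IsOscTriple
variable {a ad k : R} (h : IsOscTriple t a ad k)
include h

theorem tCommute_a_k : TCommute t a k := h.1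

theorem tCommute_ad_k : TCommute t⁻¹ ad k := h.2.1

theorem mul_a_mul_ad_mul (ht : t ≠ 0) (u w : R) :
    u * (a * (ad * w)) = t • (u * (ad * (a * w))) + (1 - t) • (u * w) := by
  rw [← mul_assoc a, ← mul_assoc ad, h.2.2.1, h.2.2.2]
  simp only [sub_mul, one_mul, mul_sub, smul_mul_assoc, mul_smul_comm, smul_sub, smul_smul,
    mul_inv_cancel₀ ht, one_smul]
  module

end IsOscTriple

structure CommutingOscFamily (t : F) (r : ℕ) (a ad k : ℕ → R) : Prop where
  isOscTriple : ∀ i, 2 ≤ i → i ≤ r → IsOscTriple t (a i) (ad i) (k i)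
  commute : ∀ i j, 2 ≤ i → i ≤ r → 2 ≤ j → j ≤ r → i ≠ j →
    ∀ u ∈ [a i, ad i, k i], ∀ v ∈ [a j, ad j, k j], Commute u v

namespace CommutingOscFamily
variable {r : ℕ} {a ad k : ℕ → R} (hF : CommutingOscFamily t r a ad k) {s s' p q : ℕ}
include hF

theorem commute_a_a (hs : 2 ≤ s) (hsr : s ≤ r) (hs' : 2 ≤ s') (hs'r : s' ≤ r) :
    Commute (a s) (a s') := by
  obtain rfl | hne := eq_or_ne s s'
  · exact Commute.refl _
  · exact hF.commute s s' hs hsr hs' hs'r hne _ (by simp) _ (by simp)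

theorem commute_ad_ad (hs : 2 ≤ s) (hsr : s ≤ r) (hs' : 2 ≤ s') (hs'r : s' ≤ r) :
    Commute (ad s) (ad s') := by
  obtain rfl | hne := eq_or_ne s s'
  · exact Commute.refl _
  · exact hF.commute s s' hs hsr hs' hs'r hne _ (by simp) _ (by simp)

theorem commute_k_k (hs : 2 ≤ s) (hsr : s ≤ r) (hs' : 2 ≤ s') (hs'r : s' ≤ r) :
    Commute (k s) (k s') := by
  obtain rfl | hne := eq_or_ne s s'
  · exact Commute.refl _
  · exact hF.commute s s' hs hsr hs' hs'r hne _ (by simp) _ (by simp)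

theorem commute_a_ad (hs : 2 ≤ s) (hsr : s ≤ r) (hs' : 2 ≤ s') (hs'r : s' ≤ r)
    (hne : s ≠ s') :
    Commute (a s) (ad s') :=
  hF.commute s s' hs hsr hs' hs'r hne _ (by simp) _ (by simp)

theorem commute_a_k (hs : 2 ≤ s) (hsr : s ≤ r) (hs' : 2 ≤ s') (hs'r : s' ≤ r)
    (hne : s ≠ s') :
    Commute (a s) (k s') :=
  hF.commute s s' hs hsr hs' hs'r hne _ (by simp) _ (by simp)

theorem commute_ad_k (hs : 2 ≤ s) (hsr : s ≤ r) (hs' : 2 ≤ s') (hs'r : s' ≤ r)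
    (hne : s ≠ s') :
    Commute (ad s) (k s') :=
  hF.commute s s' hs hsr hs' hs'r hne _ (by simp) _ (by simp)

theorem commute_a_kprod (hs : 2 ≤ s) (hsp : s ≤ p) : Commute (a s) (kprod k p r) :=
  Commute.kprod_right fun _ h₁ h₂ => hF.commute_a_k hs (by omega) (by omega) h₂ (by omega)

theorem commute_ad_kprod (hs : 2 ≤ s) (hsp : s ≤ p) : Commute (ad s) (kprod k p r) :=
  Commute.kprod_right fun _ h₁ h₂ => hF.commute_ad_k hs (by omega) (by omega) h₂ (by omega)

theorem commute_kprod_kprod (hp : 1 ≤ p) (hq : 1 ≤ q) :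
    Commute (kprod k p r) (kprod k q r) :=
  Commute.kprod_right fun _ h₁ h₂ => (Commute.kprod_right fun _ h₁' h₂' =>
    hF.commute_k_k (by omega) h₂ (by omega) h₂').symm

theorem tCommute_a_kprod (hp : 1 ≤ p) (hps : p < s) (hsr : s ≤ r) :
    TCommute t (a s) (kprod k p r) :=
  TCommute.kprod_right hps hsr (hF.isOscTriple s (by omega) hsr).tCommute_a_k
    fun _ h₁ h₂ hne => hF.commute_a_k (by omega) hsr (by omega) h₂ hne.symm

theorem tCommute_kprod_ad (ht : t ≠ 0) (hp : 1 ≤ p) (hps : p < s) (hsr : s ≤ r) :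
    TCommute t (kprod k p r) (ad s) := by
  simpa using (TCommute.kprod_right hps hsr (hF.isOscTriple s (by omega) hsr).tCommute_ad_k
    fun _ h₁ h₂ hne => hF.commute_ad_k (by omega) hsr (by omega) h₂ hne.symm).symm_inv
      (inv_ne_zero ht)

end CommutingOscFamily

end Oscillator

section Lentry
variable {R : Type*} [Ring R]

def aShift (a : ℕ → R) (c : ℕ) : R := if c = 0 then 1 else a (c + 1)

def Lentry (r : ℕ) (a ad k : ℕ → R) (i c : ℕ) : R :=
  if i = 0 then aShift a c
  else if c + 1 = i then kprod k i r
  else if c + 1 < i then aShift a c * (ad i * kprod k i r)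
  else 0

variable {r : ℕ} {a ad k : ℕ → R} {i c : ℕ}

theorem Lentry_of_le (hi : i ≠ 0) (hic : i ≤ c) : Lentry r a ad k i c = 0 := by
  rw [Lentry, if_neg hi, if_neg (by omega), if_neg (by omega)]

theorem Lentry_of_succ_eq (h : c + 1 = i) : Lentry r a ad k i c = kprod k i r := by
  rw [Lentry, if_neg (by omega), if_pos h]

theorem Lentry_of_succ_lt (h : c + 1 < i) :
    Lentry r a ad k i c = aShift a c * (ad i * kprod k i r) := by
  rw [Lentry, if_neg (by omega), if_neg (by omega), if_pos h]

theorem aShift_zero : aShift a 0 = 1 := if_pos rfl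

theorem aShift_of_ne_zero (hc : c ≠ 0) : aShift a c = a (c + 1) := if_neg hc

theorem Commute.aShift_left {u : R} (h : c ≠ 0 → Commute (a (c + 1)) u) :
    Commute (aShift a c) u := by
  rcases eq_or_ne c 0 with rfl | hc
  · rw [aShift_zero]
    exact Commute.one_left u
  · rw [aShift_of_ne_zero hc]
    exact h hc

theorem commute_Lentry_right {u : R} (hi : i ≠ 0) (hK : c < i → Commute u (kprod k i r))
    (hmid : c + 1 < i → Commute u (aShift a c) ∧ Commute u (ad i)) :
    Commute u (Lentry r a ad k i c) := by
  rcases lt_trichotomy (c + 1) i with h | h | h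
  · rw [Lentry_of_succ_lt h]
    exact (hmid h).1.mul_right ((hmid h).2.mul_right (hK (by omega)))
  · rw [Lentry_of_succ_eq h]
    exact hK (by omega)
  · rw [Lentry_of_le hi (by omega)]
    exact Commute.zero_right u

variable {F : Type*} [Field F] [Algebra F R] {t : F}

theorem tCommute_Lentry_left {u : R} (hi : i ≠ 0) (hK : c < i → TCommute t (kprod k i r) u)
    (hmid : c + 1 < i → Commute (aShift a c) u ∧ Commute (ad i) u) :
    TCommute t (Lentry r a ad k i c) u := by
  rcases lt_trichotomy (c + 1) i with h | h | h
  · rw [Lentry_of_succ_lt h]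
    exact (hmid h).1.mul_tCommute_left ((hmid h).2.mul_tCommute_left (hK (by omega)))
  · rw [Lentry_of_succ_eq h]
    exact hK (by omega)
  · rw [Lentry_of_le hi (by omega)]
    exact TCommute.zero_left

theorem tCommute_Lentry_right {u : R} (hi : i ≠ 0) (hK : c < i → TCommute t u (kprod k i r))
    (hmid : c + 1 < i → Commute u (aShift a c) ∧ Commute u (ad i)) :
    TCommute t u (Lentry r a ad k i c) := by
  rcases lt_trichotomy (c + 1) i with h | h | h
  · rw [Lentry_of_succ_lt h]
    exact (hmid h).1.mul_tCommute_right ((hmid h).2.mul_tCommute_right (hK (by omega)))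
  · rw [Lentry_of_succ_eq h]
    exact hK (by omega)
  · rw [Lentry_of_le hi (by omega)]
    exact TCommute.zero_right

theorem Ltil_eq_rowScaled (x : F) :
    Ltil r a ad k x = rowScaled x (fun i c => Lentry r a ad k i c) := by
  ext i c
  simp only [Ltil, rowScaled, Lentry, aShift, Fin.ext_iff, Fin.val_zero]
  split_ifs <;> first | omega | simp [mul_assoc] | (congr 2; omega)

end Lentry

namespace CommutingOscFamily
variable {F R : Type*} [Field F] [Ring R] [Algebra F R] {t : F} {r : ℕ} {a ad k : ℕ → R}
  (hF : CommutingOscFamily t r a ad k) {s i p q c d : ℕ}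
include hF

theorem commute_aShift_a (hc : c < r) (hs : 2 ≤ s) (hsr : s ≤ r) :
    Commute (aShift a c) (a s) :=
  Commute.aShift_left fun _ => hF.commute_a_a (by omega) (by omega) hs hsr

theorem commute_aShift_aShift (hc : c < r) (hd : d < r) :
    Commute (aShift a c) (aShift a d) :=
  Commute.aShift_left fun _ => (hF.commute_aShift_a hd (by omega) (by omega)).symm

theorem commute_aShift_ad (hc : c < r) (hs : 2 ≤ s) (hsr : s ≤ r) (hne : c + 1 ≠ s) :
    Commute (aShift a c) (ad s) :=
  Commute.aShift_left fun _ => hF.commute_a_ad (by omega) (by omega) hs hsr hne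

theorem commute_aShift_kprod (hcp : c < p) : Commute (aShift a c) (kprod k p r) :=
  Commute.aShift_left fun _ => hF.commute_a_kprod (by omega) (by omega)

theorem tCommute_aShift_kprod (hc : c ≠ 0) (hcr : c < r) (hp : 1 ≤ p) (hpc : p ≤ c) :
    TCommute t (aShift a c) (kprod k p r) := by
  rw [aShift_of_ne_zero hc]
  exact hF.tCommute_a_kprod hp (by omega) (by omega)

theorem commute_aShift_Lentry (hc : c < r) (hq : q ≠ 0) (hqr : q ≤ r) (hcq : c < q)
    (hne : d + 1 < q → c + 1 ≠ q) : Commute (aShift a c) (Lentry r a ad k q d) :=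
  commute_Lentry_right hq (fun _ => hF.commute_aShift_kprod hcq)
    fun h => ⟨hF.commute_aShift_aShift hc (by omega),
      hF.commute_aShift_ad hc (by omega) hqr (hne h)⟩

theorem commute_ad_Lentry (hp : 2 ≤ p) (hpq : p ≤ q) (hqr : q ≤ r)
    (hne : d + 1 < q → d + 1 ≠ p) : Commute (ad p) (Lentry r a ad k q d) :=
  commute_Lentry_right (by omega) (fun _ => hF.commute_ad_kprod hp hpq)
    fun h => ⟨(hF.commute_aShift_ad (by omega) hp (by omega) (hne h)).symm,
      hF.commute_ad_ad hp (by omega) (by omega) hqr⟩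

theorem commute_kprod_Lentry_self (hq : q ≠ 0) :
    Commute (kprod k q r) (Lentry r a ad k q d) :=
  commute_Lentry_right hq (fun _ => Commute.refl _)
    fun h => ⟨(hF.commute_aShift_kprod (by omega)).symm,
      (hF.commute_ad_kprod (by omega) le_rfl).symm⟩

theorem tCommute_kprod_Lentry (ht : t ≠ 0) (hp : 1 ≤ p) (hpq : p < q) (hqr : q ≤ r)
    (hdp : d < p) : TCommute t (kprod k p r) (Lentry r a ad k q d) := by
  rw [Lentry_of_succ_lt (by omega)]
  exact (hF.commute_aShift_kprod hdp).symm.mul_tCommute_right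
    ((hF.tCommute_kprod_ad ht hp hpq hqr).mul_commute_right (hF.commute_kprod_kprod hp (by omega)))

theorem commute_kprod_Lentry_of_le (ht : t ≠ 0) (hp : 1 ≤ p) (hpq : p < q) (hqr : q ≤ r)
    (hpd : p ≤ d) (hdr : d < r) : Commute (kprod k p r) (Lentry r a ad k q d) := by
  rcases lt_trichotomy (d + 1) q with h | h | h
  · rw [Lentry_of_succ_lt h]
    exact TCommute.commute_mul ht (hF.tCommute_aShift_kprod (by omega) hdr hp hpd)
      ((hF.tCommute_kprod_ad ht hp hpq hqr).mul_commute_right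
        (hF.commute_kprod_kprod hp (by omega)))
  · rw [Lentry_of_succ_eq h]
    exact hF.commute_kprod_kprod hp (by omega)
  · rw [Lentry_of_le (by omega) (by omega)]
    exact Commute.zero_right _

theorem commute_Lentry_row (hir : i ≤ r) (hc : c < r) (hd : d < r) :
    Commute (Lentry r a ad k i c) (Lentry r a ad k i d) := by
  rcases eq_or_ne i 0 with rfl | hi
  · exact hF.commute_aShift_aShift hc hd
  · exact (commute_Lentry_right hi (fun _ => (hF.commute_kprod_Lentry_self hi).symm)
      fun h => ⟨(hF.commute_aShift_Lentry hc hi hir (by omega) fun _ => h.ne).symm,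
        (hF.commute_ad_Lentry (by omega) le_rfl hir fun h => h.ne).symm⟩).symm

theorem tCommute_Lentry (ht : t ≠ 0) (hp : p ≠ 0) (hpq : p < q) (hqr : q ≤ r)
    (hdc : d ≤ c ∨ d + 1 < p) (hcr : c < r) :
    TCommute t (Lentry r a ad k p c) (Lentry r a ad k q d) :=
  tCommute_Lentry_left hp (fun _ => hF.tCommute_kprod_Lentry ht (by omega) hpq hqr (by omega))
    fun _ => ⟨hF.commute_aShift_Lentry hcr (by omega) hqr (by omega) (by omega),
      hF.commute_ad_Lentry (by omega) hpq.le hqr (by omega)⟩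

theorem commute_Lentry_top (hq : q ≠ 0) (hqr : q ≤ r) (hcd : c ≤ d) (hdr : d < r) :
    Commute (aShift a c) (Lentry r a ad k q d) :=
  commute_Lentry_right hq (fun _ => hF.commute_aShift_kprod (by omega))
    fun _ => ⟨hF.commute_aShift_aShift (by omega) hdr,
      hF.commute_aShift_ad (by omega) (by omega) hqr (by omega)⟩

theorem Lentry_exchange_top (ht : t ≠ 0) (hq : q ≠ 0) (hqr : q ≤ r) (hdc : d < c)
    (hcr : c < r) :
    aShift a c * Lentry r a ad k q d
      = t • (Lentry r a ad k q d * aShift a c)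
        + (1 - t) • (aShift a d * Lentry r a ad k q c) := by
  rcases lt_trichotomy (c + 1) q with hcq | rfl | hcq
  · rw [← (hF.commute_aShift_Lentry hcr hq hqr (by omega) fun _ => hcq.ne).eq,
      Lentry_of_succ_lt hcq, Lentry_of_succ_lt (by omega : d + 1 < q),
      (hF.commute_aShift_aShift (by omega) hcr).left_comm]
    module
  · have hK : Commute (a (c + 1)) (kprod k (c + 1) r) := hF.commute_a_kprod (by omega) le_rfl
    rw [aShift_of_ne_zero (by omega), Lentry_of_succ_eq rfl, Lentry_of_succ_lt (by omega),
      (hF.commute_aShift_a (by omega) (by omega) hqr).symm.left_comm, mul_assoc, mul_assoc,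
      ← hK.eq,
      (hF.isOscTriple (c + 1) (by omega) hqr).mul_a_mul_ad_mul ht]
  · have hT : TCommute t (aShift a c) (Lentry r a ad k q d) :=
      tCommute_Lentry_right hq
        (fun _ => hF.tCommute_aShift_kprod (by omega) hcr (by omega) (by omega))
        fun _ => ⟨hF.commute_aShift_aShift hcr (by omega),
          hF.commute_aShift_ad hcr (by omega) hqr (by omega)⟩
    rw [hT.eq, Lentry_of_le hq (by omega : q ≤ c)]
    simp

theorem Lentry_exchange_of_succ_eq (ht : t ≠ 0) (hpq : p < q) (hqr : q ≤ r) (hcd : c < d)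
    (hdp : d + 1 = p) :
    Lentry r a ad k p c * Lentry r a ad k q d
      = Lentry r a ad k q d * Lentry r a ad k p c
        + (t - 1) • (Lentry r a ad k q c * Lentry r a ad k p d) := by
  subst hdp
  have hKa : Commute (kprod k (d + 1) r) (a (d + 1)) := (hF.commute_a_kprod (by omega) le_rfl).symm
  have hKad : TCommute t (kprod k (d + 1) r) (ad q) := hF.tCommute_kprod_ad ht (by omega) hpq hqr
  have hKK : Commute (kprod k q r) (kprod k (d + 1) r) :=
    hF.commute_kprod_kprod (by omega) (by omega)
  have hKE : Commute (kprod k q r) (aShift a c) := (hF.commute_aShift_kprod (by omega)).symm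
  have hadE : Commute (ad q) (aShift a c) :=
    (hF.commute_aShift_ad (by omega) (by omega) hqr (by omega)).symm
  have haE : Commute (a (d + 1)) (aShift a c) :=
    (hF.commute_aShift_a (by omega) (by omega) (by omega)).symm
  have hKad' : Commute (kprod k q r) (ad (d + 1)) := (hF.commute_ad_kprod (by omega) hpq.le).symm
  have hadad : Commute (ad q) (ad (d + 1)) := hF.commute_ad_ad (by omega) hqr (by omega) (by omega)
  rw [Lentry_of_succ_lt (by omega : c + 1 < d + 1), Lentry_of_succ_lt (by omega : d + 1 < q),
    Lentry_of_succ_lt (by omega : c + 1 < q), Lentry_of_succ_eq rfl,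
    aShift_of_ne_zero (c := d) (by omega)]
  simp only [mul_assoc]
  rw [hKa.left_comm, hKad.left_comm, hKE.left_comm, hadE.left_comm, haE.left_comm,
    hKad'.left_comm, hadad.left_comm, hKK.eq,
    (hF.isOscTriple (d + 1) (by omega) (by omega)).mul_a_mul_ad_mul ht]
  simp only [mul_smul_comm]
  module

theorem Lentry_exchange (ht : t ≠ 0) (hp : p ≠ 0) (hpq : p < q) (hqr : q ≤ r) (hcd : c < d)
    (hdr : d < r) :
    Lentry r a ad k p c * Lentry r a ad k q d
      = Lentry r a ad k q d * Lentry r a ad k p c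
        + (t - 1) • (Lentry r a ad k q c * Lentry r a ad k p d) := by
  rcases lt_trichotomy (d + 1) p with hdp | hdp | hdp
  · have hswap : Lentry r a ad k q c * Lentry r a ad k p d
        = Lentry r a ad k q d * Lentry r a ad k p c := by
      have hKd : Commute (kprod k q r) (aShift a d) := (hF.commute_aShift_kprod (by omega)).symm
      have hadd : Commute (ad q) (aShift a d) :=
        (hF.commute_aShift_ad hdr (by omega) hqr (by omega)).symm
      have hKc : Commute (kprod k q r) (aShift a c) := (hF.commute_aShift_kprod (by omega)).symm
      have hadc : Commute (ad q) (aShift a c) :=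
        (hF.commute_aShift_ad (by omega) (by omega) hqr (by omega)).symm
      rw [Lentry_of_succ_lt (by omega : c + 1 < q), Lentry_of_succ_lt hdp,
        Lentry_of_succ_lt (by omega : d + 1 < q), Lentry_of_succ_lt (by omega : c + 1 < p)]
      simp only [mul_assoc]
      rw [hKd.left_comm, hadd.left_comm, (hF.commute_aShift_aShift (by omega) hdr).left_comm,
        hKc.left_comm, hadc.left_comm]
    rw [(hF.tCommute_Lentry ht hp hpq hqr (Or.inr hdp) (by omega)).eq, hswap]
    module
  · exact hF.Lentry_exchange_of_succ_eq ht hpq hqr hcd hdp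
  · rw [Lentry_of_le (k := k) hp (by omega : p ≤ d), mul_zero, smul_zero, add_zero]
    exact (commute_Lentry_right hp
      (fun _ => (hF.commute_kprod_Lentry_of_le ht (by omega) hpq hqr (by omega) hdr).symm)
      fun _ => ⟨(hF.commute_aShift_Lentry (by omega) (by omega) hqr (by omega) (by omega)).symm,
        (hF.commute_ad_Lentry (by omega) hpq.le hqr (by omega)).symm⟩).symm

theorem exchangeRelations_Lentry (ht : t ≠ 0) :
    ExchangeRelations t (fun (i : Fin (r + 1)) (c : Fin r) => Lentry r a ad k i c) where
  commute_row p c d := hF.commute_Lentry_row (by omega) c.2 d.2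
  tCommute p q c d hp hpq hdc :=
    hF.tCommute_Lentry ht (Fin.val_ne_zero_iff.2 hp) hpq (by omega) (Or.inl hdc) c.2
  exchange p q c d hp hpq hcd :=
    hF.Lentry_exchange ht (Fin.val_ne_zero_iff.2 hp) hpq (by omega) hcd d.2
  commute_top q c d hq hcd := hF.commute_Lentry_top (Fin.val_ne_zero_iff.2 hq) (by omega) hcd d.2
  exchange_top q c d hq hdc :=
    hF.Lentry_exchange_top ht (Fin.val_ne_zero_iff.2 hq) (by omega) hdc c.2

end CommutingOscFamily

theorem Ltil_satisfies_rank_reducing_YB_general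
    {F R : Type*} [Field F] [Ring R] [Algebra F R]
    (r : ℕ) (t : F) (ht : t ≠ 0) (a ad k : ℕ → R)
    (hosc : ∀ i, 2 ≤ i → i ≤ r → IsOscTriple t (a i) (ad i) (k i))
    (hcomm : ∀ i j, 2 ≤ i → i ≤ r → 2 ≤ j → j ≤ r → i ≠ j →
      ∀ u ∈ [a i, ad i, k i], ∀ v ∈ [a j, ad j, k j], Commute u v) :
    ∀ x y : F, t * x ≠ y → ∀ (i j : Fin (r + 1)) (kk ll : Fin r),
      ∑ p : Fin (r + 1) × Fin (r + 1),
          Rmat (r + 1) t x y (i, j) p • (Ltil r a ad k x p.1 kk * Ltil r a ad k y p.2 ll)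
      = ∑ q : Fin r × Fin r,
          Rmat r t x y q (kk, ll) • (Ltil r a ad k y i q.1 * Ltil r a ad k x j q.2) := by
  intro x y hxy i j kk ll
  simp only [Ltil_eq_rowScaled]
  exact ((CommutingOscFamily.mk hosc hcomm).exchangeRelations_Lentry ht).rll hxy i j kk ll

theorem Ltil_satisfies_rank_reducing_YB
    {F R : Type*} [Field F] [Ring R] [Algebra F R]
    (r : ℕ) (hr : 2 ≤ r) (t : F) (ht : t ≠ 0) (a ad k : ℕ → R)
    (hosc : ∀ i, 2 ≤ i → i ≤ r → IsOscTriple t (a i) (ad i) (k i))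
    (hcomm : ∀ i j, 2 ≤ i → i ≤ r → 2 ≤ j → j ≤ r → i ≠ j →
      ∀ u ∈ [a i, ad i, k i], ∀ v ∈ [a j, ad j, k j], Commute u v) :
    ∀ x y : F, t * x ≠ y → ∀ (i j : Fin (r + 1)) (kk ll : Fin r),
      ∑ p : Fin (r + 1) × Fin (r + 1),
          Rmat (r + 1) t x y (i, j) p • (Ltil r a ad k x p.1 kk * Ltil r a ad k y p.2 ll)
      = ∑ q : Fin r × Fin r,
          Rmat r t x y q (kk, ll) • (Ltil r a ad k y i q.1 * Ltil r a ad k x j q.2) :=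
  Ltil_satisfies_rank_reducing_YB_general r t ht a ad k hosc hcomm
end

section
/- Let F be a field, t, q ∈ F invertible, r ≥ 2, and R a unital associative F-algebra containing r−1 mutually commuting t-oscillator triples (a_i, a†_i, k_i), 2 ≤ i ≤ r. Let s_2,…,s_r ∈ R be pairwise commuting elements such that for each 2 ≤ i ≤ r: a_i·s_i = q^{i−1}·s_i·a_i, a†_i·s_i = q^{1−i}·s_i·a†_i, k_i·s_i = s_i·k_i, and s_i commutes with a_j, a†_j, k_j for all j ≠ i. Set s = s_r·s_{r−1}···s_2, and let L̃(x) be the (r+1)×r matrix defined by: L̃_{00} = 1; L̃_{0j} = a_{j+1} for 1 ≤ j ≤ r−1; L̃_{10} = x·k_2···k_r; L̃_{i0} = x·a†_i·k_{i+1}···k_r for 2 ≤ i ≤ r; L̃_{i,i−1} = x·k_{i+1}···k_r for 2 ≤ i ≤ r; L̃_{ij} = x·a_{j+1}·a†_i·k_{i+1}···k_r for 1 ≤ j+1 < i ≤ r; L̃_{ij} = 0 for 1 ≤ i ≤ j ≤ r−1. Then for all i ∈ {0,…,r}, j ∈ {0,…,r−1}, and x ∈ F: s·L̃_{ij}(q·x)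 = q^{i−j}·L̃_{ij}(x)·s. -/
/-!
STATEMENT 8: the twist operator `s = s_r·s_{r−1}⋯s_2` satisfies
`s·L̃_{ij}(q·x) = q^{i−j}·L̃_{ij}(x)·s` for the reduced `(r+1) × r` matrix `L̃(x)`.
-/

open scoped BigOperators

/-- The ordered product `s = s_r·s_{r−1}⋯s_2`. -/
def sTwist {R : Type*} [Ring R] (s : ℕ → R) (r : ℕ) : R :=
  (((List.range' 2 (r - 1)).reverse).map s).prod


/-!
Say that `y` has `q`-degree `e` relative to `s` when `s * y = q ^ e • (y * s)`. Degrees add under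
products on either side, so relative to `s = s_r ⋯ s_2` a generator has the degree it has relative
to the one factor `s_j` it fails to commute with: `a_j` has degree `1 - j`, `a†_j` degree `j - 1`,
and the `k_j` degree `0`. Hence the entry `L̃_{ij}(x)` is homogeneous of degree `-j` in row `0` and
of degree `i - j - 1` below it, where it is moreover linear in `x`, which gives the extra factor `q`.
-/

section QCommute

variable {F R : Type*} [Semifield F] [Semiring R] [Algebra F R]

def QCommute (q : F) (e : ℤ) (s y : R) : Prop :=
  s * y = q ^ e • (y * s)

variable {q : F} {e e₁ e₂ : ℤ} {s s' y z : R}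

theorem Commute.qCommute_zero (h : Commute s y) : QCommute q 0 s y := by
  simpa [QCommute] using h.eq

theorem QCommute.zero_right : QCommute q e s (0 : R) := by
  simp [QCommute]

theorem QCommute.one_right : QCommute q 0 s (1 : R) :=
  (Commute.one_right s).qCommute_zero

theorem QCommute.smul_right (h : QCommute q e s y) (c : F) : QCommute q e s (c • y) := by
  rw [QCommute, mul_smul_comm, h, smul_mul_assoc, smul_comm]

theorem QCommute.mul_right (hq : q ≠ 0) (h₁ : QCommute q e₁ s y) (h₂ : QCommute q e₂ s z) :
    QCommute q (e₁ + e₂) s (y * z) := by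
  rw [QCommute, ← mul_assoc, h₁, smul_mul_assoc, mul_assoc, h₂, mul_smul_comm, smul_smul,
    zpow_add₀ hq, mul_assoc]

theorem QCommute.mul_left (hq : q ≠ 0) (h₁ : QCommute q e₁ s y) (h₂ : QCommute q e₂ s' y) :
    QCommute q (e₁ + e₂) (s * s') y := by
  rw [QCommute, mul_assoc, h₂, mul_smul_comm, ← mul_assoc, h₁, smul_mul_assoc, smul_smul,
    zpow_add₀ hq, mul_comm (q ^ e₂), mul_assoc]

theorem QCommute.symm (hq : q ≠ 0) (h : QCommute q e y s) : QCommute q (-e) s y := by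
  rw [QCommute, h, smul_smul, ← zpow_add₀ hq, neg_add_cancel, zpow_zero, one_smul]

theorem QCommute.mul_smul_self (hq : q ≠ 0) (h : QCommute q e s y) :
    s * (q • y) = q ^ (e + 1) • (y * s) := by
  rw [mul_smul_comm, h, smul_smul, zpow_add_one₀ hq, mul_comm]

theorem QCommute.list_prod_left {ι : Type*} (hq : q ≠ 0) {g : ι → R} {j : ι} :
    ∀ {l : List ι}, l.Nodup → j ∈ l → QCommute q e (g j) y →
      (∀ m ∈ l, m ≠ j → Commute (g m) y) → QCommute q e (l.map g).prod y
  | m :: l, hl, hj, hgj, hcomm => by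
    rw [List.nodup_cons] at hl
    rw [List.map_cons, List.prod_cons]
    by_cases hmj : m = j
    · subst hmj
      have htail : Commute (l.map g).prod y :=
        Commute.list_prod_left _ _ fun z hz => by
          obtain ⟨n, hn, rfl⟩ := List.mem_map.1 hz
          exact hcomm n (List.mem_cons_of_mem _ hn) (ne_of_mem_of_not_mem hn hl.1)
      simpa using hgj.mul_left hq htail.qCommute_zero
    · have hj' : j ∈ l := (List.mem_cons.1 hj).resolve_left (Ne.symm hmj)
      simpa using ((hcomm m List.mem_cons_self hmj).qCommute_zero).mul_left hq
        (QCommute.list_prod_left hq hl.2 hj' hgj fun n hn => hcomm n (List.mem_cons_of_mem _ hn))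

end QCommute

section Twist

variable {F R : Type*} [Field F] [Ring R] [Algebra F R] {q : F} {e : ℤ} {r : ℕ}

theorem mem_sTwist_indices {m : ℕ} : m ∈ (List.range' 2 (r - 1)).reverse ↔ 2 ≤ m ∧ m ≤ r := by
  rw [List.mem_reverse, List.mem_range'_1]
  omega

theorem QCommute.sTwist_left (hq : q ≠ 0) {s : ℕ → R} {y : R} {j : ℕ} (h2j : 2 ≤ j) (hjr : j ≤ r)
    (hj : QCommute q e (s j) y) (hcomm : ∀ m, 2 ≤ m → m ≤ r → m ≠ j → Commute (s m) y) :
    QCommute q e (sTwist s r) y :=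
  QCommute.list_prod_left hq (List.nodup_reverse.2 List.nodup_range')
    (mem_sTwist_indices.2 ⟨h2j, hjr⟩) hj fun m hm => hcomm m (mem_sTwist_indices.1 hm).1
      (mem_sTwist_indices.1 hm).2

theorem commute_sTwist_kprod {s k : ℕ → R}
    (hsk : ∀ n m, 2 ≤ n → n ≤ r → 2 ≤ m → m ≤ r → Commute (s n) (k m)) {i : ℕ} (h1i : 1 ≤ i) :
    Commute (sTwist s r) (kprod k i r) :=
  Commute.list_prod_right _ _ fun z hz => by
    obtain ⟨m, hm, rfl⟩ := List.mem_map.1 hz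
    rw [List.mem_range'_1] at hm
    refine Commute.list_prod_left _ _ fun y hy => ?_
    obtain ⟨n, hn, rfl⟩ := List.mem_map.1 hy
    exact hsk n m (mem_sTwist_indices.1 hn).1 (mem_sTwist_indices.1 hn).2 (by omega) (by omega)

end Twist

section Ltil

variable {F R : Type*} [Field F] [Ring R] [Algebra F R] {q : F} {r : ℕ} {a ad k : ℕ → R} {S : R}
  {i : Fin (r + 1)}

theorem Ltil_apply_of_val_eq_zero (hi : i.val = 0) (j : Fin r) (x x' : F) :
    Ltil r a ad k x i j = Ltil r a ad k x' i j := by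
  simp [Ltil, hi]

theorem Ltil_mul_apply_of_val_ne_zero (hi : i.val ≠ 0) (j : Fin r) (c x : F) :
    Ltil r a ad k (c * x) i j = c • Ltil r a ad k x i j := by
  simp only [Ltil, if_neg hi]
  split_ifs <;> simp [mul_smul]

theorem qCommute_Ltil_of_val_eq_zero (ha : ∀ j, 2 ≤ j → j ≤ r → QCommute q (1 - j) S (a j))
    (hi : i.val = 0) (j : Fin r) (x : F) : QCommute q (-j) S (Ltil r a ad k x i j) := by
  simp only [Ltil, if_pos hi]
  split_ifs with hj
  · simpa [hj] using (QCommute.one_right : QCommute q 0 S 1)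
  · convert ha (j + 1) (by omega) (by omega) using 1
    push_cast
    ring

theorem qCommute_Ltil_of_val_ne_zero (hq : q ≠ 0)
    (ha : ∀ j, 2 ≤ j → j ≤ r → QCommute q (1 - j) S (a j))
    (had : ∀ i, 2 ≤ i → i ≤ r → QCommute q (i - 1) S (ad i))
    (hk : ∀ i, 1 ≤ i → i ≤ r → Commute S (kprod k i r))
    (hi : i.val ≠ 0) (j : Fin r) (x : F) : QCommute q (i - j - 1) S (Ltil r a ad k x i j) := by
  have hir : i.val ≤ r := Nat.lt_succ_iff.1 i.isLt
  have hK : QCommute q 0 S (kprod k i r) := (hk i (by omega) hir).qCommute_zero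
  simp only [Ltil, if_neg hi]
  split_ifs with hj0 hi1 hij hlt
  · convert (hk 1 le_rfl (by omega)).qCommute_zero.smul_right x using 1
    omega
  · convert ((had i (by omega) hir).mul_right hq hK).smul_right x using 1
    omega
  · convert hK.smul_right x using 1
    omega
  · convert (((ha (j + 1) (by omega) (by omega)).mul_right hq (had i (by omega) hir)).mul_right
      hq hK).smul_right x using 1
    push_cast
    ring
  · exact QCommute.zero_right

end Ltil

theorem twist_relation_for_Ltil_general
    {F R : Type*} [Field F] [Ring R] [Algebra F R]
    (r : ℕ) (q : F) (hq : q ≠ 0)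
    (a ad k s : ℕ → R)
    (hsa : ∀ i, 2 ≤ i → i ≤ r → a i * s i = (q ^ (i - 1)) • (s i * a i))
    (hsad : ∀ i, 2 ≤ i → i ≤ r → ad i * s i = (q ^ ((1 : ℤ) - (i : ℤ))) • (s i * ad i))
    (hsk : ∀ i, 2 ≤ i → i ≤ r → k i * s i = s i * k i)
    (hsother : ∀ i j, 2 ≤ i → i ≤ r → 2 ≤ j → j ≤ r → i ≠ j →
      ∀ v ∈ [a j, ad j, k j], Commute (s i) v) :
    ∀ (i : Fin (r + 1)) (j : Fin r) (x : F),
      sTwist s r * Ltil r a ad k (q * x) i j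
      = (q ^ ((i.val : ℤ) - (j.val : ℤ))) • (Ltil r a ad k x i j * sTwist s r) := by
  have ha : ∀ j, 2 ≤ j → j ≤ r → QCommute q (1 - j) (sTwist s r) (a j) := fun j h2 hjr => by
    refine .sTwist_left hq h2 hjr ?_ fun m h2m hmr hmj => hsother m j h2m hmr h2 hjr hmj _ (by simp)
    have hsa' : QCommute q ((j : ℤ) - 1) (a j) (s j) := by
      rw [QCommute, hsa j h2 hjr, ← zpow_natCast, Nat.cast_sub (by omega), Nat.cast_one]
    simpa using hsa'.symm hq
  have had : ∀ i, 2 ≤ i → i ≤ r → QCommute q (i - 1) (sTwist s r) (ad i) := fun i h2 hir => by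
    refine .sTwist_left hq h2 hir ?_ fun m h2m hmr hmi => hsother m i h2m hmr h2 hir hmi _ (by simp)
    simpa using QCommute.symm (e := 1 - i) hq (hsad i h2 hir)
  have hk : ∀ i, 1 ≤ i → i ≤ r → Commute (sTwist s r) (kprod k i r) := by
    refine fun i h1 _ => commute_sTwist_kprod (fun n m h2n hnr h2m hmr => ?_) h1
    rcases eq_or_ne n m with rfl | hnm
    · exact (hsk n h2n hnr).symm
    · exact hsother n m h2n hnr h2m hmr hnm _ (by simp)
  intro i j x
  by_cases hi : i.val = 0
  · rw [Ltil_apply_of_val_eq_zero hi j (q * x) x, hi, Nat.cast_zero, zero_sub]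
    exact qCommute_Ltil_of_val_eq_zero ha hi j x
  · rw [Ltil_mul_apply_of_val_ne_zero hi,
      (qCommute_Ltil_of_val_ne_zero hq ha had hk hi j x).mul_smul_self hq, sub_add_cancel]

theorem twist_relation_for_Ltil
    {F R : Type*} [Field F] [Ring R] [Algebra F R]
    (r : ℕ) (hr : 2 ≤ r) (t q : F) (ht : t ≠ 0) (hq : q ≠ 0)
    (a ad k s : ℕ → R)
    (hosc : ∀ i, 2 ≤ i → i ≤ r → IsOscTriple t (a i) (ad i) (k i))
    (hoscComm : ∀ i j, 2 ≤ i → i ≤ r → 2 ≤ j → j ≤ r → i ≠ j →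
      ∀ u ∈ [a i, ad i, k i], ∀ v ∈ [a j, ad j, k j], Commute u v)
    (hss : ∀ i j, Commute (s i) (s j))
    (hsa : ∀ i, 2 ≤ i → i ≤ r → a i * s i = (q ^ (i - 1)) • (s i * a i))
    (hsad : ∀ i, 2 ≤ i → i ≤ r → ad i * s i = (q ^ ((1 : ℤ) - (i : ℤ))) • (s i * ad i))
    (hsk : ∀ i, 2 ≤ i → i ≤ r → k i * s i = s i * k i)
    (hsother : ∀ i j, 2 ≤ i → i ≤ r → 2 ≤ j → j ≤ r → i ≠ j →
      ∀ v ∈ [a j, ad j, k j], Commute (s i) v) :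
    ∀ (i : Fin (r + 1)) (j : Fin r) (x : F),
      sTwist s r * Ltil r a ad k (q * x) i j
      = (q ^ ((i.val : ℤ) - (j.val : ℤ))) • (Ltil r a ad k x i j * sTwist s r) :=
  twist_relation_for_Ltil_general r q hq a ad k s hsa hsad hsk hsother
end

section
/- Let F be a field, t ∈ F, R a unital associative F-algebra, τ : R → F an F-linear map, S ∈ R, and A_0,…,A_r : F → R functions satisfying the denominator-cleared exchange relation: for all x, y ∈ F and all 0 ≤ i < j ≤ r, t·(x−y)·A_j(x)·A_i(y) − (t·x−y)·(A_j(x)·A_i(y) − A_j(y)·A_i(x)) = (x−y)·A_i(x)·A_j(y). For a composition λ ∈ {0,…,r}ⁿ define f_λ(x_1,…,x_n) = τ(A_{λ_1}(x_1)·A_{λ_2}(x_2)···A_{λ_n}(x_n)·S). Then for every 1 ≤ i ≤ n−1 and every composition λ with λ_i > λ_{i+1}, and all x_1,…,x_n ∈ F: (x_i − x_{i+1})·f_{s_iλ}(x_1,…,x_n) = t·(x_i − x_{i+1})·f_λ(x_1,…,x_n) − (t·x_i − x_{i+1})·(f_λ(x_1,…,x_n) − f_λ(x_1,…,x_{i+1},x_i,…,x_n)),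 where s_iλ denotes λ with entries i and i+1 interchanged, and the last argument list has x_i and x_{i+1} interchanged. -/
/-!
STATEMENT 9: the matrix product Ansatz `f_λ(x_1,…,x_n) = τ(A_{λ_1}(x_1)⋯A_{λ_n}(x_n)·S)`
built from operators satisfying the (denominator-cleared) exchange relation satisfies the
(denominator-cleared) qKZ exchange equation for `λ_i > λ_{i+1}`.
-/

open scoped BigOperators

private lemma prod_split {M : Type*} [Monoid M] (l : List M) (i : ℕ) (h : i + 1 < l.length) :
    l.prod = (l.take i).prod *
      (l[i]'(by omega) * (l[i+1]'h * (l.drop (i+2)).prod)) := by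
  conv_lhs => rw [← List.take_append_drop i l]
  rw [List.prod_append, List.drop_eq_getElem_cons (l := l) (by omega : i < l.length)]
  rw [List.drop_eq_getElem_cons (l := l) h]
  rw [List.prod_cons, List.prod_cons]

/-- `f_λ(x_1,…,x_n) = τ(A_{λ_1}(x_1)·A_{λ_2}(x_2)⋯A_{λ_n}(x_n)·S)`. -/
def fMP {F R : Type*} [Field F] [Ring R] [Algebra F R] {r n : ℕ}
    (τ : R →ₗ[F] F) (S : R) (A : Fin (r + 1) → F → R)
    (lam : Fin n → Fin (r + 1)) (xs : Fin n → F) : F :=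
  τ ((List.ofFn fun p : Fin n => A (lam p) (xs p)).prod * S)

theorem matrix_product_solves_qKZ_exchange
    {F R : Type*} [Field F] [Ring R] [Algebra F R]
    (r n : ℕ) (t : F)
    (τ : R →ₗ[F] F) (S : R) (A : Fin (r + 1) → F → R)
    (hE1 : ∀ (x y : F) (i j : Fin (r + 1)), i < j →
      (t * (x - y)) • (A j x * A i y)
        - (t * x - y) • (A j x * A i y - A j y * A i x)
      = (x - y) • (A i x * A j y)) :
    ∀ (i : ℕ) (hi : i + 1 < n) (lam : Fin n → Fin (r + 1)),
      lam ⟨i + 1, hi⟩ < lam ⟨i, Nat.lt_of_succ_lt hi⟩ →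
      ∀ xs : Fin n → F,
        (xs ⟨i, Nat.lt_of_succ_lt hi⟩ - xs ⟨i + 1, hi⟩)
            * fMP τ S A (lam ∘ Equiv.swap ⟨i, Nat.lt_of_succ_lt hi⟩ ⟨i + 1, hi⟩) xs
        = t * (xs ⟨i, Nat.lt_of_succ_lt hi⟩ - xs ⟨i + 1, hi⟩) * fMP τ S A lam xs
          - (t * xs ⟨i, Nat.lt_of_succ_lt hi⟩ - xs ⟨i + 1, hi⟩)
            * (fMP τ S A lam xs
               - fMP τ S A lam (xs ∘ Equiv.swap ⟨i, Nat.lt_of_succ_lt hi⟩ ⟨i + 1, hi⟩)) := by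
  intro i hi lam hlt xs
  set ii : Fin n := ⟨i, Nat.lt_of_succ_lt hi⟩ with hii
  set jj : Fin n := ⟨i + 1, hi⟩ with hjj
  -- swap fixes indices other than i, i+1
  have hswap_ne : ∀ (k : ℕ) (hk : k < n), k ≠ i → k ≠ i + 1 →
      Equiv.swap ii jj ⟨k, hk⟩ = ⟨k, hk⟩ := by
    intro k hk h1 h2
    exact Equiv.swap_apply_of_ne_of_ne
      (by simp [hii, Fin.ext_iff, h1]) (by simp [hjj, Fin.ext_iff, h2])
  -- the three lists
  set f1 : Fin n → R := fun p => A (lam p) (xs p) with hf1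
  set f2 : Fin n → R := fun p => A ((lam ∘ Equiv.swap ii jj) p) (xs p) with hf2
  set f3 : Fin n → R := fun p => A (lam p) ((xs ∘ Equiv.swap ii jj) p) with hf3
  have hlen1 : i + 1 < (List.ofFn f1).length := by simpa using hi
  have hlen2 : i + 1 < (List.ofFn f2).length := by simpa using hi
  have hlen3 : i + 1 < (List.ofFn f3).length := by simpa using hi
  set T : R := ((List.ofFn f1).take i).prod with hT
  set D : R := ((List.ofFn f1).drop (i+2)).prod with hD
  have htake2 : (List.ofFn f2).take i = (List.ofFn f1).take i := by
    apply List.ext_getElem (by simp)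
    intro k h1 h2
    simp only [List.getElem_take, List.getElem_ofFn]
    simp only [hf1, hf2, Function.comp_apply]
    rw [hswap_ne _ _ (by simp at h1 ⊢; omega) (by simp at h1 ⊢; omega)]
  have htake3 : (List.ofFn f3).take i = (List.ofFn f1).take i := by
    apply List.ext_getElem (by simp)
    intro k h1 h2
    simp only [List.getElem_take, List.getElem_ofFn]
    simp only [hf1, hf3, Function.comp_apply]
    rw [hswap_ne _ _ (by simp at h1 ⊢; omega) (by simp at h1 ⊢; omega)]
  have hdrop2 : (List.ofFn f2).drop (i+2) = (List.ofFn f1).drop (i+2) := by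
    apply List.ext_getElem (by simp)
    intro k h1 h2
    simp only [List.getElem_drop, List.getElem_ofFn]
    simp only [hf1, hf2, Function.comp_apply]
    rw [hswap_ne _ _ (by omega) (by omega)]
  have hdrop3 : (List.ofFn f3).drop (i+2) = (List.ofFn f1).drop (i+2) := by
    apply List.ext_getElem (by simp)
    intro k h1 h2
    simp only [List.getElem_drop, List.getElem_ofFn]
    simp only [hf1, hf3, Function.comp_apply]
    rw [hswap_ne _ _ (by omega) (by omega)]
  -- the linear functional
  set φ : R →ₗ[F] F :=
    τ ∘ₗ LinearMap.mulRight F S ∘ₗ LinearMap.mulLeft F T ∘ₗ LinearMap.mulRight F D with hφ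
  have hφ_apply : ∀ M : R, φ M = τ (T * (M * D) * S) := by intro M; simp [hφ]
  -- express the three fMP values via φ
  have e1 : fMP τ S A lam xs = φ (A (lam ii) (xs ii) * A (lam jj) (xs jj)) := by
    rw [hφ_apply, fMP, prod_split _ i hlen1]
    simp only [List.getElem_ofFn]
    rw [← hT, ← hD]
    have a1 : f1 ⟨i, Nat.lt_of_succ_lt hi⟩ = A (lam ii) (xs ii) := rfl
    have a2 : f1 ⟨i + 1, hi⟩ = A (lam jj) (xs jj) := rfl
    rw [a1, a2, mul_assoc (A (lam ii) (xs ii)) (A (lam jj) (xs jj)) D]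
  have e2 : fMP τ S A (lam ∘ Equiv.swap ii jj) xs
      = φ (A (lam jj) (xs ii) * A (lam ii) (xs jj)) := by
    rw [hφ_apply, fMP, prod_split _ i hlen2]
    rw [htake2, hdrop2, ← hT, ← hD]
    simp only [List.getElem_ofFn]
    have a1 : f2 ⟨i, Nat.lt_of_succ_lt hi⟩ = A (lam jj) (xs ii) := by
      simp [hf2, ← hii, Equiv.swap_apply_left]
    have a2 : f2 ⟨i + 1, hi⟩ = A (lam ii) (xs jj) := by
      simp [hf2, ← hjj, Equiv.swap_apply_right]
    rw [a1, a2, mul_assoc (A (lam jj) (xs ii)) (A (lam ii) (xs jj)) D]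
  have e3 : fMP τ S A lam (xs ∘ Equiv.swap ii jj)
      = φ (A (lam ii) (xs jj) * A (lam jj) (xs ii)) := by
    rw [hφ_apply, fMP, prod_split _ i hlen3]
    rw [htake3, hdrop3, ← hT, ← hD]
    simp only [List.getElem_ofFn]
    have a1 : f3 ⟨i, Nat.lt_of_succ_lt hi⟩ = A (lam ii) (xs jj) := by
      simp [hf3, ← hii, Equiv.swap_apply_left]
    have a2 : f3 ⟨i + 1, hi⟩ = A (lam jj) (xs ii) := by
      simp [hf3, ← hjj, Equiv.swap_apply_right]
    rw [a1, a2, mul_assoc (A (lam ii) (xs jj)) (A (lam jj) (xs ii)) D]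
  have key := congrArg φ (hE1 (xs ii) (xs jj) (lam jj) (lam ii) hlt)
  simp only [map_sub, map_smul, smul_eq_mul] at key
  rw [e1, e2, e3]
  exact key.symm
end

section
/- Let F be a field and t ∈ F. Suppose f assigns to every composition λ ∈ ℕⁿ a polynomial f_λ ∈ F[x_1,…,x_n] such that for every 1 ≤ i ≤ n−1: (i) if λ_i = λ_{i+1} then σ_i f_λ = f_λ (f_λ is symmetric in x_i and x_{i+1}); (ii) if λ_i > λ_{i+1} then (x_i − x_{i+1})·f_{s_iλ} = t·(x_i − x_{i+1})·f_λ − (t·x_i − x_{i+1})·(f_λ − σ_i f_λ), where s_iλ denotes λ with entries i and i+1 interchanged and σ_i is the algebra automorphism of F[x_1,…,x_n] exchanging x_i and x_{i+1}. Then for every composition λ, the polynomial 𝒫_λ = Σ_μ f_μ, where the sum runs over the set of all distinct rearrangements μ of λ, is a symmetric polynomial (invariant under every permutation of the variables x_1,…,x_n). -/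
open MvPolynomial

/-!
Since adjacent transpositions generate the symmetric group, it suffices to show that `σ_i`
fixes `𝒫_λ`. The rearrangements of `λ` split into pairs `{μ, s_i μ}` and fixed points of `s_i`.
A fixed point has `μ_i = μ_{i+1}`, so `f_μ` is `σ_i`-invariant by (i). For a pair with
`μ_i > μ_{i+1}`, adding relation (ii) to its image under `σ_i` gives
`(x_i - x_{i+1}) · (σ_i - 1)(f_μ + f_{s_i μ}) = 0`, and `x_i - x_{i+1}` is a nonzero divisor.
-/

namespace MvPolynomial

theorem isSymmetric_of_forall_rename_swap_adjacent {R : Type*} [CommSemiring R] {n : ℕ}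
    {p : MvPolynomial (Fin n) R}
    (h : ∀ (i : ℕ) (hi : i + 1 < n),
      rename (Equiv.swap ⟨i, Nat.lt_of_succ_lt hi⟩ ⟨i + 1, hi⟩) p = p) :
    p.IsSymmetric := by
  cases n with
  | zero => intro e; rw [Subsingleton.elim e 1]; exact rename_id_apply p
  | succ m =>
    intro e
    have he : e ∈ Submonoid.closure (Set.range fun i : Fin m ↦ Equiv.swap i.castSucc i.succ) := by
      rw [Equiv.Perm.mclosure_swap_castSucc_succ]; trivial
    induction he using Submonoid.closure_induction with
    | mem _ hσ => obtain ⟨i, rfl⟩ := hσ; exact h i (Nat.succ_lt_succ i.isLt)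
    | one => exact rename_id_apply p
    | mul x y _ _ ihx ihy =>
      rw [Equiv.Perm.coe_mul, ← rename_rename, ihy, ihx]

variable {σ R : Type*} [DecidableEq σ] [CommRing R]

theorem rename_swap_sum_eq_sum {a b : σ} (f : (σ → ℕ) → MvPolynomial σ R)
    {S : Finset (σ → ℕ)} (hS : ∀ μ ∈ S, μ ∘ Equiv.swap a b ∈ S)
    (hfix : ∀ μ, μ a = μ b → rename (Equiv.swap a b) (f μ) = f μ)
    (hpair : ∀ μ, rename (Equiv.swap a b) (f μ + f (μ ∘ Equiv.swap a b))
      = f μ + f (μ ∘ Equiv.swap a b)) :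
    rename (Equiv.swap a b) (∑ μ ∈ S, f μ) = ∑ μ ∈ S, f μ := by
  rw [map_sum, ← sub_eq_zero, ← Finset.sum_sub_distrib]
  refine Finset.sum_involution (fun μ _ ↦ μ ∘ Equiv.swap a b) ?_ ?_ hS ?_
  · intro μ _
    have hμ := hpair μ
    rw [map_add] at hμ
    linear_combination hμ
  · intro μ _ hne hμ
    have hab : μ a = μ b := by simpa using congrFun hμ.symm a
    exact hne (sub_eq_zero.mpr (hfix μ hab))
  · intro μ _
    ext x
    simp

variable [IsDomain R] (t : R) {a b : σ}

theorem rename_swap_add_of_lt (hab : a ≠ b) (f : (σ → ℕ) → MvPolynomial σ R)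
    (hrel : ∀ μ, μ b < μ a →
      (X a - X b) * f (μ ∘ Equiv.swap a b)
        = C t * (X a - X b) * f μ
          - (C t * X a - X b) * (f μ - rename (Equiv.swap a b) (f μ)))
    {μ : σ → ℕ} (hμ : μ b < μ a) :
    rename (Equiv.swap a b) (f μ + f (μ ∘ Equiv.swap a b)) = f μ + f (μ ∘ Equiv.swap a b) := by
  have hX : (X a - X b : MvPolynomial σ R) ≠ 0 := sub_ne_zero.mpr ((X_injective).ne hab)
  have hss : ⇑(Equiv.swap a b) ∘ ⇑(Equiv.swap a b) = id :=
    _root_.funext (Equiv.swap_apply_self a b)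
  have hrel' := congrArg (rename (Equiv.swap a b)) (hrel μ hμ)
  simp only [map_mul, map_sub, rename_C, rename_X, rename_rename, Equiv.swap_apply_left,
    Equiv.swap_apply_right, hss, rename_id_apply] at hrel'
  apply mul_left_cancel₀ hX
  rw [map_add]
  linear_combination -(hrel μ hμ) - hrel'

theorem rename_swap_add (hab : a ≠ b) (f : (σ → ℕ) → MvPolynomial σ R)
    (hfix : ∀ μ, μ a = μ b → rename (Equiv.swap a b) (f μ) = f μ)
    (hrel : ∀ μ, μ b < μ a →
      (X a - X b) * f (μ ∘ Equiv.swap a b)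
        = C t * (X a - X b) * f μ
          - (C t * X a - X b) * (f μ - rename (Equiv.swap a b) (f μ)))
    (μ : σ → ℕ) :
    rename (Equiv.swap a b) (f μ + f (μ ∘ Equiv.swap a b)) = f μ + f (μ ∘ Equiv.swap a b) := by
  rcases lt_trichotomy (μ a) (μ b) with hlt | heq | hgt
  · have hswap : (μ ∘ Equiv.swap a b) ∘ Equiv.swap a b = μ := by ext x; simp
    have := rename_swap_add_of_lt t hab f hrel (μ := μ ∘ Equiv.swap a b) (by simpa using hlt)
    rwa [hswap, add_comm] at this
  · have hμ : μ ∘ Equiv.swap a b = μ := by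
      rw [Equiv.comp_swap_eq_update, heq, Function.update_eq_self, ← heq, Function.update_eq_self]
    rw [hμ, map_add, hfix μ heq]
  · exact rename_swap_add_of_lt t hab f hrel hgt

end MvPolynomial

theorem sum_over_rearrangements_is_symmetric
    {F : Type*} [Field F] (n : ℕ) (t : F)
    (f : (Fin n → ℕ) → MvPolynomial (Fin n) F)
    (h1 : ∀ (lam : Fin n → ℕ) (i : ℕ) (hi : i + 1 < n),
      lam ⟨i, Nat.lt_of_succ_lt hi⟩ = lam ⟨i + 1, hi⟩ →
      rename (Equiv.swap ⟨i, Nat.lt_of_succ_lt hi⟩ ⟨i + 1, hi⟩) (f lam) = f lam)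
    (h2 : ∀ (lam : Fin n → ℕ) (i : ℕ) (hi : i + 1 < n),
      lam ⟨i + 1, hi⟩ < lam ⟨i, Nat.lt_of_succ_lt hi⟩ →
      (X ⟨i, Nat.lt_of_succ_lt hi⟩ - X ⟨i + 1, hi⟩)
          * f (lam ∘ Equiv.swap ⟨i, Nat.lt_of_succ_lt hi⟩ ⟨i + 1, hi⟩)
      = C t * (X ⟨i, Nat.lt_of_succ_lt hi⟩ - X ⟨i + 1, hi⟩) * f lam
        - (C t * X ⟨i, Nat.lt_of_succ_lt hi⟩ - X ⟨i + 1, hi⟩)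
          * (f lam - rename (Equiv.swap ⟨i, Nat.lt_of_succ_lt hi⟩ ⟨i + 1, hi⟩) (f lam))) :
    ∀ (lam : Fin n → ℕ) (π : Equiv.Perm (Fin n)),
      rename π
        (∑ mu ∈ Finset.image (fun σ : Equiv.Perm (Fin n) => lam ∘ σ) Finset.univ, f mu)
      = ∑ mu ∈ Finset.image (fun σ : Equiv.Perm (Fin n) => lam ∘ σ) Finset.univ, f mu := by
  intro lam π
  refine isSymmetric_of_forall_rename_swap_adjacent (fun i hi ↦ ?_) π
  have hne : (⟨i, Nat.lt_of_succ_lt hi⟩ : Fin n) ≠ ⟨i + 1, hi⟩ := by simp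
  refine rename_swap_sum_eq_sum f ?_ (h1 · i hi) (rename_swap_add t hne f (h1 · i hi) (h2 · i hi))
  simp only [Finset.mem_image, Finset.mem_univ, true_and, forall_exists_index]
  rintro _ τ rfl
  exact ⟨τ * Equiv.swap _ _, rfl⟩
end

section
/- Let F be a field, t ∈ F, R a unital associative F-algebra, τ : R → F an F-linear map, S ∈ R, and A_0,…,A_r : F → R functions satisfying the denominator-cleared exchange relations: for all x, y ∈ F, (E0) A_i(x)·A_i(y) = A_i(y)·A_i(x) for all 0 ≤ i ≤ r, and (E1) t·(x−y)·A_j(x)·A_i(y) − (t·x−y)·(A_j(x)·A_i(y) − A_j(y)·A_i(x)) = (x−y)·A_i(x)·A_j(y) for all 0 ≤ i < j ≤ r. For a composition λ ∈ {0,…,r}ⁿ define f_λ(x_1,…,x_n) = τ(A_{λ_1}(x_1)···A_{λ_n}(x_n)·S), and set G_λ(x_1,…,x_n) = Σ_μ f_μ(x_1,…,x_n), where the sum runs over the set of all distinct rearrangements μ of λ. Then G_λ is symmetric: G_λ(x_{π(1)},…,x_{π(n)}) = G_λ(x_1,…,x_n) for every permutation π of {1,…,n} and all x_1,…,x_n ∈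 F. -/
/-!
STATEMENT 12: for the matrix product functions
`f_λ(x_1,…,x_n) = τ(A_{λ_1}(x_1)⋯A_{λ_n}(x_n)·S)` built from operators satisfying the
(denominator-cleared) exchange relations, the sum `G_λ = Σ_μ f_μ` over all distinct
rearrangements `μ` of `λ` is a symmetric function of `x_1,…,x_n`.
-/

open scoped BigOperators

lemma ofFnSplit {α : Type*} {m a : ℕ} (ha : a + 1 < m) (c : Fin m → α) :
    List.ofFn c = ((List.ofFn c).take a)
      ++ c ⟨a, by omega⟩ :: c ⟨a + 1, ha⟩ :: ((List.ofFn c).drop (a + 2)) := by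
  have h1 : a < (List.ofFn c).length := by simp; omega
  have h2 : a + 1 < (List.ofFn c).length := by simp; omega
  conv_lhs => rw [← List.take_append_drop a (List.ofFn c)]
  rw [List.drop_eq_getElem_cons h1, List.drop_eq_getElem_cons h2]
  simp [List.getElem_ofFn]

lemma takeEq {α : Type*} {m a : ℕ} (c d : Fin m → α)
    (h : ∀ p : Fin m, p.val < a → c p = d p) :
    (List.ofFn c).take a = (List.ofFn d).take a := by
  apply List.ext_getElem
  · simp
  · intro i hi1 hi2
    simp only [List.getElem_take, List.getElem_ofFn]
    have := hi1
    simp only [List.length_take, List.length_ofFn, lt_min_iff] at this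
    exact h _ this.1

lemma dropEq {α : Type*} {m a : ℕ} (c d : Fin m → α)
    (h : ∀ p : Fin m, a ≤ p.val → c p = d p) :
    (List.ofFn c).drop a = (List.ofFn d).drop a := by
  apply List.ext_getElem
  · simp
  · intro i hi1 hi2
    simp only [List.getElem_drop, List.getElem_ofFn]
    exact h _ (Nat.le_add_right a i)

lemma prodOneEq {R : Type*} [Ring R] {m a : ℕ} (ha : a + 1 < m) (c d : Fin m → R)
    (hout : ∀ p : Fin m, p.val ≠ a → p.val ≠ a + 1 → c p = d p)
    (hpair : c ⟨a, by omega⟩ * c ⟨a + 1, ha⟩ = d ⟨a, by omega⟩ * d ⟨a + 1, ha⟩) :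
    (List.ofFn c).prod = (List.ofFn d).prod := by
  rw [ofFnSplit ha c, ofFnSplit ha d,
    takeEq c d (fun p hp => hout p (by omega) (by omega)),
    dropEq (a := a + 2) c d (fun p hp => hout p (by omega) (by omega))]
  simp only [List.prod_append, List.prod_cons]
  congr 1
  rw [← mul_assoc, ← mul_assoc, hpair]

lemma prodTwoEq {R : Type*} [Ring R] {m a : ℕ} (ha : a + 1 < m)
    (c1 c2 d1 d2 : Fin m → R)
    (hout : ∀ p : Fin m, p.val ≠ a → p.val ≠ a + 1 →
      c1 p = c2 p ∧ c1 p = d1 p ∧ c1 p = d2 p)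
    (hpair : c1 ⟨a, by omega⟩ * c1 ⟨a + 1, ha⟩ + c2 ⟨a, by omega⟩ * c2 ⟨a + 1, ha⟩
      = d1 ⟨a, by omega⟩ * d1 ⟨a + 1, ha⟩ + d2 ⟨a, by omega⟩ * d2 ⟨a + 1, ha⟩) :
    (List.ofFn c1).prod + (List.ofFn c2).prod
      = (List.ofFn d1).prod + (List.ofFn d2).prod := by
  rw [ofFnSplit ha c1, ofFnSplit ha c2, ofFnSplit ha d1, ofFnSplit ha d2,
    takeEq c2 c1 (fun p hp => ((hout p (by omega) (by omega)).1).symm),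
    takeEq d1 c1 (fun p hp => ((hout p (by omega) (by omega)).2.1).symm),
    takeEq d2 c1 (fun p hp => ((hout p (by omega) (by omega)).2.2).symm),
    dropEq (a := a + 2) c2 c1 (fun p hp => ((hout p (by omega) (by omega)).1).symm),
    dropEq (a := a + 2) d1 c1 (fun p hp => ((hout p (by omega) (by omega)).2.1).symm),
    dropEq (a := a + 2) d2 c1 (fun p hp => ((hout p (by omega) (by omega)).2.2).symm)]
  simp only [List.prod_append, List.prod_cons]
  set T := ((List.ofFn c1).take a).prod
  set D := ((List.ofFn c1).drop (a + 2)).prod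
  calc T * (c1 ⟨a, by omega⟩ * (c1 ⟨a + 1, ha⟩ * D))
        + T * (c2 ⟨a, by omega⟩ * (c2 ⟨a + 1, ha⟩ * D))
      = T * ((c1 ⟨a, by omega⟩ * c1 ⟨a + 1, ha⟩
          + c2 ⟨a, by omega⟩ * c2 ⟨a + 1, ha⟩) * D) := by noncomm_ring
    _ = T * ((d1 ⟨a, by omega⟩ * d1 ⟨a + 1, ha⟩
          + d2 ⟨a, by omega⟩ * d2 ⟨a + 1, ha⟩) * D) := by rw [hpair]
    _ = T * (d1 ⟨a, by omega⟩ * (d1 ⟨a + 1, ha⟩ * D))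
        + T * (d2 ⟨a, by omega⟩ * (d2 ⟨a + 1, ha⟩ * D)) := by noncomm_ring

lemma keyLemma {F R : Type*} [Field F] [Ring R] [Algebra F R]
    {r : ℕ} (t : F) (A : Fin (r + 1) → F → R)
    (hE0 : ∀ (x y : F) (i : Fin (r + 1)), A i x * A i y = A i y * A i x)
    (hE1 : ∀ (x y : F) (i j : Fin (r + 1)), i < j →
      (t * (x - y)) • (A j x * A i y)
        - (t * x - y) • (A j x * A i y - A j y * A i x)
      = (x - y) • (A i x * A j y))
    (i j : Fin (r + 1)) (x y : F) :
    A i x * A j y + A j x * A i y = A i y * A j x + A j y * A i x := by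
  have core : ∀ i j : Fin (r+1), i < j → ∀ x y : F,
      A i x * A j y + A j x * A i y = A i y * A j x + A j y * A i x := by
    intro i j hij x y
    rcases eq_or_ne x y with rfl | hxy
    · rfl
    · have h1 := hE1 x y i j hij
      have h2 := hE1 y x i j hij
      have hz : (x - y) • (A i x * A j y + A j x * A i y
          - (A i y * A j x + A j y * A i x)) = 0 := by
        linear_combination (norm := module) -h1 - h2
      have hxy' : x - y ≠ 0 := sub_ne_zero.mpr hxy
      have := congrArg (fun z => (x - y)⁻¹ • z) hz
      simp only [smul_smul, inv_mul_cancel₀ hxy', one_smul, smul_zero] at this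
      exact sub_eq_zero.mp this
  rcases lt_trichotomy i j with h | rfl | h
  · exact core i j h x y
  · rw [hE0 x y i]
  · have := core j i h x y
    rw [add_comm (A i x * A j y), add_comm (A i y * A j x)]
    exact this

lemma adjSwap {F R : Type*} [Field F] [Ring R] [Algebra F R] {r n : ℕ}
    (τ : R →ₗ[F] F) (S : R) (A : Fin (r + 1) → F → R)
    (hE0 : ∀ (x y : F) (i : Fin (r + 1)), A i x * A i y = A i y * A i x)
    (hK : ∀ (i j : Fin (r + 1)) (x y : F),
      A i x * A j y + A j x * A i y = A i y * A j x + A j y * A i x)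
    (D : Finset (Fin n → Fin (r + 1))) (u v : Fin n) (huv : u.val + 1 = v.val)
    (hD : ∀ μ ∈ D, μ ∘ (Equiv.swap u v) ∈ D) (xs : Fin n → F) :
    ∑ μ ∈ D, fMP τ S A μ (xs ∘ (Equiv.swap u v)) = ∑ μ ∈ D, fMP τ S A μ xs := by
  have hune : u ≠ v := by
    intro h
    exact absurd (congrArg Fin.val h) (by omega)
  have ha : u.val + 1 < n := by omega
  have hu' : (⟨u.val, by omega⟩ : Fin n) = u := rfl
  have hv' : (⟨u.val + 1, ha⟩ : Fin n) = v := Fin.ext huv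
  have hsu : Equiv.swap u v u = v := Equiv.swap_apply_left u v
  have hsv : Equiv.swap u v v = u := Equiv.swap_apply_right u v
  have hsp : ∀ p : Fin n, p.val ≠ u.val → p.val ≠ u.val + 1 → Equiv.swap u v p = p := by
    intro p h1 h2
    apply Equiv.swap_apply_of_ne_of_ne
    · exact fun h => h1 (congrArg Fin.val h)
    · exact fun h => h2 (by rw [congrArg Fin.val h]; omega)
  rw [← sub_eq_zero, ← Finset.sum_sub_distrib]
  refine Finset.sum_involution (fun μ _ => μ ∘ (Equiv.swap u v)) ?_ ?_
    (fun μ hμ => hD μ hμ) ?_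
  · -- pair sum vanishes
    intro μ hμ
    have key : fMP τ S A μ (xs ∘ (Equiv.swap u v)) + fMP τ S A (μ ∘ (Equiv.swap u v)) (xs ∘ (Equiv.swap u v))
        = fMP τ S A μ xs + fMP τ S A (μ ∘ (Equiv.swap u v)) xs := by
      simp only [fMP, ← map_add, ← add_mul]
      refine congrArg (fun z => τ (z * S)) ?_
      refine prodTwoEq ha _ _ _ _ ?_ ?_
      · intro p h1 h2
        simp [hsp p h1 h2]
      · simp only [Function.comp_apply, hu', hv', hsu, hsv]
        exact (hK (μ u) (μ v) (xs u) (xs v)).symm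
    linear_combination key
  · -- fixed points contribute zero
    intro μ hμ hne heq
    apply hne
    rw [sub_eq_zero]
    have hmu : μ v = μ u := by
      have := congrFun heq u
      simpa only [Function.comp_apply, hsu] using this
    simp only [fMP]
    refine congrArg (fun z => τ (z * S)) ?_
    refine prodOneEq ha _ _ ?_ ?_
    · intro p h1 h2
      simp only [Function.comp_apply, hsp p h1 h2]
    · simp only [Function.comp_apply, hu', hv', hsu, hsv, hmu]
      exact hE0 (xs v) (xs u) (μ u)
  · intro μ hμ
    funext p
    simp [Equiv.swap_apply_self]

theorem sum_over_rearrangements_of_matrix_product_is_symmetric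
    {F R : Type*} [Field F] [Ring R] [Algebra F R]
    (r n : ℕ) (t : F)
    (τ : R →ₗ[F] F) (S : R) (A : Fin (r + 1) → F → R)
    (hE0 : ∀ (x y : F) (i : Fin (r + 1)), A i x * A i y = A i y * A i x)
    (hE1 : ∀ (x y : F) (i j : Fin (r + 1)), i < j →
      (t * (x - y)) • (A j x * A i y)
        - (t * x - y) • (A j x * A i y - A j y * A i x)
      = (x - y) • (A i x * A j y)) :
    ∀ (lam : Fin n → Fin (r + 1)) (π : Equiv.Perm (Fin n)) (xs : Fin n → F),
      ∑ mu ∈ Finset.image (fun σ : Equiv.Perm (Fin n) => lam ∘ σ) Finset.univ,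
          fMP τ S A mu (xs ∘ π)
      = ∑ mu ∈ Finset.image (fun σ : Equiv.Perm (Fin n) => lam ∘ σ) Finset.univ,
          fMP τ S A mu xs := by
  intro lam π xs
  have hK := keyLemma t A hE0 hE1
  set D := Finset.image (fun σ : Equiv.Perm (Fin n) => lam ∘ σ) Finset.univ with hDdef
  have hD : ∀ (u v : Fin n), ∀ μ ∈ D, μ ∘ (Equiv.swap u v) ∈ D := by
    intro u v μ hμ
    obtain ⟨σ, -, rfl⟩ := Finset.mem_image.mp hμ
    exact Finset.mem_image.mpr ⟨σ * Equiv.swap u v, Finset.mem_univ _, rfl⟩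
  cases n with
  | zero =>
    have : xs ∘ ⇑π = xs := funext fun p => p.elim0
    rw [this]
  | succ m =>
    have hmem : π ∈ Submonoid.closure
        (Set.range fun i : Fin m => Equiv.swap i.castSucc i.succ) := by
      rw [Equiv.Perm.mclosure_swap_castSucc_succ]
      exact Submonoid.mem_top π
    induction hmem using Submonoid.closure_induction generalizing xs with
    | mem σ hσ =>
      obtain ⟨i, rfl⟩ := hσ
      exact adjSwap τ S A hE0 hK D i.castSucc i.succ (by simp) (hD _ _) xs
    | one =>
      have : xs ∘ ⇑(1 : Equiv.Perm (Fin (m + 1))) = xs := rfl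
      rw [this]
    | mul a b ha hb iha ihb =>
      have : xs ∘ ⇑(a * b) = (xs ∘ ⇑a) ∘ ⇑b := rfl
      rw [this, ihb, iha]
end

section
/- Let F be a field, t ∈ F, R a unital associative F-algebra, and A_0,…,A_r : F → R functions satisfying the denominator-cleared exchange relations: for all x, y ∈ F, (E0) A_i(x)·A_i(y) = A_i(y)·A_i(x) for all 0 ≤ i ≤ r, and (E1) t·(x−y)·A_j(x)·A_i(y) − (t·x−y)·(A_j(x)·A_i(y) − A_j(y)·A_i(x)) = (x−y)·A_i(x)·A_j(y) for all 0 ≤ i < j ≤ r. For y_0,…,y_r ∈ F define A(y_0,…,y_r; x) = Σ_{i=0}^{r} y_i·A_i(x). Then for all x, x' ∈ F: A(y_0,…,y_r; x)·A(y_0,…,y_r; x') = A(y_0,…,y_r; x')·A(y_0,…,y_r; x). -/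
/-!
STATEMENT 13: the generating operators `A(y_0,…,y_r;x) = Σ_i y_i·A_i(x)` built from
operators satisfying the (denominator-cleared) exchange relations commute for different
values of the spectral parameter.
-/

open scoped BigOperators

theorem generating_operators_commute
    {F R : Type*} [Field F] [Ring R] [Algebra F R]
    (r : ℕ) (t : F) (A : Fin (r + 1) → F → R)
    (hE0 : ∀ (x y : F) (i : Fin (r + 1)), A i x * A i y = A i y * A i x)
    (hE1 : ∀ (x y : F) (i j : Fin (r + 1)), i < j →
      (t * (x - y)) • (A j x * A i y)
        - (t * x - y) • (A j x * A i y - A j y * A i x)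
      = (x - y) • (A i x * A j y))
    (ys : Fin (r + 1) → F) :
    ∀ x x' : F,
      (∑ i : Fin (r + 1), ys i • A i x) * (∑ i : Fin (r + 1), ys i • A i x')
      = (∑ i : Fin (r + 1), ys i • A i x') * (∑ i : Fin (r + 1), ys i • A i x) := by
  intro x x'
  by_cases hx : x = x'
  · subst hx; rfl
  have hne : x - x' ≠ 0 := sub_ne_zero.2 hx
  have key : ∀ i j : Fin (r + 1),
      A i x * A j x' + A j x * A i x' = A i x' * A j x + A j x' * A i x := by
    have main : ∀ i j : Fin (r + 1), i < j →
        A i x * A j x' + A j x * A i x' = A i x' * A j x + A j x' * A i x := by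
      intro i j hij
      have h1 := hE1 x x' i j hij
      have h2 := hE1 x' x i j hij
      have h3 : (x - x') • (A i x * A j x' + A j x * A i x')
          = (x - x') • (A i x' * A j x + A j x' * A i x) := by
        linear_combination (norm := module) -h1 - h2
      have h4 := congrArg (fun z => (x - x')⁻¹ • z) h3
      simpa [inv_smul_smul₀ hne] using h4
    intro i j
    rcases lt_trichotomy i j with h | h | h
    · exact main i j h
    · subst h; rw [hE0 x x' i]
    · linear_combination (norm := module) main j i h
  -- the pairwise summand difference
  set c : Fin (r + 1) × Fin (r + 1) → R := fun p =>
    (ys p.1 • A p.1 x) * (ys p.2 • A p.2 x')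
      - (ys p.1 • A p.1 x') * (ys p.2 • A p.2 x) with hc
  have hswap : ∀ p : Fin (r + 1) × Fin (r + 1), c p + c p.swap = 0 := by
    intro ⟨i, j⟩
    simp only [hc, Prod.swap, smul_mul_assoc, mul_smul_comm, smul_smul]
    linear_combination (norm := module) (ys i * ys j) • key i j
  have hdiag : ∀ i : Fin (r + 1), c (i, i) = 0 := by
    intro i
    simp only [hc]
    rw [smul_mul_assoc, mul_smul_comm, smul_smul, hE0 x x' i,
      smul_mul_assoc, mul_smul_comm, smul_smul]
    ring_nf
    abel
  have hsum : ∑ p ∈ (Finset.univ ×ˢ Finset.univ :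
      Finset (Fin (r + 1) × Fin (r + 1))), c p = 0 := by
    refine Finset.sum_involution (fun p _ => p.swap) (fun p _ => hswap p)
      (fun p _ hcp => ?_) (fun p _ => Finset.mem_product.2 ⟨Finset.mem_univ _, Finset.mem_univ _⟩)
      (fun p _ => Prod.swap_swap p)
    intro hps
    apply hcp
    obtain ⟨i, j⟩ := p
    have hij : j = i := by
      have := congrArg Prod.fst hps
      simpa using this
    subst hij
    exact hdiag j
  rw [Finset.sum_mul_sum, Finset.sum_mul_sum, ← sub_eq_zero]
  rw [← Finset.sum_sub_distrib]
  simp only [← Finset.sum_sub_distrib]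
  rw [← Finset.sum_product']
  exact hsum
end

section
/- Fix real numbers 0 < t < 1 and q > 0, integers r ≥ 2 and n ≥ 1, a composition λ ∈ {0,…,r}ⁿ and a composition μ ∈ {0,…,r−1}ⁿ. Let λ* be defined by λ*_j = max(λ_j − 1, 0), and suppose μ is NOT a rearrangement of λ* (equivalently, m_{i−1}(μ) ≠ m_i(λ) for some 2 ≤ i ≤ r, where m_i(ν) = #{j : ν_j = i}). Then for all real x_1,…,x_n and every multi-index m ∈ ℕ^{r−1}, the coefficient of e_m in L̃_{λ_1,μ_1}(x_1)·L̃_{λ_2,μ_2}(x_2)···L̃_{λ_n,μ_n}(x_n)·s·(e_m) is zero; consequently the transition matrix element T_{λ,μ}(x_1,…,x_n) = Σ_{m∈ℕ^{r−1}} ⟨e_m, L̃_{λ_1,μ_1}(x_1)···L̃_{λ_n,μ_n}(x_n)·s·e_m⟩ equals 0. -/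
/-!
STATEMENT 14 (Proposition 5.2): if the composition `μ` is not a rearrangement of `λ*`
(where `λ*_j = max(λ_j − 1, 0)`), then every diagonal matrix element of
`L̃_{λ_1,μ_1}(x_1)⋯L̃_{λ_n,μ_n}(x_n)·s` on the multi-family Fock space vanishes, and hence
the transition matrix element `T_{λ,μ}(x_1,…,x_n)` equals `0`.
-/

open scoped BigOperators

noncomputable section

/-- The multi-family Fock space: finitely supported functions on `ℕ^d`
(for families `2,…,r` one takes `d = r − 1`; family `p` corresponds to coordinate `p − 2`). -/
abbrev Fock (d : ℕ) : Type := (Fin d → ℕ) →₀ ℝ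

/-- The annihilation operator of family index `p`: `a_p·e_m = √(1−t^{m_p})·e_{m−δ_p}`
(automatically zero when `m_p = 0` since `√(1−t⁰) = 0`). -/
def aOp (t : ℝ) (d : ℕ) (p : Fin d) : Module.End ℝ (Fock d) :=
  Finsupp.lsum ℝ fun m =>
    Real.sqrt (1 - t ^ (m p)) • Finsupp.lsingle (Function.update m p (m p - 1))

/-- The creation operator of family index `p`: `a†_p·e_m = √(1−t^{m_p+1})·e_{m+δ_p}`. -/
def adOp (t : ℝ) (d : ℕ) (p : Fin d) : Module.End ℝ (Fock d) :=
  Finsupp.lsum ℝ fun m =>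
    Real.sqrt (1 - t ^ (m p + 1)) • Finsupp.lsingle (Function.update m p (m p + 1))

/-- The number operator of family index `p`: `k_p·e_m = t^{m_p}·e_m`. -/
def kOp (t : ℝ) (d : ℕ) (p : Fin d) : Module.End ℝ (Fock d) :=
  Finsupp.lsum ℝ fun m => (t ^ (m p) : ℝ) • Finsupp.lsingle m

/-- The twist operator: `s·e_m = (Π_{p=2}^{r} q^{(p−1)·m_p})·e_m`
(family `p` corresponds to coordinate `p − 2`, so the exponent is `(idx+1)·m_idx`). -/
def sOp (q : ℝ) (d : ℕ) : Module.End ℝ (Fock d) :=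
  Finsupp.lsum ℝ fun m =>
    (∏ p : Fin d, q ^ ((p.val + 1) * m p)) • Finsupp.lsingle m

/-- The oscillator `a_i` of family `i` (`2 ≤ i ≤ r`), acting on `Fock (r−1)`. -/
def aFam (t : ℝ) (r : ℕ) (i : ℕ) : Module.End ℝ (Fock (r - 1)) :=
  if h : 2 ≤ i ∧ i ≤ r then aOp t (r - 1) ⟨i - 2, by omega⟩ else 0

/-- The oscillator `a†_i` of family `i` (`2 ≤ i ≤ r`), acting on `Fock (r−1)`. -/
def adFam (t : ℝ) (r : ℕ) (i : ℕ) : Module.End ℝ (Fock (r - 1)) :=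
  if h : 2 ≤ i ∧ i ≤ r then adOp t (r - 1) ⟨i - 2, by omega⟩ else 0

/-- The oscillator `k_i` of family `i` (`2 ≤ i ≤ r`), acting on `Fock (r−1)`. -/
def kFam (t : ℝ) (r : ℕ) (i : ℕ) : Module.End ℝ (Fock (r - 1)) :=
  if h : 2 ≤ i ∧ i ≤ r then kOp t (r - 1) ⟨i - 2, by omega⟩ else 0

/-- The ordered product `k_{i+1}·k_{i+2}⋯k_r`. -/
def kprodFam (t : ℝ) (r : ℕ) (i : ℕ) : Module.End ℝ (Fock (r - 1)) :=
  ((List.range' (i + 1) (r - i)).map (kFam t r)).prod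

/-- The entry `L̃_{ij}(x)` of the reduced `(r+1) × r` matrix of Fock-space operators:
`L̃_{00} = 1`; `L̃_{0j} = a_{j+1}` (`1 ≤ j ≤ r−1`); `L̃_{10} = x·k_2⋯k_r`;
`L̃_{i0} = x·a†_i·k_{i+1}⋯k_r` (`2 ≤ i ≤ r`); `L̃_{i,i−1} = x·k_{i+1}⋯k_r` (`2 ≤ i ≤ r`);
`L̃_{ij} = x·a_{j+1}·a†_i·k_{i+1}⋯k_r` for `1 ≤ j+1 < i ≤ r`; `L̃_{ij} = 0` otherwise. -/
def LtilOp (t : ℝ) (r : ℕ) (x : ℝ) (i j : ℕ) : Module.End ℝ (Fock (r - 1)) :=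
  if i = 0 then (if j = 0 then 1 else aFam t r (j + 1))
  else if j = 0 then
    (if i = 1 then x • kprodFam t r 1 else x • (adFam t r i * kprodFam t r i))
  else if i = j + 1 then x • kprodFam t r i
  else if j + 1 < i then x • (aFam t r (j + 1) * adFam t r i * kprodFam t r i)
  else 0

/-!
Each entry `L̃_{ij}`, and the twist `s`, sends a basis vector `e_m` to a multiple of a single
basis vector, and changes the occupation number of family `f` by `[i = f] - [j + 1 = f]`:
`a†_f` raises it, `a_f` lowers it, `k` and `s` keep it. So the product shifts coordinate `f` by
`#{p | λ_p = f} - #{p | μ_p = f - 1}`, and its diagonal matrix elements vanish unless these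
counts agree for all `2 ≤ f ≤ r`. The value multisets of `μ` and `λ*` have the same size, so
agreement at all nonzero values forces them to be equal, i.e. `μ` is a rearrangement of `λ*`.
-/

theorem Multiset.eq_of_card_eq_of_forall_ne_count_eq {α : Type*} [DecidableEq α]
    {s t : Multiset α} (a : α) (hcard : Multiset.card s = Multiset.card t)
    (h : ∀ v ≠ a, s.count v = t.count v) : s = t := by
  have hcard_split (u : Multiset α) : card u = u.count a + card (u.filter (· ≠ a)) := by
    conv_lhs => rw [← Multiset.filter_add_not (· = a) u]
    rw [Multiset.filter_eq', Multiset.card_add, Multiset.card_replicate]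
  have hne : s.filter (· ≠ a) = t.filter (· ≠ a) := by
    ext v
    simp only [Multiset.count_filter]
    split_ifs with hv
    exacts [h v hv, rfl]
  ext v
  by_cases hv : v = a
  · subst hv
    have hs := hcard_split s
    rw [hne] at hs
    have ht := hcard_split t
    omega
  · exact h v hv

theorem exists_perm_apply_eq_of_map_univ_eq {ι α : Type*} [Fintype ι] [DecidableEq α]
    {f g : ι → α} (h : Finset.univ.val.map f = Finset.univ.val.map g) :
    ∃ σ : Equiv.Perm ι, ∀ i, g (σ i) = f i := by
  have hcard : ∀ v, Fintype.card {i // f i = v} = Fintype.card {i // g i = v} := by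
    intro v
    have := congrArg (Multiset.count v) h
    simp only [Multiset.count_map, Fintype.card_subtype, eq_comm] at this ⊢
    exact this
  exact ⟨Equiv.ofFiberEquiv fun v => Fintype.equivOfCardEq (hcard v), Equiv.ofFiberEquiv_map _⟩

theorem exists_count_succ_ne_of_not_exists_perm {ι : Type*} [Fintype ι] {N : ℕ} {f g : ι → ℕ}
    (hf : ∀ i, f i ≤ N) (hg : ∀ i, g i ≤ N) (h : ¬ ∃ σ : Equiv.Perm ι, ∀ i, f i = g (σ i)) :
    ∃ c : Fin N,
      (Finset.univ.val.map f).count (c.val + 1) ≠ (Finset.univ.val.map g).count (c.val + 1) := by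
  by_contra! hcount
  refine h (exists_perm_apply_eq_of_map_univ_eq
    (Multiset.eq_of_card_eq_of_forall_ne_count_eq 0 (by simp) fun v hv => ?_) |>.imp
      fun σ hσ i => (hσ i).symm)
  by_cases hvN : v ≤ N
  · simpa [Nat.sub_add_cancel (Nat.one_le_iff_ne_zero.mpr hv)] using hcount ⟨v - 1, by omega⟩
  · have hcount_zero (u : ι → ℕ) (hu : ∀ i, u i ≤ N) : (Finset.univ.val.map u).count v = 0 := by
      refine Multiset.count_eq_zero.mpr ?_
      simp only [Multiset.mem_map, not_exists, not_and]
      intro i _ hi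
      have := hu i
      omega
    rw [hcount_zero f hf, hcount_zero g hg]

namespace Fock

/-- The disjunct `a = 0` is needed because `aOp` writes `a_p e_m` with `m_p = 0` as `0 • e_m`
(the target index `m_p - 1` truncates to `m_p`). -/
def ShiftsCoord {d : ℕ} (c : Fin d) (k : ℤ) (T : Module.End ℝ (Fock d)) : Prop :=
  ∀ m : Fin d → ℕ, ∃ (a : ℝ) (m' : Fin d → ℕ),
    T (Finsupp.single m 1) = a • Finsupp.single m' 1 ∧ (a = 0 ∨ (m' c : ℤ) = m c + k)

section ShiftsCoord

variable {d : ℕ} {c : Fin d} {k l : ℤ} {T U : Module.End ℝ (Fock d)}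

theorem ShiftsCoord.congr (h : ShiftsCoord c k T) (hk : k = l) : ShiftsCoord c l T :=
  hk ▸ h

theorem shiftsCoord_one (c : Fin d) : ShiftsCoord c 0 (1 : Module.End ℝ (Fock d)) :=
  fun m => ⟨1, m, by simp, Or.inr (by simp)⟩

theorem shiftsCoord_zero (c : Fin d) (k : ℤ) : ShiftsCoord c k (0 : Module.End ℝ (Fock d)) :=
  fun m => ⟨0, m, by simp, Or.inl rfl⟩

theorem ShiftsCoord.smul (x : ℝ) (h : ShiftsCoord c k T) : ShiftsCoord c k (x • T) := by
  intro m
  obtain ⟨a, m', hT, ha⟩ := h m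
  refine ⟨x * a, m', by simp [hT, mul_smul], ha.imp_left fun ha => by simp [ha]⟩

theorem ShiftsCoord.mul (hT : ShiftsCoord c k T) (hU : ShiftsCoord c l U) :
    ShiftsCoord c (k + l) (T * U) := by
  intro m
  obtain ⟨a, m', hUm, ha⟩ := hU m
  obtain ⟨b, m'', hTm', hb⟩ := hT m'
  refine ⟨a * b, m'', ?_, ?_⟩
  · rw [Module.End.mul_apply, hUm, map_smul, hTm', smul_smul, mul_comm]
  · rcases ha with ha | ha
    · exact Or.inl (by simp [ha])
    rcases hb with hb | hb
    · exact Or.inl (by simp [hb])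
    exact Or.inr (by omega)

theorem ShiftsCoord.list_prod {l : List (Module.End ℝ (Fock d))}
    (h : ∀ T ∈ l, ShiftsCoord c 0 T) : ShiftsCoord c 0 l.prod := by
  induction l with
  | nil => exact shiftsCoord_one c
  | cons T l ih =>
    rw [List.prod_cons]
    exact ((h T List.mem_cons_self).mul (ih fun U hU => h U (List.mem_cons_of_mem T hU))).congr
      (by simp)

theorem ShiftsCoord.prod_ofFn {n : ℕ} {F : Fin n → Module.End ℝ (Fock d)} {k : Fin n → ℤ}
    (h : ∀ p, ShiftsCoord c (k p) (F p)) : ShiftsCoord c (∑ p, k p) (List.ofFn F).prod := by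
  induction n with
  | zero => exact shiftsCoord_one c
  | succ n ih =>
    rw [List.ofFn_succ, List.prod_cons, Fin.sum_univ_succ]
    exact (h 0).mul (ih fun p => h p.succ)

theorem ShiftsCoord.apply_single_self (h : ShiftsCoord c k T) (hk : k ≠ 0) (m : Fin d → ℕ) :
    T (Finsupp.single m 1) m = 0 := by
  obtain ⟨a, m', hTm, ha | hm'⟩ := h m
  · simp [hTm, ha]
  · have hne : m' ≠ m := by
      rintro rfl
      omega
    rw [hTm, Finsupp.smul_apply, Finsupp.single_eq_of_ne' hne, smul_zero]

theorem shiftsCoord_lsum_single (w : (Fin d → ℕ) → ℝ) (τ : (Fin d → ℕ) → Fin d → ℕ)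
    (h : ∀ m, w m = 0 ∨ (τ m c : ℤ) = m c + k) :
    ShiftsCoord c k (Finsupp.lsum ℝ fun m => w m • Finsupp.lsingle (τ m)) :=
  fun m => ⟨w m, τ m, by simp, h m⟩

end ShiftsCoord

section Operators

variable {d : ℕ} (t : ℝ) (c p : Fin d)

theorem shiftsCoord_aOp : ShiftsCoord c (if p = c then -1 else 0) (aOp t d p) := by
  refine shiftsCoord_lsum_single _ _ fun m => ?_
  by_cases hp : p = c
  · subst hp
    rcases Nat.eq_zero_or_pos (m p) with h0 | hpos
    · exact Or.inl (by simp [h0])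
    · exact Or.inr (by simp only [Function.update_self, if_true]; omega)
  · exact Or.inr (by simp [Function.update_of_ne (Ne.symm hp), hp])

theorem shiftsCoord_adOp : ShiftsCoord c (if p = c then 1 else 0) (adOp t d p) := by
  refine shiftsCoord_lsum_single _ _ fun m => Or.inr ?_
  by_cases hp : p = c
  · subst hp
    simp
  · simp [Function.update_of_ne (Ne.symm hp), hp]

theorem shiftsCoord_kOp : ShiftsCoord c 0 (kOp t d p) :=
  shiftsCoord_lsum_single _ (fun m => m) fun _ => Or.inr (add_zero _).symm

theorem shiftsCoord_sOp (q : ℝ) : ShiftsCoord c 0 (sOp q d) :=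
  shiftsCoord_lsum_single _ (fun m => m) fun _ => Or.inr (add_zero _).symm

end Operators

def familyIndicator {d : ℕ} (c : Fin d) (i : ℕ) : ℤ := if i = c.val + 2 then 1 else 0

theorem familyIndicator_of_lt_two {d : ℕ} (c : Fin d) {i : ℕ} (hi : i < 2) :
    familyIndicator c i = 0 :=
  if_neg (by omega)

section Families

variable {r : ℕ} (t : ℝ) (c : Fin (r - 1))

theorem shiftsCoord_family {k : ℤ} {F : Fin (r - 1) → Module.End ℝ (Fock (r - 1))}
    (hF : ∀ p, ShiftsCoord c (if p = c then k else 0) (F p)) (i : ℕ) :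
    ShiftsCoord c (k * familyIndicator c i)
      (if h : 2 ≤ i ∧ i ≤ r then F ⟨i - 2, by omega⟩ else 0) := by
  have hc := c.isLt
  split_ifs with h
  · refine (hF _).congr ?_
    simp only [familyIndicator, Fin.ext_iff]
    split_ifs <;> omega
  · exact (shiftsCoord_zero c 0).congr (by simp [familyIndicator]; omega)

theorem shiftsCoord_aFam (i : ℕ) : ShiftsCoord c (-familyIndicator c i) (aFam t r i) :=
  (shiftsCoord_family c (shiftsCoord_aOp t c) i).congr (by ring)

theorem shiftsCoord_adFam (i : ℕ) : ShiftsCoord c (familyIndicator c i) (adFam t r i) :=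
  (shiftsCoord_family c (shiftsCoord_adOp t c) i).congr (by ring)

theorem shiftsCoord_kprodFam (i : ℕ) : ShiftsCoord c 0 (kprodFam t r i) := by
  refine ShiftsCoord.list_prod fun T hT => ?_
  obtain ⟨j, -, rfl⟩ := List.mem_map.mp hT
  exact (shiftsCoord_family c (fun p => (shiftsCoord_kOp t c p).congr (ite_self 0).symm) j).congr
    (zero_mul _)

theorem shiftsCoord_LtilOp (x : ℝ) (i j : ℕ) :
    ShiftsCoord c (familyIndicator c i - familyIndicator c (j + 1)) (LtilOp t r x i j) := by
  unfold LtilOp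
  split_ifs with hi hj hj hi1 hij hlt
  · subst hi hj
    exact (shiftsCoord_one c).congr (by simp [familyIndicator_of_lt_two])
  · subst hi
    exact (shiftsCoord_aFam t c _).congr (by simp [familyIndicator_of_lt_two])
  · subst hi1 hj
    exact ((shiftsCoord_kprodFam t c 1).smul x).congr (by simp)
  · subst hj
    exact (((shiftsCoord_adFam t c i).mul (shiftsCoord_kprodFam t c i)).smul x).congr
      (by simp [familyIndicator_of_lt_two])
  · subst hij
    exact ((shiftsCoord_kprodFam t c _).smul x).congr (by simp)
  · exact ((((shiftsCoord_aFam t c _).mul (shiftsCoord_adFam t c i)).mul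
      (shiftsCoord_kprodFam t c i)).smul x).congr (by ring)
  · exact shiftsCoord_zero c _

end Families

theorem sum_familyIndicator_eq_count {ι : Type*} [Fintype ι] {d : ℕ} (c : Fin d) (f : ι → ℕ) :
    ∑ p, familyIndicator c (f p) = (Finset.univ.val.map fun p => f p - 1).count (c.val + 1) := by
  rw [Multiset.count_map]
  simp only [familyIndicator, Finset.sum_boole]
  norm_cast
  exact congrArg Finset.card (Finset.filter_congr fun p _ => by omega)

end Fock

open Fock in
theorem transition_matrix_element_vanishes_general
    (t q : ℝ)
    (r n : ℕ)
    (lam : Fin n → Fin (r + 1)) (mu : Fin n → Fin r)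
    (hmu : ¬ ∃ σ : Equiv.Perm (Fin n), ∀ j : Fin n, (mu j).val = (lam (σ j)).val - 1)
    (xs : Fin n → ℝ) :
    (∀ m : Fin (r - 1) → ℕ,
        (((List.ofFn fun p : Fin n => LtilOp t r (xs p) (lam p).val (mu p).val).prod
            * sOp q (r - 1)) (Finsupp.single m 1)) m = 0)
    ∧ (∑' m : Fin (r - 1) → ℕ,
        (((List.ofFn fun p : Fin n => LtilOp t r (xs p) (lam p).val (mu p).val).prod
            * sOp q (r - 1)) (Finsupp.single m 1)) m) = 0 := by
  obtain ⟨c, hc⟩ := exists_count_succ_ne_of_not_exists_perm (N := r - 1)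
    (g := fun p => (lam p).val - 1)
    (fun p => by have := (mu p).isLt; omega) (fun p => by have := (lam p).isLt; omega) hmu
  have hshift := ((ShiftsCoord.prod_ofFn fun p => shiftsCoord_LtilOp t c (xs p) (lam p).val
    (mu p).val).mul (shiftsCoord_sOp c q)).congr (add_zero _)
  have hk : ∑ p, (familyIndicator c (lam p).val - familyIndicator c ((mu p).val + 1)) ≠ 0 := by
    rw [Finset.sum_sub_distrib, sum_familyIndicator_eq_count, sum_familyIndicator_eq_count,
      sub_ne_zero]
    simpa using hc.symm
  have hdiag := hshift.apply_single_self hk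
  exact ⟨hdiag, (tsum_congr hdiag).trans tsum_zero⟩

theorem transition_matrix_element_vanishes
    (t q : ℝ) (ht0 : 0 < t) (ht1 : t < 1) (hq : 0 < q)
    (r n : ℕ) (hr : 2 ≤ r) (hn : 1 ≤ n)
    (lam : Fin n → Fin (r + 1)) (mu : Fin n → Fin r)
    (hmu : ¬ ∃ σ : Equiv.Perm (Fin n), ∀ j : Fin n, (mu j).val = (lam (σ j)).val - 1)
    (xs : Fin n → ℝ) :
    (∀ m : Fin (r - 1) → ℕ,
        (((List.ofFn fun p : Fin n => LtilOp t r (xs p) (lam p).val (mu p).val).prod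
            * sOp q (r - 1)) (Finsupp.single m 1)) m = 0)
    ∧ (∑' m : Fin (r - 1) → ℕ,
        (((List.ofFn fun p : Fin n => LtilOp t r (xs p) (lam p).val (mu p).val).prod
            * sOp q (r - 1)) (Finsupp.single m 1)) m) = 0 :=
  transition_matrix_element_vanishes_general t q r n lam mu hmu xs

end
end

section
/- Fix real numbers 0 < t < 1 and 0 < q < 1, integers r ≥ 2 and n ≥ 1, and a composition λ ∈ {0,…,r}ⁿ. Let λ* be defined by λ*_j = max(λ_j − 1, 0) and m_i(λ) = #{j : λ_j = i}. Then the series T_{λ,λ*}(1,…,1) = Σ_{m∈ℕ^{r−1}} ⟨e_m, L̃_{λ_1,λ*_1}(1)·L̃_{λ_2,λ*_2}(1)···L̃_{λ_n,λ*_n}(1)·s·e_m⟩ converges and equals Π_{i=1}^{r−1} (1 − q^{i}·t^{m_1(λ)+m_2(λ)+⋯+m_i(λ)})^{-1}. -/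
/-!
STATEMENT 15 (Proposition 5.3): the diagonal transition matrix element
`T_{λ,λ*}(1,…,1) = Tr[L̃_{λ_1,λ*_1}(1)⋯L̃_{λ_n,λ*_n}(1)·s]` converges and equals
`Π_{i=1}^{r−1} (1 − q^i·t^{m_1(λ)+⋯+m_i(λ)})^{-1}`.
-/

open scoped BigOperators

noncomputable section

/-!
At `x = 1` the diagonal entries `L̃_{v,v−1}(1)` are `1` (for `v = 0`) or `k_{v+1}⋯k_r`
(for `v ≥ 1`), so the whole product, and `s`, act diagonally on the basis `e_m`. The `m`-th
summand is therefore `∏_{i=1}^{r−1} (q^i t^{N_i})^{m_{i+1}}` with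
`N_i = #{j : 1 ≤ λ_j ≤ i} = m_1(λ) + ⋯ + m_i(λ)`, and the series is a product of `r − 1`
geometric series.
-/

open Finset

theorem Module.End.list_prod_map_apply_eq_smul {R M ι : Type*} [CommSemiring R]
    [AddCommMonoid M] [Module R M] {v : M} {g : ι → Module.End R M} {c : ι → R} :
    ∀ {l : List ι}, (∀ i ∈ l, g i v = c i • v) → (l.map g).prod v = (l.map c).prod • v
  | [], _ => by simp
  | i :: l, h => by
    rw [List.map_cons, List.prod_cons, Module.End.mul_apply,
      list_prod_map_apply_eq_smul fun j hj => h j (List.mem_cons_of_mem i hj), map_smul,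
      h i List.mem_cons_self, smul_smul, List.map_cons, List.prod_cons, mul_comm]

theorem hasSum_pi_prod {β : Type*} {d : ℕ} {f : Fin d → β → ℝ} {a : Fin d → ℝ}
    (hf : ∀ i, HasSum (f i) (a i)) (hnonneg : ∀ i b, 0 ≤ f i b) :
    HasSum (fun m : Fin d → β => ∏ i, f i (m i)) (∏ i, a i) := by
  induction d with
  | zero => simp
  | succ d ih =>
    have htail := ih (f := fun i => f i.succ) (a := fun i => a i.succ)
      (fun i => hf i.succ) (fun i => hnonneg i.succ)
    have hsummable := (hf 0).summable.mul_of_nonneg htail.summable (fun b => hnonneg 0 b)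
      fun m => prod_nonneg fun i _ => hnonneg _ _
    rw [Fin.prod_univ_succ, ← (Fin.consEquiv fun _ => β).hasSum_iff]
    exact ((hf 0).mul htail hsummable).congr_fun fun p => by
      simp [Fin.consEquiv, Fin.prod_univ_succ]

theorem hasSum_pi_prod_pow {d : ℕ} {x : Fin d → ℝ} (h0 : ∀ i, 0 ≤ x i) (h1 : ∀ i, x i < 1) :
    HasSum (fun m : Fin d → ℕ => ∏ i, x i ^ m i) (∏ i, (1 - x i)⁻¹) :=
  hasSum_pi_prod (fun i => hasSum_geometric_of_lt_one (h0 i) (h1 i))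
    fun i _ => pow_nonneg (h0 i) _

theorem Finset.prod_Icc_one_eq_prod_fin {M : Type*} [CommMonoid M] (f : ℕ → M) (n : ℕ) :
    ∏ i ∈ Icc 1 n, f i = ∏ i : Fin n, f (i + 1) := by
  rw [Fin.prod_univ_eq_prod_range (fun i => f (i + 1)), range_eq_Ico, prod_Ico_add',
    zero_add, Ico_add_one_right_eq_Icc]

section FockSpace

variable (t q : ℝ) (r : ℕ)

theorem kOp_single {d : ℕ} (p : Fin d) (m : Fin d → ℕ) :
    kOp t d p (Finsupp.single m 1) = t ^ m p • Finsupp.single m 1 := by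
  simp [kOp]

theorem sOp_single {d : ℕ} (m : Fin d → ℕ) :
    sOp q d (Finsupp.single m 1) =
      (∏ p : Fin d, q ^ ((p.val + 1) * m p)) • Finsupp.single m 1 := by
  simp [sOp]

theorem kFam_single (m : Fin (r - 1) → ℕ) {p : ℕ} (hp : 2 ≤ p) (hpr : p ≤ r) :
    kFam t r p (Finsupp.single m 1) = t ^ m ⟨p - 2, by omega⟩ • Finsupp.single m 1 := by
  rw [kFam, dif_pos ⟨hp, hpr⟩, kOp_single]

theorem kprodFam_single (m : Fin (r - 1) → ℕ) {v : ℕ} (hv : 1 ≤ v) :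
    kprodFam t r v (Finsupp.single m 1) =
      (∏ i : Fin (r - 1) with v ≤ i.val + 1, t ^ m i) • Finsupp.single m 1 := by
  let c : ℕ → ℝ := fun p => if h : 2 ≤ p ∧ p ≤ r then t ^ m ⟨p - 2, by omega⟩ else 1
  have hfactor : ∀ p ∈ List.range' (v + 1) (r - v),
      kFam t r p (Finsupp.single m 1) = c p • Finsupp.single m 1 := fun p hp => by
    rw [List.mem_range'_1] at hp
    rw [kFam_single t r m (by omega) (by omega)]
    simp only [c, dif_pos (show 2 ≤ p ∧ p ≤ r by omega)]
  rw [kprodFam, Module.End.list_prod_map_apply_eq_smul hfactor,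
    ← List.prod_toFinset _ List.nodup_range', List.toFinset_range'_1]
  congr 1
  symm
  refine prod_bij (fun i _ => (i : ℕ) + 2) ?_ ?_ ?_ ?_
  · intro i hi
    simp only [mem_filter, mem_univ, true_and] at hi
    simp only [mem_Ico]
    omega
  · intro i _ j _ h
    exact Fin.ext (by omega)
  · intro p hp
    simp only [mem_Ico] at hp
    refine ⟨⟨p - 2, by omega⟩, ?_, by dsimp only; omega⟩
    simp only [mem_filter, mem_univ, true_and]
    omega
  · intro i _
    simp [show (i : ℕ) + 2 ≤ r by omega]

theorem LtilOp_one_diag_single (m : Fin (r - 1) → ℕ) (v : ℕ) :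
    LtilOp t r 1 v (v - 1) (Finsupp.single m 1) =
      (∏ i : Fin (r - 1) with v ∈ Icc 1 (i.val + 1), t ^ m i) • Finsupp.single m 1 := by
  rcases Nat.eq_zero_or_pos v with rfl | hv
  -- the truncated `0 - 1 = 0` selects the entry `L̃₀₀ = 1`
  · rw [filter_false_of_mem fun i _ => by simp, prod_empty, one_smul, LtilOp, if_pos rfl,
      if_pos rfl, Module.End.one_apply]
  · have hdiag : LtilOp t r 1 v (v - 1) = kprodFam t r v := by
      obtain rfl | hv1 := eq_or_ne v 1
      · rw [LtilOp, if_neg one_ne_zero, if_pos rfl, if_pos rfl, one_smul]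
      · rw [LtilOp, if_neg (by omega), if_neg (by omega), if_pos (by omega), one_smul]
    rw [hdiag, kprodFam_single t r m hv]
    congr 2
    ext i
    simp only [mem_filter, mem_univ, true_and, mem_Icc]
    omega

theorem diagonal_transfer_single_apply (m : Fin (r - 1) → ℕ) {n : ℕ} (lam : Fin n → ℕ) :
    (((List.ofFn fun p : Fin n => LtilOp t r 1 (lam p) (lam p - 1)).prod * sOp q (r - 1))
        (Finsupp.single m 1)) m =
      ∏ i : Fin (r - 1), (q ^ (i.val + 1) * t ^ #{j | lam j ∈ Icc 1 (i.val + 1)}) ^ m i := by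
  have hL : (List.ofFn fun p : Fin n => LtilOp t r 1 (lam p) (lam p - 1)).prod
      (Finsupp.single m 1) =
        (∏ j, ∏ i : Fin (r - 1) with lam j ∈ Icc 1 (i.val + 1), t ^ m i) •
          Finsupp.single m 1 := by
    rw [List.ofFn_eq_map, Module.End.list_prod_map_apply_eq_smul
      fun j _ => LtilOp_one_diag_single t r m (lam j), ← List.ofFn_eq_map, List.prod_ofFn]
  have hcount : ∏ j, ∏ i : Fin (r - 1) with lam j ∈ Icc 1 (i.val + 1), t ^ m i =
      ∏ i : Fin (r - 1), (t ^ m i) ^ #{j | lam j ∈ Icc 1 (i.val + 1)} := by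
    simp only [prod_filter]
    rw [prod_comm]
    simp only [← prod_filter, prod_const]
  rw [Module.End.mul_apply, sOp_single, map_smul, hL, hcount, smul_smul, Finsupp.smul_apply,
    Finsupp.single_eq_same, smul_eq_mul, mul_one, ← prod_mul_distrib]
  refine prod_congr rfl fun i _ => ?_
  ring

end FockSpace

theorem diagonal_transition_matrix_element_general
    (t q : ℝ) (ht0 : 0 < t) (ht1 : t < 1) (hq0 : 0 < q) (hq1 : q < 1)
    (r n : ℕ)
    (lam : Fin n → Fin (r + 1)) :
    HasSum
      (fun m : Fin (r - 1) → ℕ =>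
        (((List.ofFn fun p : Fin n =>
              LtilOp t r 1 (lam p).val ((lam p).val - 1)).prod
            * sOp q (r - 1)) (Finsupp.single m 1)) m)
      (∏ i ∈ Finset.Icc 1 (r - 1),
        (1 - q ^ i * t ^ (∑ kk ∈ Finset.Icc 1 i,
            (Finset.univ.filter fun j : Fin n => (lam j).val = kk).card))⁻¹) := by
  simp only [sum_card_fiberwise_eq_card_filter, prod_Icc_one_eq_prod_fin]
  refine (hasSum_pi_prod_pow (fun i => by positivity) fun i => ?_).congr_fun
    (diagonal_transfer_single_apply t q r · fun j => (lam j).val)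
  exact mul_lt_one_of_nonneg_of_lt_one_left (by positivity)
    (pow_lt_one₀ hq0.le hq1 i.val.succ_ne_zero) (pow_le_one₀ ht0.le ht1.le)

theorem diagonal_transition_matrix_element
    (t q : ℝ) (ht0 : 0 < t) (ht1 : t < 1) (hq0 : 0 < q) (hq1 : q < 1)
    (r n : ℕ) (hr : 2 ≤ r) (hn : 1 ≤ n)
    (lam : Fin n → Fin (r + 1)) :
    HasSum
      (fun m : Fin (r - 1) → ℕ =>
        (((List.ofFn fun p : Fin n =>
              LtilOp t r 1 (lam p).val ((lam p).val - 1)).prod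
            * sOp q (r - 1)) (Finsupp.single m 1)) m)
      (∏ i ∈ Finset.Icc 1 (r - 1),
        (1 - q ^ i * t ^ (∑ kk ∈ Finset.Icc 1 i,
            (Finset.univ.filter fun j : Fin n => (lam j).val = kk).card))⁻¹) :=
  diagonal_transition_matrix_element_general t q ht0 ht1 hq0 hq1 r n lam

end
end
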